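/- arXiv:0902.3143 — 7 statements merged into one kernel-verified Lean document; each statement's English description precedes it below -/
import Mathlib

section
/- A metric space carrying the Hilbert distance of a properly convex open subset Ω of ℙⁿ(ℝ) is a complete metric space, and the topology induced by the Hilbert distance coincides with the topology induced from ℙⁿ(ℝ). -/
open Classical

/-- The Hilbert distance of `x, y` in a convex set `Ω`: writing the chord through `x, y`
as `t ↦ x + t • (y - x)`, the boundary points are `p = x + s • (y-x)` and
`q = x + e • (y-x)` with `s = inf`, `e = sup` of the parameter set, and
`d_Ω(x,y) = ln ((‖p-y‖·‖q-x‖)/(‖p-x‖·‖q-y‖)) = ln (((1-s)·e)/((-s)·(e-1)))`,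
with `d_Ω(x,x) = 0`. -/
noncomputable def hilbertDist {n : ℕ} (Ω : Set (EuclideanSpace ℝ (Fin n)))
    (x y : EuclideanSpace ℝ (Fin n)) : ℝ :=
  if x = y then 0 else
    Real.log (((1 - sInf {t : ℝ | x + t • (y - x) ∈ Ω}) * sSup {t : ℝ | x + t • (y - x) ∈ Ω}) /
      ((0 - sInf {t : ℝ | x + t • (y - x) ∈ Ω}) * (sSup {t : ℝ | x + t • (y - x) ∈ Ω} - 1)))

namespace HilbertAux

variable {n : ℕ} {Ω : Set (EuclideanSpace ℝ (Fin n))} {x y : EuclideanSpace ℝ (Fin n)} {C : ℝ}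

lemma dist_param₂ (x y : EuclideanSpace ℝ (Fin n)) (a b : ℝ) :
    dist (x + a • (y - x)) (x + b • (y - x)) = |a - b| * ‖y - x‖ := by
  rw [dist_eq_norm]
  have h : x + a • (y - x) - (x + b • (y - x)) = (a - b) • (y - x) := by
    rw [sub_smul]; abel
  rw [h, norm_smul, Real.norm_eq_abs]

lemma dist_param₀ (x y : EuclideanSpace ℝ (Fin n)) (a : ℝ) :
    dist (x + a • (y - x)) x = |a| * ‖y - x‖ := by
  have h := dist_param₂ x y a 0
  simpa using h

lemma dist_param₁ (x y : EuclideanSpace ℝ (Fin n)) (a : ℝ) :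
    dist (x + a • (y - x)) y = |a - 1| * ‖y - x‖ := by
  have h := dist_param₂ x y a 1
  simpa using h

lemma zero_mem (hx : x ∈ Ω) : (0 : ℝ) ∈ {t : ℝ | x + t • (y - x) ∈ Ω} := by
  simpa using hx

lemma abs_le_of_mem (hC : ∀ a ∈ Ω, ∀ b ∈ Ω, dist a b ≤ C) (hx : x ∈ Ω)
    {t : ℝ} (ht : x + t • (y - x) ∈ Ω) : |t| * ‖y - x‖ ≤ C := by
  have h := hC _ ht _ hx
  rwa [dist_param₀] at h

lemma bddBelow_T (hC : ∀ a ∈ Ω, ∀ b ∈ Ω, dist a b ≤ C) (hx : x ∈ Ω)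
    (hm : 0 < ‖y - x‖) : BddBelow {t : ℝ | x + t • (y - x) ∈ Ω} := by
  refine ⟨-(C / ‖y - x‖), fun t ht => ?_⟩
  have h := abs_le_of_mem hC hx ht
  have h2 : |t| ≤ C / ‖y - x‖ := by rw [le_div_iff₀ hm]; exact h
  have h3 := neg_abs_le t
  linarith

lemma bddAbove_T (hC : ∀ a ∈ Ω, ∀ b ∈ Ω, dist a b ≤ C) (hx : x ∈ Ω)
    (hm : 0 < ‖y - x‖) : BddAbove {t : ℝ | x + t • (y - x) ∈ Ω} := by
  refine ⟨C / ‖y - x‖, fun t ht => ?_⟩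
  have h := abs_le_of_mem hC hx ht
  have h2 : |t| ≤ C / ‖y - x‖ := by rw [le_div_iff₀ hm]; exact h
  exact (le_abs_self t).trans h2

/-- If `ball x r ⊆ Ω` then `sInf T ≤ -(r/(2 m))`. -/
lemma sInf_le_neg {r : ℝ} (hC : ∀ a ∈ Ω, ∀ b ∈ Ω, dist a b ≤ C) (hx : x ∈ Ω)
    (hr : Metric.ball x r ⊆ Ω) (hr0 : 0 < r) (hm : 0 < ‖y - x‖) :
    sInf {t : ℝ | x + t • (y - x) ∈ Ω} ≤ -(r / (2 * ‖y - x‖)) := by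
  apply csInf_le (bddBelow_T hC hx hm)
  show x + (-(r / (2 * ‖y - x‖))) • (y - x) ∈ Ω
  apply hr
  rw [Metric.mem_ball, dist_param₀, abs_neg, abs_of_pos (by positivity)]
  have hhalf : r / (2 * ‖y - x‖) * ‖y - x‖ = r / 2 := by
    field_simp [hm.ne']
  rw [hhalf]; linarith

/-- If `ball y ρ ⊆ Ω` then `1 + ρ/(2 m) ≤ sSup T`. -/
lemma le_sSup_T {ρ : ℝ} (hC : ∀ a ∈ Ω, ∀ b ∈ Ω, dist a b ≤ C) (hx : x ∈ Ω)
    (hρ : Metric.ball y ρ ⊆ Ω) (hρ0 : 0 < ρ) (hm : 0 < ‖y - x‖) :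
    1 + ρ / (2 * ‖y - x‖) ≤ sSup {t : ℝ | x + t • (y - x) ∈ Ω} := by
  apply le_csSup (bddAbove_T hC hx hm)
  show x + (1 + ρ / (2 * ‖y - x‖)) • (y - x) ∈ Ω
  apply hρ
  rw [Metric.mem_ball, dist_param₁]
  have h1 : 1 + ρ / (2 * ‖y - x‖) - 1 = ρ / (2 * ‖y - x‖) := by ring
  rw [h1, abs_of_pos (by positivity)]
  have hhalf : ρ / (2 * ‖y - x‖) * ‖y - x‖ = ρ / 2 := by
    field_simp [hm.ne']
  rw [hhalf]; linarith

lemma sInf_ge (hC : ∀ a ∈ Ω, ∀ b ∈ Ω, dist a b ≤ C) (hx : x ∈ Ω)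
    (hm : 0 < ‖y - x‖) :
    -(C / ‖y - x‖) ≤ sInf {t : ℝ | x + t • (y - x) ∈ Ω} := by
  apply le_csInf ⟨0, zero_mem hx⟩
  intro t ht
  have h := abs_le_of_mem hC hx ht
  have h2 : |t| ≤ C / ‖y - x‖ := by rw [le_div_iff₀ hm]; exact h
  have h3 := neg_abs_le t
  linarith

lemma sSup_le' (hC : ∀ a ∈ Ω, ∀ b ∈ Ω, dist a b ≤ C) (hx : x ∈ Ω)
    (hm : 0 < ‖y - x‖) :
    sSup {t : ℝ | x + t • (y - x) ∈ Ω} ≤ C / ‖y - x‖ := by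
  apply csSup_le ⟨0, zero_mem hx⟩
  intro t ht
  have h := abs_le_of_mem hC hx ht
  have h2 : |t| ≤ C / ‖y - x‖ := by rw [le_div_iff₀ hm]; exact h
  exact (le_abs_self t).trans h2

/-- The endpoint `q = x + (sSup T) • (y - x)` lies in the closure of `Ω`. -/
lemma q_mem_closure (hC : ∀ a ∈ Ω, ∀ b ∈ Ω, dist a b ≤ C) (hx : x ∈ Ω)
    (hm : 0 < ‖y - x‖) :
    x + (sSup {t : ℝ | x + t • (y - x) ∈ Ω}) • (y - x) ∈ closure Ω := by
  set T := {t : ℝ | x + t • (y - x) ∈ Ω} with hT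
  rw [Metric.mem_closure_iff]
  intro ε hε
  have hne : T.Nonempty := ⟨0, zero_mem hx⟩
  have hlt : sSup T - ε / ‖y - x‖ < sSup T := by
    have : 0 < ε / ‖y - x‖ := by positivity
    linarith
  obtain ⟨t, ht, htlt⟩ := exists_lt_of_lt_csSup hne hlt
  refine ⟨x + t • (y - x), ht, ?_⟩
  rw [dist_param₂]
  have hts : t ≤ sSup T := le_csSup (bddAbove_T hC hx hm) ht
  have habs : |sSup T - t| = sSup T - t := abs_of_nonneg (by linarith)
  rw [habs]
  have h2 : sSup T - t < ε / ‖y - x‖ := by linarith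
  calc (sSup T - t) * ‖y - x‖ < (ε / ‖y - x‖) * ‖y - x‖ :=
        mul_lt_mul_of_pos_right h2 hm
    _ = ε := by field_simp

/-- The cone lemma: a ball around `y` of radius `(1 - 1/e) r` is inside `Ω`. -/
lemma cone_ball {r : ℝ} (hopen : IsOpen Ω) (hconv : Convex ℝ Ω)
    (hC : ∀ a ∈ Ω, ∀ b ∈ Ω, dist a b ≤ C) (hx : x ∈ Ω)
    (hr : Metric.ball x r ⊆ Ω) (hr0 : 0 < r) (hm : 0 < ‖y - x‖)
    (he : 1 < sSup {t : ℝ | x + t • (y - x) ∈ Ω}) :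
    Metric.ball y ((1 - 1 / sSup {t : ℝ | x + t • (y - x) ∈ Ω}) * r) ⊆ Ω := by
  set e := sSup {t : ℝ | x + t • (y - x) ∈ Ω} with hedef
  have he0 : (0 : ℝ) < e := by linarith
  have hq : x + e • (y - x) ∈ closure Ω := q_mem_closure hC hx hm
  set lam : ℝ := 1 / e with hlam
  have hlam0 : 0 < lam := one_div_pos.mpr he0
  have hlam1 : lam < 1 := by
    rw [hlam, div_lt_one he0]; linarith
  intro w hw
  rw [Metric.mem_ball] at hw
  set v := x + (1 / (1 - lam)) • (w - y) with hv
  have hvball : v ∈ Metric.ball x r := by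
    rw [Metric.mem_ball, hv]
    have : x + (1 / (1 - lam)) • (w - y) - x = (1 / (1 - lam)) • (w - y) := by abel
    rw [dist_eq_norm, this, norm_smul, Real.norm_eq_abs,
      abs_of_pos (one_div_pos.mpr (by linarith : (0:ℝ) < 1 - lam))]
    rw [div_mul_eq_mul_div, one_mul, div_lt_iff₀ (by linarith : (0:ℝ) < 1 - lam)]
    have hdw : ‖w - y‖ = dist w y := (dist_eq_norm w y).symm
    rw [hdw]
    calc dist w y < (1 - lam) * r := hw
      _ = r * (1 - lam) := by ring
  have hvΩ : v ∈ interior Ω := by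
    rw [hopen.interior_eq]; exact hr hvball
  have hkey : w = (1 - lam) • v + lam • (x + e • (y - x)) := by
    have e1 : (1 - lam) * (1 / (1 - lam)) = 1 := by
      rw [mul_one_div, div_self (ne_of_gt (by linarith : (0:ℝ) < 1 - lam))]
    have e2 : lam * e = 1 := by
      rw [hlam]; field_simp
    rw [hv, smul_add, smul_add, smul_smul, smul_smul, e1, e2, one_smul, one_smul]
    module
  have := hconv.combo_interior_closure_mem_interior hvΩ hq
    (by linarith : (0:ℝ) < 1 - lam) hlam0.le (by ring)
  rw [hopen.interior_eq] at this
  rwa [hkey]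

/-- Lower bound: Euclidean distance is controlled by Hilbert distance. -/
lemma norm_le_exp (hopen : IsOpen Ω)
    (hC : ∀ a ∈ Ω, ∀ b ∈ Ω, dist a b ≤ C) (hC0 : 0 < C)
    (hx : x ∈ Ω) (hy : y ∈ Ω) :
    ‖y - x‖ ≤ C * (Real.exp (hilbertDist Ω x y) - 1) := by
  by_cases h : x = y
  · subst h; simp [hilbertDist]
  unfold hilbertDist
  rw [if_neg h]
  set T := {t : ℝ | x + t • (y - x) ∈ Ω} with hT
  set s := sInf T with hs
  set e := sSup T with he
  set m := ‖y - x‖ with hmdef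
  have hm : 0 < m := by
    rw [hmdef, norm_pos_iff]
    exact sub_ne_zero.2 (fun hh => h hh.symm)
  obtain ⟨r, hr0, hr⟩ := Metric.isOpen_iff.1 hopen x hx
  obtain ⟨ρ, hρ0, hρ⟩ := Metric.isOpen_iff.1 hopen y hy
  have hs0 : s < 0 :=
    lt_of_le_of_lt (sInf_le_neg hC hx hr hr0 hm) (neg_lt_zero.mpr (by positivity))
  have he1 : 1 < e :=
    lt_of_lt_of_le (lt_add_of_pos_right 1 (by positivity)) (le_sSup_T hC hx hρ hρ0 hm)
  have hsge : -(C / m) ≤ s := sInf_ge hC hx hm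
  have hele : e ≤ C / m := sSup_le' hC hx hm
  have hden : 0 < (0 - s) * (e - 1) := by nlinarith
  set CR := ((1 - s) * e) / ((0 - s) * (e - 1)) with hCR
  have hmsC : m * (0 - s) ≤ C := by
    have : -s ≤ C / m := by linarith
    calc m * (0 - s) = (-s) * m := by ring
      _ ≤ (C / m) * m := mul_le_mul_of_nonneg_right this hm.le
      _ = C := by field_simp
  have hCRge : 1 + m / C ≤ CR := by
    rw [hCR, le_div_iff₀ hden]
    have hmc : m / C * (0 - s) ≤ 1 := by
      rw [div_mul_eq_mul_div, div_le_one hC0]; linarith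
    nlinarith [mul_le_mul_of_nonneg_right hmc (by linarith : (0:ℝ) ≤ e - 1)]
  have hCRpos : 0 < CR := lt_of_lt_of_le (by positivity) hCRge
  have hexp : Real.exp (Real.log CR) = CR := Real.exp_log hCRpos
  have : 1 + m / C ≤ Real.exp (Real.log CR) := by rw [hexp]; exact hCRge
  have h2 : m / C ≤ Real.exp (Real.log CR) - 1 := by linarith
  calc m = C * (m / C) := by field_simp
    _ ≤ C * (Real.exp (Real.log CR) - 1) := mul_le_mul_of_nonneg_left h2 hC0.le
    _ = C * (Real.exp (Real.log (((1 - s) * e) / ((0 - s) * (e - 1)))) - 1) := rfl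

/-- Upper bound: points Euclidean-close (relative to interior balls) are Hilbert-close. -/
lemma hilbert_lt_of_close {ρ ε : ℝ}
    (hC : ∀ a ∈ Ω, ∀ b ∈ Ω, dist a b ≤ C)
    (hxb : Metric.ball x ρ ⊆ Ω) (hyb : Metric.ball y (ρ / 2) ⊆ Ω)
    (hρ0 : 0 < ρ) (hε : 0 < ε)
    (hclose : ‖y - x‖ < ρ * (Real.exp (ε / 2) - 1) / 4) :
    hilbertDist Ω x y < ε := by
  by_cases h : x = y
  · subst h; simpa [hilbertDist] using hε
  have hx : x ∈ Ω := hxb (Metric.mem_ball_self hρ0)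
  unfold hilbertDist
  rw [if_neg h]
  set T := {t : ℝ | x + t • (y - x) ∈ Ω} with hT
  set s := sInf T with hs
  set e := sSup T with he
  set m := ‖y - x‖ with hmdef
  have hm : 0 < m := by
    rw [hmdef, norm_pos_iff]
    exact sub_ne_zero.2 (fun hh => h hh.symm)
  have hsle : s ≤ -(ρ / (2 * m)) := sInf_le_neg hC hx hxb hρ0 hm
  have hege : 1 + (ρ / 2) / (2 * m) ≤ e := le_sSup_T hC hx hyb (by positivity) hm
  have hs0 : s < 0 := lt_of_le_of_lt hsle (neg_lt_zero.mpr (by positivity))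
  have he1 : 1 < e := lt_of_lt_of_le (lt_add_of_pos_right 1 (by positivity)) hege
  have hnum : 0 < (0 - s) := by linarith
  have hden1 : 0 < e - 1 := by linarith
  have hA : (1 - s) / (0 - s) ≤ 1 + 2 * m / ρ := by
    rw [div_le_iff₀ hnum]
    have key : ρ / (2 * m) ≤ 0 - s := by linarith
    have h1 : (2 * m / ρ) * (ρ / (2 * m)) = 1 := by field_simp
    have h2 : (2 * m / ρ) * (ρ / (2 * m)) ≤ (2 * m / ρ) * (0 - s) :=
      mul_le_mul_of_nonneg_left key (by positivity)
    nlinarith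
  have hB : e / (e - 1) ≤ 1 + 4 * m / ρ := by
    rw [div_le_iff₀ hden1]
    have key : ρ / (4 * m) ≤ e - 1 := by
      have hq4 : (ρ / 2) / (2 * m) = ρ / (4 * m) := by ring
      rw [hq4] at hege
      linarith
    have h1 : (4 * m / ρ) * (ρ / (4 * m)) = 1 := by field_simp
    have h2 : (4 * m / ρ) * (ρ / (4 * m)) ≤ (4 * m / ρ) * (e - 1) :=
      mul_le_mul_of_nonneg_left key (by positivity)
    nlinarith
  set CR := ((1 - s) * e) / ((0 - s) * (e - 1)) with hCR
  have hCReq : CR = ((1 - s) / (0 - s)) * (e / (e - 1)) := by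
    rw [hCR, div_mul_div_comm]
  have hApos : 0 < (1 - s) / (0 - s) := div_pos (by linarith) (by linarith)
  have hBpos : 0 < e / (e - 1) := div_pos (by linarith) (by linarith)
  have hCRpos : 0 < CR := by
    rw [hCReq]; exact mul_pos hApos hBpos
  have hd2 : 0 ≤ 2 * m / ρ := div_nonneg (by linarith) hρ0.le
  have hCRle : CR ≤ (1 + 2 * m / ρ) * (1 + 4 * m / ρ) := by
    rw [hCReq]
    exact mul_le_mul hA hB hBpos.le (by linarith)
  have h4 : 4 * m / ρ < Real.exp (ε / 2) - 1 := by
    rw [div_lt_iff₀ hρ0]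
    calc 4 * m < 4 * (ρ * (Real.exp (ε / 2) - 1) / 4) := by linarith
      _ = (Real.exp (ε / 2) - 1) * ρ := by ring
  have h2' : 2 * m / ρ < Real.exp (ε / 2) - 1 := by
    have hle : 2 * m / ρ ≤ 4 * m / ρ := by
      gcongr
      linarith
    linarith
  have hfa : 1 + 2 * m / ρ < Real.exp (ε / 2) := by linarith
  have hfb : 1 + 4 * m / ρ < Real.exp (ε / 2) := by linarith
  have hCRlt : CR < Real.exp (ε / 2) * Real.exp (ε / 2) :=
    lt_of_le_of_lt hCRle (mul_lt_mul'' hfa hfb (by positivity) (by positivity))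
  rw [Real.log_lt_iff_lt_exp hCRpos]
  calc CR < Real.exp (ε / 2) * Real.exp (ε / 2) := hCRlt
    _ = Real.exp ε := by rw [← Real.exp_add]; norm_num

/-- Escape lemma: a Hilbert ball around a point far inside carries a definite
Euclidean ball inside `Ω`. -/
lemma ball_escape {r : ℝ} (hopen : IsOpen Ω) (hconv : Convex ℝ Ω)
    (hC : ∀ a ∈ Ω, ∀ b ∈ Ω, dist a b ≤ C)
    (hr : Metric.ball x r ⊆ Ω) (hr0 : 0 < r) (hy : y ∈ Ω) :
    Metric.ball y (r * Real.exp (-(hilbertDist Ω x y))) ⊆ Ω := by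
  have hx : x ∈ Ω := hr (Metric.mem_ball_self hr0)
  by_cases h : x = y
  · subst h
    simpa [hilbertDist] using hr
  unfold hilbertDist
  rw [if_neg h]
  set T := {t : ℝ | x + t • (y - x) ∈ Ω} with hT
  set s := sInf T with hs
  set e := sSup T with he
  set m := ‖y - x‖ with hmdef
  have hm : 0 < m := by
    rw [hmdef, norm_pos_iff]
    exact sub_ne_zero.2 (fun hh => h hh.symm)
  obtain ⟨ρ, hρ0, hρ⟩ := Metric.isOpen_iff.1 hopen y hy
  have hsle : s ≤ -(r / (2 * m)) := sInf_le_neg hC hx hr hr0 hm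
  have hege : 1 + ρ / (2 * m) ≤ e := le_sSup_T hC hx hρ hρ0 hm
  have hs0 : s < 0 := lt_of_le_of_lt hsle (neg_lt_zero.mpr (by positivity))
  have he1 : 1 < e := lt_of_lt_of_le (lt_add_of_pos_right 1 (by positivity)) hege
  have he0 : (0:ℝ) < e := by linarith
  set CR := ((1 - s) * e) / ((0 - s) * (e - 1)) with hCR
  have hCReq : CR = ((1 - s) / (0 - s)) * (e / (e - 1)) := by
    rw [hCR, div_mul_div_comm]
  have hBpos : 0 < e / (e - 1) := div_pos (by linarith) (by linarith)
  have hApos : 0 < (1 - s) / (0 - s) := div_pos (by linarith) (by linarith)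
  have hCRpos : 0 < CR := by rw [hCReq]; exact mul_pos hApos hBpos
  have hAge1 : 1 ≤ (1 - s) / (0 - s) := by
    rw [le_div_iff₀ (by linarith : (0:ℝ) < 0 - s)]
    linarith
  have hCRge : e / (e - 1) ≤ CR := by
    rw [hCReq]
    exact le_mul_of_one_le_left hBpos.le hAge1
  -- exp(-log CR) = 1/CR ≤ (e-1)/e = 1 - 1/e
  have hexp : Real.exp (-(Real.log CR)) = CR⁻¹ := by
    rw [Real.exp_neg, Real.exp_log hCRpos]
  have hinv : CR⁻¹ ≤ (e / (e - 1))⁻¹ :=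
    inv_anti₀ hBpos hCRge
  have hinv2 : (e / (e - 1))⁻¹ = 1 - 1 / e := by
    rw [inv_div]
    rw [sub_div, div_self (ne_of_gt he0)]
  have hsub : Metric.ball y (r * Real.exp (-(Real.log CR))) ⊆
      Metric.ball y ((1 - 1 / e) * r) := by
    apply Metric.ball_subset_ball
    rw [hexp]
    calc r * CR⁻¹ ≤ r * (1 - 1 / e) := by
          apply mul_le_mul_of_nonneg_left _ hr0.le
          rw [← hinv2]; exact hinv
      _ = (1 - 1 / e) * r := by ring
  exact hsub.trans (cone_ball hopen hconv hC hx hr hr0 hm he1)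


end HilbertAux

/-- For a properly convex open `Ω` (a nonempty bounded convex open set in an affine chart),
`(Ω, d_Ω)` is a complete metric space, and the topology induced by the Hilbert distance
`d_Ω` coincides with the topology induced from the ambient (projective) space. -/
theorem hilbertDist_complete_and_topology {n : ℕ} (Ω : Set (EuclideanSpace ℝ (Fin n)))
    (hopen : IsOpen Ω) (hconv : Convex ℝ Ω) (hbdd : Bornology.IsBounded Ω)
    (hne : Ω.Nonempty) :
    -- completeness: every Cauchy sequence for `d_Ω` converges in `Ω` for `d_Ω`
    (∀ u : ℕ → EuclideanSpace ℝ (Fin n), (∀ k, u k ∈ Ω) →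
      (∀ ε : ℝ, 0 < ε → ∃ N, ∀ k ≥ N, ∀ l ≥ N, hilbertDist Ω (u k) (u l) < ε) →
      ∃ z ∈ Ω, ∀ ε : ℝ, 0 < ε → ∃ N, ∀ k ≥ N, hilbertDist Ω (u k) z < ε) ∧
    -- the topology induced by `d_Ω` coincides with the ambient topology
    (∀ x ∈ Ω, ∀ ε : ℝ, 0 < ε →
      (∃ δ : ℝ, 0 < δ ∧ ∀ y ∈ Ω, hilbertDist Ω x y < δ → ‖y - x‖ < ε) ∧
      (∃ δ : ℝ, 0 < δ ∧ ∀ y ∈ Ω, ‖y - x‖ < δ → hilbertDist Ω x y < ε)) := by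
  obtain ⟨C₀, hC₀⟩ := Metric.isBounded_iff.1 hbdd
  set C : ℝ := max C₀ 1 with hCdef
  have hC0 : (0:ℝ) < C := lt_of_lt_of_le one_pos (le_max_right _ _)
  have hC : ∀ a ∈ Ω, ∀ b ∈ Ω, dist a b ≤ C := fun a ha b hb =>
    (hC₀ ha hb).trans (le_max_left _ _)
  constructor
  · -- completeness
    intro u hu hcauchy
    obtain ⟨N₀, hN₀⟩ := hcauchy 1 one_pos
    obtain ⟨r₀, hr₀0, hball⟩ := Metric.isOpen_iff.1 hopen (u N₀) (hu N₀)
    set ρ : ℝ := r₀ * Real.exp (-1) with hρdef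
    have hρ0 : 0 < ρ := mul_pos hr₀0 (Real.exp_pos _)
    have hballs : ∀ k ≥ N₀, Metric.ball (u k) ρ ⊆ Ω := by
      intro k hk
      have hd : hilbertDist Ω (u N₀) (u k) < 1 := hN₀ N₀ le_rfl k hk
      have hesc := HilbertAux.ball_escape hopen hconv hC hball hr₀0 (hu k)
      refine (Metric.ball_subset_ball ?_).trans hesc
      exact mul_le_mul_of_nonneg_left (Real.exp_le_exp.2 (by linarith)) hr₀0.le
    have hcs : CauchySeq u := by
      rw [Metric.cauchySeq_iff]
      intro ε hε
      have hlog : 0 < Real.log (1 + ε / C) :=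
        Real.log_pos (by nlinarith [div_pos hε hC0])
      obtain ⟨N, hN⟩ := hcauchy _ hlog
      refine ⟨N, fun k hk l hl => ?_⟩
      have h1 := HilbertAux.norm_le_exp hopen hC hC0 (hu l) (hu k)
      have hd := hN l hl k hk
      have hepos : 0 < (1:ℝ) + ε / C := by positivity
      have h2 : Real.exp (hilbertDist Ω (u l) (u k)) < 1 + ε / C := by
        calc Real.exp (hilbertDist Ω (u l) (u k))
            < Real.exp (Real.log (1 + ε / C)) := Real.exp_lt_exp.2 hd
          _ = 1 + ε / C := Real.exp_log hepos
      have h3 : ‖u k - u l‖ < C * (ε / C) := by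
        calc ‖u k - u l‖ ≤ C * (Real.exp (hilbertDist Ω (u l) (u k)) - 1) := h1
          _ < C * (ε / C) := by nlinarith
      rw [dist_eq_norm]
      calc ‖u k - u l‖ < C * (ε / C) := h3
        _ = ε := by field_simp
    obtain ⟨z, hz⟩ := cauchySeq_tendsto_of_complete hcs
    rw [Metric.tendsto_atTop] at hz
    obtain ⟨N₁, hN₁⟩ := hz (ρ / 2) (by linarith)
    set K := max N₀ N₁ with hK
    have hKz : dist (u K) z < ρ / 2 := hN₁ K (le_max_right _ _)
    have hzΩ : z ∈ Ω := by
      apply hballs K (le_max_left _ _)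
      rw [Metric.mem_ball, dist_comm]
      linarith
    have hzball : Metric.ball z (ρ / 2) ⊆ Ω := by
      refine (Metric.ball_subset_ball' ?_).trans (hballs K (le_max_left _ _))
      rw [dist_comm]
      linarith
    refine ⟨z, hzΩ, ?_⟩
    intro ε hε
    have hδ0 : 0 < ρ * (Real.exp (ε / 2) - 1) / 4 := by
      have := Real.one_lt_exp_iff.2 (by linarith : 0 < ε / 2)
      have h1 : 0 < Real.exp (ε / 2) - 1 := by linarith
      positivity
    obtain ⟨N₂, hN₂⟩ := hz _ hδ0
    refine ⟨max N₀ N₂, fun k hk => ?_⟩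
    apply HilbertAux.hilbert_lt_of_close hC
      (hballs k ((le_max_left _ _).trans hk)) hzball hρ0 hε
    have hdk : dist (u k) z < ρ * (Real.exp (ε / 2) - 1) / 4 :=
      hN₂ k ((le_max_right _ _).trans hk)
    rw [← dist_eq_norm, dist_comm]
    exact hdk
  · -- topology
    intro x hx ε hε
    constructor
    · refine ⟨Real.log (1 + ε / C), Real.log_pos (by nlinarith [div_pos hε hC0]), ?_⟩
      intro y hy hd
      have h1 := HilbertAux.norm_le_exp hopen hC hC0 hx hy
      have hepos : 0 < (1:ℝ) + ε / C := by positivity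
      have h2 : Real.exp (hilbertDist Ω x y) < 1 + ε / C := by
        calc Real.exp (hilbertDist Ω x y)
            < Real.exp (Real.log (1 + ε / C)) := Real.exp_lt_exp.2 hd
          _ = 1 + ε / C := Real.exp_log hepos
      have h3 : C * (ε / C) = ε := by field_simp
      nlinarith
    · obtain ⟨r, hr0, hr⟩ := Metric.isOpen_iff.1 hopen x hx
      have hexp1 : 0 < Real.exp (ε / 2) - 1 := by
        have := Real.one_lt_exp_iff.2 (by linarith : 0 < ε / 2)
        linarith
      refine ⟨min (r / 2) (r * (Real.exp (ε / 2) - 1) / 4), by positivity, ?_⟩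
      intro y hy hm
      have h1 : ‖y - x‖ < r / 2 := lt_of_lt_of_le hm (min_le_left _ _)
      have hyball : Metric.ball y (r / 2) ⊆ Ω := by
        refine (Metric.ball_subset_ball' ?_).trans hr
        rw [dist_eq_norm]
        linarith
      exact HilbertAux.hilbert_lt_of_close hC hr hyball hr0 hε
        (lt_of_lt_of_le hm (min_le_right _ _))
end

section
/- Let C be a proper open convex cone in ℝ^{n+1} (containing no affine line) with dual cone C* = {f : ∀ v ∈ closure(C)∖{0}, f(v) > 0}. Then the characteristic function φ_C(M) = ∫_{C*} e^{−f(M)} df is well-defined (finite) for every M ∈ C. -/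
open MeasureTheory
open scoped RealInnerProductSpace

lemma integrable_exp_neg_mul_abs {c : ℝ} (hc : 0 < c) :
    Integrable (fun t : ℝ => Real.exp (-(c * |t|))) := by
  have h1 : IntegrableOn (fun t : ℝ => Real.exp (-(c * |t|))) (Set.Ici 0) := by
    refine ((integrableOn_Ici_iff_integrableOn_Ioi (by simp)).2 (exp_neg_integrableOn_Ioi 0 hc)).congr_fun
      (fun t ht => ?_) measurableSet_Ici
    rw [abs_of_nonneg ht]; simp [neg_mul]
  have h2 : IntegrableOn (fun t : ℝ => Real.exp (-(c * |t|))) (Set.Iic 0) := by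
    have hmp : MeasurePreserving (fun t : ℝ => -t)
        (volume.restrict (Set.Iic (0:ℝ))) (volume.restrict (Set.Ici (0:ℝ))) := by
      have := (Measure.measurePreserving_neg (volume : Measure ℝ)).restrict_preimage
        (s := Set.Ici (0:ℝ)) measurableSet_Ici
      simpa using this
    have := (hmp.integrable_comp_emb (Homeomorph.neg ℝ).measurableEmbedding).2 h1
    exact (by simpa [Function.comp_def, abs_neg] using this : Integrable (fun t : ℝ => Real.exp (-(c * |t|))) (volume.restrict (Set.Iic (0:ℝ))))
  have : IntegrableOn (fun t : ℝ => Real.exp (-(c * |t|))) (Set.Iic 0 ∪ Set.Ici 0) := h2.union h1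
  rwa [Set.Iic_union_Ici, integrableOn_univ] at this

lemma integrable_prod_exp {m : ℕ} {c : ℝ} (hc : 0 < c) :
    Integrable (fun x : EuclideanSpace ℝ (Fin m) => ∏ i, Real.exp (-(c * |x i|))) := by
  have hmp : MeasurePreserving (MeasurableEquiv.toLp 2 (Fin m → ℝ)).symm volume volume :=
    EuclideanSpace.volume_preserving_symm_measurableEquiv_toLp (Fin m)
  have hpi : Integrable (fun x : Fin m → ℝ => ∏ i, Real.exp (-(c * |x i|))) :=
    Integrable.fintype_prod (f := fun (_ : Fin m) (t : ℝ) => Real.exp (-(c * |t|)))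
      (fun _ => integrable_exp_neg_mul_abs hc)
  exact (hmp.integrable_comp_emb
    (MeasurableEquiv.toLp 2 (Fin m → ℝ)).symm.measurableEmbedding).2 hpi


/-- Let `C` be a proper open convex cone in `ℝ^{n+1}` (open, convex, invariant under
positive scalar multiplication, containing no affine line), with dual cone
`C* = {f | ∀ v ∈ closure C ∖ {0}, f(v) > 0}` (linear functionals being identified with
vectors via the inner product).  Then the characteristic function
`φ_C(M) = ∫_{C*} e^{-f(M)} df` is well-defined (finite) for every `M ∈ C`, i.e. the
integrand is integrable on `C*`. -/
theorem characteristic_function_integrable {n : ℕ}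
    (C : Set (EuclideanSpace ℝ (Fin (n + 1))))
    (hopen : IsOpen C) (hconv : Convex ℝ C)
    (hcone : ∀ v ∈ C, ∀ r : ℝ, 0 < r → r • v ∈ C)
    (hline : ¬ ∃ a b : EuclideanSpace ℝ (Fin (n + 1)), b ≠ 0 ∧ ∀ t : ℝ, a + t • b ∈ C) :
    ∀ M ∈ C,
      IntegrableOn (fun f => Real.exp (-⟪f, M⟫))
        {f : EuclideanSpace ℝ (Fin (n + 1)) | ∀ v ∈ closure C, v ≠ 0 → 0 < ⟪f, v⟫}
        volume := by
  intro M hM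
  set S := {f : EuclideanSpace ℝ (Fin (n + 1)) | ∀ v ∈ closure C, v ≠ 0 → 0 < ⟪f, v⟫} with hS
  -- 0 is not in C
  have h0C : (0 : EuclideanSpace ℝ (Fin (n + 1))) ∉ C := by
    intro h0
    obtain ⟨δ, hδ, hball⟩ := Metric.isOpen_iff.1 hopen 0 h0
    have hall : ∀ v : EuclideanSpace ℝ (Fin (n + 1)), v ∈ C := by
      intro v
      rcases eq_or_ne v 0 with rfl | hv
      · exact h0
      · have hnv : 0 < ‖v‖ := norm_pos_iff.2 hv
        have hr : (0:ℝ) < δ / (2 * ‖v‖) := by positivity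
        have hmem : (δ / (2 * ‖v‖)) • v ∈ C := by
          apply hball
          rw [Metric.mem_ball, dist_zero_right, norm_smul, Real.norm_eq_abs, abs_of_pos hr]
          have heq : δ / (2 * ‖v‖) * ‖v‖ = δ / 2 := by field_simp
          rw [heq]; linarith
        have := hcone _ hmem ((δ / (2 * ‖v‖))⁻¹) (by positivity)
        rwa [smul_smul, inv_mul_cancel₀ (ne_of_gt hr), one_smul] at this
    refine hline ⟨0, EuclideanSpace.single 0 1, ?_, fun t => hall _⟩
    intro h
    have := congrArg (fun x => x 0) h
    simp [EuclideanSpace.single_apply] at this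
  have hM0 : M ≠ 0 := fun h => h0C (h ▸ hM)
  obtain ⟨ε, hε, hball⟩ := Metric.isOpen_iff.1 hopen M hM
  -- key lower bound on S
  have key : ∀ f ∈ S, ε / 2 * ‖f‖ ≤ ⟪f, M⟫ := by
    intro f hf
    rcases eq_or_ne f 0 with rfl | hfne
    · simp
    have hnf : 0 < ‖f‖ := norm_pos_iff.2 hfne
    set v : EuclideanSpace ℝ (Fin (n + 1)) := M - (ε / 2 * ‖f‖⁻¹) • f with hv
    have hvC : v ∈ C := by
      apply hball
      rw [Metric.mem_ball, dist_eq_norm, hv, sub_sub_cancel_left, norm_neg, norm_smul,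
        Real.norm_eq_abs, abs_of_pos (by positivity)]
      rw [mul_assoc, inv_mul_cancel₀ (ne_of_gt hnf), mul_one]
      linarith
    have hvne : v ≠ 0 := fun h => h0C (h ▸ hvC)
    have hpos := hf v (subset_closure hvC) hvne
    rw [hv, inner_sub_right, real_inner_smul_right, real_inner_self_eq_norm_sq] at hpos
    have : ε / 2 * ‖f‖⁻¹ * ‖f‖ ^ 2 = ε / 2 * ‖f‖ := by
      field_simp
    nlinarith
  -- S is convex, hence null-measurable
  have hSconv : Convex ℝ S := by
    intro f hf g hg a b ha hb hab
    intro v hv hvne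
    rw [inner_add_left, real_inner_smul_left, real_inner_smul_left]
    rcases eq_or_lt_of_le ha with h | h
    · have hb1 : b = 1 := by linarith
      simp only [← h, hb1, zero_mul, one_mul, zero_add]
      exact hg v hv hvne
    · have h1 : 0 < a * ⟪f, v⟫ := mul_pos h (hf v hv hvne)
      have h2 : 0 ≤ b * ⟪g, v⟫ := mul_nonneg hb (le_of_lt (hg v hv hvne))
      linarith
  haveI : (volume : Measure (EuclideanSpace ℝ (Fin (n+1)))).IsAddHaarMeasure := by
    rw [← (EuclideanSpace.basisFun (Fin (n+1)) ℝ).addHaar_eq_volume]; infer_instance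
  have hSnm : NullMeasurableSet S volume := hSconv.nullMeasurableSet (μ := volume)
  -- dominating function
  set c : ℝ := ε / (2 * (n + 1)) with hc
  have hcpos : 0 < c := by positivity
  refine Integrable.mono' ((integrable_prod_exp hcpos).integrableOn)
    ((Real.continuous_exp.comp ((continuous_id.inner continuous_const).neg)).aestronglyMeasurable)
    ?_
  filter_upwards [ae_restrict_mem₀ hSnm] with f hf
  rw [Real.norm_eq_abs, abs_of_pos (Real.exp_pos _)]
  have hsum : ∏ i, Real.exp (-(c * |f i|)) = Real.exp (-(c * ∑ i, |f i|)) := by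
    rw [← Real.exp_sum]
    congr 1
    rw [Finset.mul_sum, ← Finset.sum_neg_distrib]
  rw [hsum]
  apply Real.exp_le_exp.2
  rw [neg_le_neg_iff]
  have hcoord : ∀ i, |f i| ≤ ‖f‖ := by
    intro i
    have := abs_real_inner_le_norm (EuclideanSpace.single i (1:ℝ)) f
    simpa [EuclideanSpace.inner_single_left] using this
  have hsum2 : ∑ i, |f i| ≤ (n + 1) * ‖f‖ := by
    calc ∑ i, |f i| ≤ ∑ _i : Fin (n+1), ‖f‖ := Finset.sum_le_sum fun i _ => hcoord i
    _ = (n + 1) * ‖f‖ := by simp [Finset.sum_const]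
  have : c * ∑ i, |f i| ≤ c * ((n + 1) * ‖f‖) := by
    exact mul_le_mul_of_nonneg_left hsum2 (le_of_lt hcpos)
  have hc2 : c * ((n + 1) * ‖f‖) = ε / 2 * ‖f‖ := by
    rw [hc]; field_simp
  calc c * ∑ i, |f i| ≤ ε / 2 * ‖f‖ := by rw [← hc2]; exact this
  _ ≤ ⟪f, M⟫ := key f hf
end

section
/- For a proper open convex cone C in ℝ^{n+1}, the characteristic function φ_C(M) = ∫_{C*} e^{−f(M)} df tends to +∞ as M tends to a boundary point M_∞ of C: liminf_{M → M_∞} φ_C(M) = +∞. -/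
set_option maxHeartbeats 2000000

open MeasureTheory Metric
open scoped RealInnerProductSpace


section Aux2

variable {n : ℕ} {C : Set (EuclideanSpace ℝ (Fin (n + 1)))}

local notation "E" => EuclideanSpace ℝ (Fin (n + 1))

lemma aux_closure_cone' (hcone : ∀ v ∈ C, ∀ r : ℝ, 0 < r → r • v ∈ C) :
    ∀ v ∈ closure C, ∀ r : ℝ, 0 < r → r • v ∈ closure C := by
  intro v hv r hr
  exact map_mem_closure (continuous_const_smul r) hv fun x hx => hcone x hx r hr

lemma aux_zero_mem_closure' (hC : C.Nonempty) (hcone : ∀ v ∈ C, ∀ r : ℝ, 0 < r → r • v ∈ C) :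
    (0 : E) ∈ closure C := by
  obtain ⟨a, ha⟩ := hC
  have ht : Filter.Tendsto (fun k : ℕ => (1 / ((k : ℝ) + 1)) • a) Filter.atTop (nhds 0) := by
    have := (tendsto_one_div_add_atTop_nhds_zero_nat (𝕜 := ℝ)).smul_const a
    simpa using this
  exact mem_closure_of_tendsto ht (Filter.Eventually.of_forall fun k =>
    hcone a ha _ (by positivity))

lemma aux_bipolar (hconv : Convex ℝ C)
    (hcone : ∀ v ∈ C, ∀ r : ℝ, 0 < r → r • v ∈ C) (hC : C.Nonempty) :
    ∀ x : E, (∀ g : E, (∀ v ∈ closure C, 0 ≤ ⟪g, v⟫) → ⟪g, x⟫ = 0) → x ∈ closure C := by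
  intro x hx
  by_contra hxC
  obtain ⟨f, c, hfc, hcx⟩ :=
    geometric_hahn_banach_closed_point hconv.closure isClosed_closure hxC
  have hc0 : 0 < c := by simpa using hfc 0 (aux_zero_mem_closure' hC hcone)
  have hfneg : ∀ v ∈ closure C, f v ≤ 0 := by
    intro v hv
    by_contra hpos
    push_neg at hpos
    have ht : ((c + 1) / f v) • v ∈ closure C :=
      aux_closure_cone' hcone v hv _ (div_pos (by linarith) hpos)
    have h2 := hfc _ ht
    rw [_root_.map_smul, smul_eq_mul, div_mul_cancel₀ _ (ne_of_gt hpos)] at h2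
    linarith
  set g : E := -(InnerProductSpace.toDual ℝ (EuclideanSpace ℝ (Fin (n+1)))).symm f with hg
  have hgv : ∀ y : E, ⟪g, y⟫ = -f y := by
    intro y
    rw [hg, inner_neg_left, InnerProductSpace.toDual_symm_apply]
  have hgD : ∀ v ∈ closure C, 0 ≤ ⟪g, v⟫ := fun v hv => by
    rw [hgv]; linarith [hfneg v hv]
  have h3 := hx g hgD
  rw [hgv] at h3
  linarith

lemma aux_dual_convex : Convex ℝ {g : E | ∀ v ∈ closure C, 0 ≤ ⟪g, v⟫} := by
  intro g₁ h₁ g₂ h₂ a b ha hb _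
  intro v hv
  have e : ⟪a • g₁ + b • g₂, v⟫ = a * ⟪g₁, v⟫ + b * ⟪g₂, v⟫ := by
    rw [inner_add_left, real_inner_smul_left, real_inner_smul_left]
  rw [Set.mem_setOf_eq] at h₁ h₂
  calc (0:ℝ) ≤ a * ⟪g₁, v⟫ + b * ⟪g₂, v⟫ :=
        add_nonneg (mul_nonneg ha (h₁ v hv)) (mul_nonneg hb (h₂ v hv))
    _ = ⟪a • g₁ + b • g₂, v⟫ := e.symm

lemma aux_dual_closed : IsClosed {g : E | ∀ v ∈ closure C, 0 ≤ ⟪g, v⟫} := by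
  have : {g : E | ∀ v ∈ closure C, 0 ≤ ⟪g, v⟫} =
      ⋂ v ∈ closure C, {g : E | 0 ≤ ⟪g, v⟫} := by
    ext g; simp
  rw [this]
  exact isClosed_biInter fun v _ =>
    isClosed_le continuous_const ((continuous_id.inner continuous_const))

lemma aux_interior_dual_subset :
    interior {g : E | ∀ v ∈ closure C, 0 ≤ ⟪g, v⟫} ⊆
      {f : E | ∀ v ∈ closure C, v ≠ 0 → 0 < ⟪f, v⟫} := by
  intro f hf v hv hv0
  rw [mem_interior_iff_mem_nhds, Metric.mem_nhds_iff] at hf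
  obtain ⟨r, hr, hball⟩ := hf
  have hv' : (0:ℝ) < ‖v‖ := norm_pos_iff.mpr hv0
  have hmem : f - (r/2) • (‖v‖⁻¹ • v) ∈ ball f r := by
    rw [mem_ball, dist_eq_norm]
    have he : f - (r/2) • (‖v‖⁻¹ • v) - f = -((r/2) • (‖v‖⁻¹ • v)) := by abel
    have hnorm : ‖‖v‖⁻¹ • v‖ = 1 := by
      rw [norm_smul, norm_inv, norm_norm]
      field_simp
    rw [he, norm_neg, norm_smul, hnorm, Real.norm_eq_abs,
      abs_of_pos (half_pos hr), mul_one]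
    linarith
  have h0 := hball hmem v hv
  rw [inner_sub_left, real_inner_smul_left, real_inner_smul_left,
    real_inner_self_eq_norm_sq] at h0
  have he2 : ‖v‖⁻¹ * ‖v‖ ^ 2 = ‖v‖ := by
    rw [sq]; field_simp
  rw [he2] at h0
  nlinarith [mul_pos (half_pos hr) hv']

lemma aux_pointed (hopen : IsOpen C) (hconv : Convex ℝ C)
    (hcone : ∀ v ∈ C, ∀ r : ℝ, 0 < r → r • v ∈ C)
    (hline : ¬ ∃ a b : E, b ≠ 0 ∧ ∀ t : ℝ, a + t • b ∈ C)
    (hC : C.Nonempty) :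
    ∀ x : E, x ∈ closure C → -x ∈ closure C → x = 0 := by
  intro x hx hnx
  by_contra hx0
  obtain ⟨a, ha⟩ := hC
  refine hline ⟨(1/2 : ℝ) • a, x, hx0, fun t => ?_⟩
  have hsx : (2 * t) • x ∈ closure C := by
    rcases lt_trichotomy t 0 with h | h | h
    · have he : (2 * t) • x = (-(2 * t)) • (-x) := by
        rw [neg_smul, smul_neg, neg_neg]
      rw [he]
      exact aux_closure_cone' hcone _ hnx _ (by linarith)
    · subst h
      simpa using aux_zero_mem_closure' ⟨a, ha⟩ hcone
    · exact aux_closure_cone' hcone _ hx _ (by linarith)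
  have h2 := hconv.combo_interior_closure_mem_interior
      (by rwa [hopen.interior_eq]) hsx (by norm_num : (0:ℝ) < 1/2)
      (by norm_num : (0:ℝ) ≤ 1/2) (by norm_num)
  rw [hopen.interior_eq] at h2
  have he : (1/2 : ℝ) • a + t • x = (1/2 : ℝ) • a + (1/2 : ℝ) • ((2 * t) • x) := by
    module
  rw [he]
  exact h2

lemma aux_interior_dual_nonempty (hopen : IsOpen C) (hconv : Convex ℝ C)
    (hcone : ∀ v ∈ C, ∀ r : ℝ, 0 < r → r • v ∈ C)
    (hline : ¬ ∃ a b : E, b ≠ 0 ∧ ∀ t : ℝ, a + t • b ∈ C)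
    (hC : C.Nonempty) :
    (interior {g : E | ∀ v ∈ closure C, 0 ≤ ⟪g, v⟫}).Nonempty := by
  set D := {g : E | ∀ v ∈ closure C, 0 ≤ ⟪g, v⟫} with hD
  by_contra hempty
  rw [Set.not_nonempty_iff_eq_empty] at hempty
  have h0D : (0 : E) ∈ D := fun v _ => by simp
  have hspan : affineSpan ℝ D ≠ ⊤ := by
    intro h
    rw [← (aux_dual_convex (C := C)).interior_nonempty_iff_affineSpan_eq_top] at h
    rw [hempty] at h
    exact Set.not_nonempty_empty h
  set V : Submodule ℝ (EuclideanSpace ℝ (Fin (n+1))) := (affineSpan ℝ D).direction with hV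
  have hDV : D ⊆ (V : Set (EuclideanSpace ℝ (Fin (n+1)))) := by
    intro g hg
    have h1 : g ∈ affineSpan ℝ D := subset_affineSpan ℝ D hg
    have h2 : (0 : E) ∈ affineSpan ℝ D := subset_affineSpan ℝ D h0D
    simpa using AffineSubspace.vsub_mem_direction h1 h2
  have hVne : V ≠ ⊤ := by
    intro h
    exact hspan ((AffineSubspace.direction_eq_top_iff_of_nonempty
      ⟨0, subset_affineSpan ℝ D h0D⟩).mp h)
  obtain ⟨u, huV, hu0⟩ := Submodule.exists_mem_ne_zero_of_ne_bot (p := Vᗮ)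
    (fun h => hVne (Submodule.orthogonal_eq_bot_iff.mp h))
  have hzero : ∀ g ∈ D, ⟪g, u⟫ = 0 := fun g hg =>
    (Submodule.mem_orthogonal V u).mp huV g (hDV hg)
  have hu : u ∈ closure C := aux_bipolar hconv hcone hC u (fun g hg => hzero g hg)
  have hnu : -u ∈ closure C := aux_bipolar hconv hcone hC (-u) (fun g hg => by
    rw [inner_neg_right, hzero g hg, neg_zero])
  exact hu0 (aux_pointed hopen hconv hcone hline hC u hu hnu)

lemma aux_S_null (hconv : Convex ℝ C) :
    NullMeasurableSet {f : E | ∀ v ∈ closure C, v ≠ 0 → 0 < ⟪f, v⟫} volume := by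
  set S := {f : E | ∀ v ∈ closure C, v ≠ 0 → 0 < ⟪f, v⟫} with hS
  set D := {g : E | ∀ v ∈ closure C, 0 ≤ ⟪g, v⟫} with hD
  have hIS : interior D ⊆ S := aux_interior_dual_subset
  have hSD : S ⊆ D := by
    intro f hf v hv
    rcases eq_or_ne v 0 with rfl | hv0
    · simp
    · exact (hf v hv hv0).le
  have hnull : volume (S \ interior D) = 0 := by
    refine measure_mono_null ?_ ((aux_dual_convex (C := C)).addHaar_frontier volume)
    intro x hx
    rw [(aux_dual_closed (C := C)).frontier_eq]
    exact ⟨hSD hx.1, hx.2⟩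
  have he : S = interior D ∪ (S \ interior D) := (Set.union_diff_cancel hIS).symm
  rw [he]
  exact isOpen_interior.measurableSet.nullMeasurableSet.union
    (NullMeasurableSet.of_null hnull)

end Aux2



section Aux3

variable {n : ℕ} {C : Set (EuclideanSpace ℝ (Fin (n + 1)))}

local notation "E" => EuclideanSpace ℝ (Fin (n + 1))

lemma aux_exp_bound {ρ s : ℝ} (hρ : 0 < ρ) (hs : 0 ≤ s) :
    Real.exp (-(ρ * s)) ≤
      (Real.exp ρ * ((n+2).factorial : ℝ) / ρ ^ (n+2)) * (1 + s) ^ (-(n + 2 : ℝ)) := by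
  have ht : (0:ℝ) < 1 + s := by linarith
  have hrp : (1 + s) ^ (-(n + 2 : ℝ)) = ((1 + s) ^ (n + 2 : ℕ))⁻¹ := by
    rw [← Real.rpow_natCast (1 + s) (n + 2), ← Real.rpow_neg ht.le]
    norm_num
  rw [hrp]
  have hT : (0:ℝ) < (1 + s) ^ (n + 2 : ℕ) := pow_pos ht _
  rw [← div_eq_mul_inv, le_div_iff₀ hT, le_div_iff₀ (pow_pos hρ (n+2))]
  -- goal : exp (-(ρ s)) * ρ^(n+2) * (1+s)^(n+2) ≤ exp ρ * (n+2)!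
  have key := Real.pow_div_factorial_le_exp (x := ρ * (1 + s)) (by positivity) (n + 2)
  rw [div_le_iff₀ (by positivity : (0:ℝ) < ((n+2).factorial : ℝ))] at key
  -- key : (ρ(1+s))^(n+2) ≤ exp (ρ(1+s)) * (n+2)!
  have hexp : Real.exp (ρ * (1 + s)) = Real.exp ρ * Real.exp (ρ * s) := by
    rw [← Real.exp_add]; ring_nf
  rw [mul_pow, hexp] at key
  -- key : ρ^(n+2) * (1+s)^(n+2) ≤ exp ρ * exp (ρ s) * (n+2)!
  have hepos : (0:ℝ) < Real.exp (ρ * s) := Real.exp_pos _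
  calc Real.exp (-(ρ * s)) * (1 + s) ^ (n+2) * ρ ^ (n+2)
      = Real.exp (-(ρ * s)) * (ρ ^ (n+2) * (1 + s) ^ (n+2)) := by ring
    _ ≤ Real.exp (-(ρ * s)) * (Real.exp ρ * Real.exp (ρ * s) * ((n+2).factorial : ℝ)) := by
        apply mul_le_mul_of_nonneg_left key (Real.exp_pos _).le
    _ = Real.exp ρ * ((n+2).factorial : ℝ) := by
        rw [Real.exp_neg]
        field_simp

lemma aux_integrableOn (hopen : IsOpen C) {M : EuclideanSpace ℝ (Fin (n + 1))} (hM : M ∈ C)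
    (hSnull : NullMeasurableSet {f : E | ∀ v ∈ closure C, v ≠ 0 → 0 < ⟪f, v⟫} volume) :
    IntegrableOn (fun f : E => Real.exp (-⟪f, M⟫))
      {f : E | ∀ v ∈ closure C, v ≠ 0 → 0 < ⟪f, v⟫} volume := by
  obtain ⟨ρ₀, hρ₀, hball⟩ := Metric.isOpen_iff.mp hopen M hM
  set ρ : ℝ := ρ₀ / 2 with hρdef
  have hρ : 0 < ρ := half_pos hρ₀
  have key : ∀ x ∈ {f : E | ∀ v ∈ closure C, v ≠ 0 → 0 < ⟪f, v⟫}, ρ * ‖x‖ ≤ ⟪x, M⟫ := by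
    intro x hx
    rcases eq_or_ne x 0 with rfl | hx0
    · simp
    · have hxn : (0:ℝ) < ‖x‖ := norm_pos_iff.mpr hx0
      have hnorm1 : ‖‖x‖⁻¹ • x‖ = 1 := by
        rw [norm_smul, norm_inv, norm_norm]
        field_simp
      have hv : M - ρ • (‖x‖⁻¹ • x) ∈ C := by
        apply hball
        rw [Metric.mem_ball, dist_eq_norm]
        have he : M - ρ • (‖x‖⁻¹ • x) - M = -(ρ • (‖x‖⁻¹ • x)) := by abel
        rw [he, norm_neg, norm_smul, hnorm1, mul_one, Real.norm_eq_abs, abs_of_pos hρ]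
        rw [hρdef]; linarith
      have hxx : ‖x‖⁻¹ * (ρ * ‖x‖ ^ 2) = ρ * ‖x‖ := by
        rw [sq]; field_simp
      rcases eq_or_ne (M - ρ • (‖x‖⁻¹ • x)) 0 with h0 | hne
      · have hMe : M = ρ • (‖x‖⁻¹ • x) := by rwa [sub_eq_zero] at h0
        rw [hMe, real_inner_smul_right, real_inner_smul_right,
          real_inner_self_eq_norm_sq]
        linarith [hxx]
      · have hpos := hx _ (subset_closure hv) hne
        rw [inner_sub_right, real_inner_smul_right, real_inner_smul_right,
          real_inner_self_eq_norm_sq] at hpos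
        linarith [hxx, hpos]
  have hfin : (Module.finrank ℝ (EuclideanSpace ℝ (Fin (n + 1))) : ℝ) < ((n : ℝ) + 2) := by
    rw [finrank_euclideanSpace_fin]
    push_cast
    linarith
  have hint : Integrable (fun x : E =>
      (Real.exp ρ * ((n+2).factorial : ℝ) / ρ ^ (n+2)) * (1 + ‖x‖) ^ (-(n + 2 : ℝ))) volume :=
    (integrable_one_add_norm hfin).const_mul _
  have hcont : Continuous (fun f : E => Real.exp (-⟪f, M⟫)) :=
    Real.continuous_exp.comp ((continuous_id.inner continuous_const).neg)
  refine Integrable.mono' hint.restrict hcont.aestronglyMeasurable ?_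
  filter_upwards [ae_restrict_mem₀ hSnull] with x hx
  rw [Real.norm_eq_abs, abs_of_pos (Real.exp_pos _)]
  have h1 : Real.exp (-⟪x, M⟫) ≤ Real.exp (-(ρ * ‖x‖)) :=
    Real.exp_le_exp.mpr (neg_le_neg (key x hx))
  exact h1.trans (aux_exp_bound hρ (norm_nonneg x))

end Aux3

/-- For a proper open convex cone `C ⊆ ℝ^{n+1}` with dual cone
`C* = {f | ∀ v ∈ closure C ∖ {0}, f(v) > 0}`, the characteristic function
`φ_C(M) = ∫_{C*} e^{-f(M)} df` tends to `+∞` as `M ∈ C` tends to a boundary point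
`M_∞` of `C`. -/
theorem characteristic_function_tendsto_atTop_boundary {n : ℕ}
    (C : Set (EuclideanSpace ℝ (Fin (n + 1))))
    (hopen : IsOpen C) (hconv : Convex ℝ C)
    (hcone : ∀ v ∈ C, ∀ r : ℝ, 0 < r → r • v ∈ C)
    (hline : ¬ ∃ a b : EuclideanSpace ℝ (Fin (n + 1)), b ≠ 0 ∧ ∀ t : ℝ, a + t • b ∈ C) :
    ∀ Minf ∈ frontier C,
      Filter.Tendsto
        (fun M => ∫ f in {f : EuclideanSpace ℝ (Fin (n + 1)) |
            ∀ v ∈ closure C, v ≠ 0 → 0 < ⟪f, v⟫}, Real.exp (-⟪f, M⟫) ∂volume)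
        (nhdsWithin Minf C) Filter.atTop := by
  intro Minf hMinf
  set S := {f : EuclideanSpace ℝ (Fin (n + 1)) | ∀ v ∈ closure C, v ≠ 0 → 0 < ⟪f, v⟫} with hSdef
  rw [hopen.frontier_eq] at hMinf
  have hMinfcl : Minf ∈ closure C := hMinf.1
  have hMinfC : Minf ∉ C := hMinf.2
  have hC : C.Nonempty := by
    rcases C.eq_empty_or_nonempty with h | h
    · rw [h] at hMinfcl; simp at hMinfcl
    · exact h
  obtain ⟨g₀, hg₀⟩ := aux_interior_dual_nonempty hopen hconv hcone hline hC
  obtain ⟨ε, hε, hball⟩ := Metric.isOpen_iff.mp isOpen_interior g₀ hg₀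
  -- supporting functional at Minf
  obtain ⟨f₀, hf₀⟩ := geometric_hahn_banach_open_point hconv hopen hMinfC
  have hfle : ∀ v ∈ closure C, f₀ v ≤ f₀ Minf := fun v hv =>
    closure_minimal (fun a ha => (hf₀ a ha).le)
      (isClosed_le f₀.continuous continuous_const) hv
  have hfM2 := hfle _ (aux_closure_cone' hcone Minf hMinfcl 2 (by norm_num))
  have hfMh := hfle _ (aux_closure_cone' hcone Minf hMinfcl (1/2) (by norm_num))
  rw [_root_.map_smul, smul_eq_mul] at hfM2 hfMh
  have hfMinf : f₀ Minf = 0 := by linarith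
  obtain ⟨a₀, ha₀⟩ := hC
  have hfa : f₀ a₀ < 0 := hfMinf ▸ hf₀ a₀ ha₀
  set u₀ : EuclideanSpace ℝ (Fin (n + 1)) :=
    -(InnerProductSpace.toDual ℝ (EuclideanSpace ℝ (Fin (n+1)))).symm f₀ with hu₀def
  have hu₀v : ∀ y : EuclideanSpace ℝ (Fin (n + 1)), ⟪u₀, y⟫ = -f₀ y := fun y => by
    rw [hu₀def, inner_neg_left, InnerProductSpace.toDual_symm_apply]
  have hu₀0 : u₀ ≠ 0 := by
    intro h
    have h2 := hu₀v a₀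
    rw [h, inner_zero_left] at h2
    linarith
  set u : EuclideanSpace ℝ (Fin (n + 1)) := ‖u₀‖⁻¹ • u₀ with hudef
  have hu₀n : (0:ℝ) < ‖u₀‖ := norm_pos_iff.mpr hu₀0
  have hu1 : ‖u‖ = 1 := by
    rw [hudef, norm_smul, norm_inv, norm_norm]
    field_simp
  have huv : ∀ v ∈ closure C, 0 ≤ ⟪u, v⟫ := by
    intro v hv
    rw [hudef, real_inner_smul_left, hu₀v]
    have := hfle v hv
    have h1 : 0 ≤ -f₀ v := by rw [hfMinf] at this; linarith
    positivity
  have huMinf : ⟪u, Minf⟫ ≤ 0 := by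
    rw [hudef, real_inner_smul_left, hu₀v, hfMinf]
    simp
  -- eventual bound
  rw [Filter.tendsto_atTop]
  intro b
  set R : ℝ := (ε + ‖g₀‖) * (‖Minf‖ + 1) with hRdef
  set m : ℝ := (volume (ball (0 : EuclideanSpace ℝ (Fin (n + 1))) ε)).toReal with hmdef
  have hmpos : 0 < m :=
    ENNReal.toReal_pos (measure_ball_pos volume 0 hε).ne' measure_ball_lt_top.ne
  have hKpos : 0 < m * Real.exp (-(R + 1)) := mul_pos hmpos (Real.exp_pos _)
  obtain ⟨N₀, hN₀⟩ := exists_nat_ge (b / (m * Real.exp (-(R + 1))))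
  set N : ℕ := N₀ + 1 with hNdef
  have hNpos : (0:ℝ) < (N:ℝ) := by positivity
  have hbN : b ≤ (N : ℝ) * (Real.exp (-(R + 1)) * m) := by
    rw [div_le_iff₀ hKpos] at hN₀
    have h1 : (N₀ : ℝ) ≤ (N : ℝ) := by
      rw [hNdef]; push_cast; linarith
    nlinarith [hKpos]
  set δ : ℝ := min 1 (2 * ε * N)⁻¹ with hδdef
  have hδpos : 0 < δ := lt_min one_pos (by positivity)
  have hev1 : ∀ᶠ M in nhdsWithin Minf C, M ∈ C := eventually_mem_nhdsWithin
  have hev2 : ∀ᶠ M in nhdsWithin Minf C, dist M Minf < δ :=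
    Filter.eventually_of_mem
      (mem_nhdsWithin_of_mem_nhds (Metric.ball_mem_nhds Minf hδpos)) (fun M hM => hM)
  filter_upwards [hev1, hev2] with M hMC hMd
  have hMnorm : ‖M‖ ≤ ‖Minf‖ + 1 := by
    have h1 : ‖M‖ - ‖Minf‖ ≤ ‖M - Minf‖ := norm_sub_norm_le M Minf
    have h2 : ‖M - Minf‖ < 1 := by
      rw [← dist_eq_norm]
      exact lt_of_lt_of_le hMd (min_le_left _ _)
    linarith
  have hMdist : ‖M - Minf‖ ≤ (2 * ε * N)⁻¹ := by
    rw [← dist_eq_norm]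
    exact le_trans hMd.le (min_le_right _ _)
  -- centers and balls
  set c : ℕ → EuclideanSpace ℝ (Fin (n + 1)) := fun k => g₀ + (2 * ε * k) • u with hcdef
  set B : ℕ → Set (EuclideanSpace ℝ (Fin (n + 1))) := fun k => ball (c k) ε with hBdef
  have hBS : ∀ k : ℕ, B k ⊆ S := by
    intro k x hx
    intro v hv hv0
    have hg : x - (2 * ε * k) • u ∈ ball g₀ ε := by
      rw [mem_ball, dist_eq_norm]
      have he : x - (2 * ε * k) • u - g₀ = x - c k := by rw [hcdef]; beta_reduce; abel
      rw [he, ← dist_eq_norm]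
      exact hx
    have h1 : 0 < ⟪x - (2 * ε * k) • u, v⟫ := aux_interior_dual_subset (hball hg) v hv hv0
    have h2 : 0 ≤ ⟪(2 * ε * k) • u, v⟫ := by
      rw [real_inner_smul_left]
      have := huv v hv
      positivity
    have he : ⟪x, v⟫ = ⟪x - (2 * ε * k) • u, v⟫ + ⟪(2 * ε * k) • u, v⟫ := by
      rw [← inner_add_left, sub_add_cancel]
    linarith
  have hSnull : NullMeasurableSet S volume := aux_S_null hconv
  have hint : IntegrableOn (fun f : EuclideanSpace ℝ (Fin (n + 1)) => Real.exp (-⟪f, M⟫))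
      S volume := aux_integrableOn hopen hMC hSnull
  have hUS : (⋃ k ∈ Finset.range N, B k) ⊆ S := by
    intro x hx
    simp only [Set.mem_iUnion] at hx
    obtain ⟨k, _, hk⟩ := hx
    exact hBS k hk
  have step1 : ∫ f in (⋃ k ∈ Finset.range N, B k), Real.exp (-⟪f, M⟫) ∂volume ≤
      ∫ f in S, Real.exp (-⟪f, M⟫) ∂volume :=
    setIntegral_mono_set hint (Filter.Eventually.of_forall fun x => (Real.exp_pos _).le)
      (HasSubset.Subset.eventuallyLE hUS)
  have hdisj : Set.Pairwise ↑(Finset.range N) (Function.onFun Disjoint B) := by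
    intro j _ k _ hjk
    apply ball_disjoint_ball
    have he : c j - c k = (2 * ε * (j:ℝ) - 2 * ε * (k:ℝ)) • u := by
      rw [hcdef, sub_smul]
      beta_reduce
      abel
    have hd : dist (c j) (c k) = |2 * ε * (j:ℝ) - 2 * ε * k| := by
      rw [dist_eq_norm, he, norm_smul, hu1, mul_one, Real.norm_eq_abs]
    rw [hd]
    have h1 : (1:ℝ) ≤ |(j:ℝ) - k| := by
      have : (j:ℝ) ≠ k := by
        exact_mod_cast fun h => hjk (by exact_mod_cast h)
      rcases lt_or_gt_of_ne this with h | h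
      · rw [abs_sub_comm, abs_of_pos (by linarith)]
        have : (j:ℕ) < k := by exact_mod_cast h
        have : (j:ℝ) + 1 ≤ k := by exact_mod_cast this
        linarith
      · rw [abs_of_pos (by linarith)]
        have : (k:ℕ) < j := by exact_mod_cast h
        have : (k:ℝ) + 1 ≤ j := by exact_mod_cast this
        linarith
    have he2 : |2 * ε * (j:ℝ) - 2 * ε * k| = 2 * ε * |(j:ℝ) - k| := by
      rw [← mul_sub, abs_mul, abs_of_pos (by linarith : (0:ℝ) < 2 * ε)]
    rw [he2]
    nlinarith
  have step2 : ∫ f in (⋃ k ∈ Finset.range N, B k), Real.exp (-⟪f, M⟫) ∂volume =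
      ∑ k ∈ Finset.range N, ∫ f in B k, Real.exp (-⟪f, M⟫) ∂volume :=
    integral_biUnion_finset _ (fun k _ => measurableSet_ball) hdisj
      (fun k _ => hint.mono_set (hBS k))
  have step3 : ∀ k ∈ Finset.range N,
      Real.exp (-(R + 1)) * m ≤ ∫ f in B k, Real.exp (-⟪f, M⟫) ∂volume := by
    intro k hk
    have hkN : (k:ℝ) ≤ (N:ℝ) := by
      exact_mod_cast (Finset.mem_range.mp hk).le
    have hbound : ∀ x ∈ B k, Real.exp (-(R + 1)) ≤ Real.exp (-⟪x, M⟫) := by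
      intro x hx
      apply Real.exp_le_exp.mpr
      apply neg_le_neg
      have hsplit : ⟪x, M⟫ = ⟪x - c k, M⟫ + ⟪g₀, M⟫ + (2 * ε * k) * ⟪u, M⟫ := by
        have hck : ⟪c k, M⟫ = ⟪g₀, M⟫ + (2 * ε * (k:ℝ)) * ⟪u, M⟫ := by
          rw [hcdef]
          rw [inner_add_left, real_inner_smul_left]
        have hxe : x = (x - c k) + c k := by abel
        conv_lhs => rw [hxe]
        rw [inner_add_left, hck]
        ring
    -- bounds
      have h1 : ⟪x - c k, M⟫ ≤ ε * ‖M‖ := by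
        have hcs := real_inner_le_norm (x - c k) M
        have hn : ‖x - c k‖ ≤ ε := by
          rw [← dist_eq_norm]
          exact (mem_ball.mp hx).le
        nlinarith [norm_nonneg M]
      have h2 : ⟪g₀, M⟫ ≤ ‖g₀‖ * ‖M‖ := real_inner_le_norm _ _
      have h3 : ⟪u, M⟫ ≤ ‖M - Minf‖ := by
        have he : ⟪u, M⟫ = ⟪u, M - Minf⟫ + ⟪u, Minf⟫ := by
          rw [← inner_add_right, sub_add_cancel]
        have hcs := real_inner_le_norm u (M - Minf)
        rw [hu1, one_mul] at hcs
        linarith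
      have h4 : (2 * ε * k) * ⟪u, M⟫ ≤ 1 := by
        have c1 : (2 * ε * k) * ⟪u, M⟫ ≤ (2 * ε * k) * ‖M - Minf‖ :=
          mul_le_mul_of_nonneg_left h3 (by positivity)
        have c2 : (2 * ε * k) * ‖M - Minf‖ ≤ (2 * ε * N) * ‖M - Minf‖ := by
          have : 2 * ε * (k:ℝ) ≤ 2 * ε * N := by nlinarith
          exact mul_le_mul_of_nonneg_right this (norm_nonneg _)
        have c3 : (2 * ε * N) * ‖M - Minf‖ ≤ (2 * ε * N) * (2 * ε * N)⁻¹ :=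
          mul_le_mul_of_nonneg_left hMdist (by positivity)
        have c4 : (2 * ε * (N:ℝ)) * (2 * ε * N)⁻¹ = 1 := mul_inv_cancel₀ (by positivity)
        linarith
      have h5 : ε * ‖M‖ + ‖g₀‖ * ‖M‖ ≤ R := by
        rw [hRdef]
        nlinarith [norm_nonneg g₀, norm_nonneg M, hε.le]
      linarith [hsplit, h1, h2, h4, h5]
    have hgec := setIntegral_ge_of_const_le_real measurableSet_ball measure_ball_lt_top.ne hbound
      (hint.mono_set (hBS k))
    have hvol : (volume (B k)).toReal = m := by
      rw [hBdef, hmdef]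
      simp only []
      rw [Measure.addHaar_ball_center]
    rw [show volume.real (ball (c k) ε) = m from hvol] at hgec; exact hgec
  have step4 : (N:ℝ) * (Real.exp (-(R + 1)) * m) ≤
      ∑ k ∈ Finset.range N, ∫ f in B k, Real.exp (-⟪f, M⟫) ∂volume := by
    have := Finset.sum_le_sum step3
    rwa [Finset.sum_const, Finset.card_range, nsmul_eq_mul] at this
  calc b ≤ (N:ℝ) * (Real.exp (-(R + 1)) * m) := hbN
    _ ≤ ∑ k ∈ Finset.range N, ∫ f in B k, Real.exp (-⟪f, M⟫) ∂volume := step4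
    _ = ∫ f in (⋃ k ∈ Finset.range N, B k), Real.exp (-⟪f, M⟫) ∂volume := step2.symm
    _ ≤ ∫ f in S, Real.exp (-⟪f, M⟫) ∂volume := step1
end

section
/- For a proper open convex cone C in ℝ^{n+1}, the Hessian of the characteristic function φ_C(M) = ∫_{C*} e^{−f(M)} df at any point M ∈ C is positive definite: the bilinear form (u,v) ↦ ∫_{C*} f(u) f(v) e^{−f(M)} df is a positive definite symmetric bilinear form. -/
open MeasureTheory
open scoped RealInnerProductSpace


namespace CFHaux

variable {n : ℕ}

local notation "E" => EuclideanSpace ℝ (Fin (n + 1))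

lemma smul_closure_mem {C : Set E} {x : E} (hx : x ∈ closure C)
    (hcone : ∀ v ∈ C, ∀ r : ℝ, 0 < r → r • v ∈ C) {t : ℝ} (ht : 0 < t) :
    t • x ∈ closure C := by
  have h1 : (t • ·) '' closure C ⊆ closure ((t • ·) '' C) :=
    image_closure_subset_closure_image (continuous_const_smul t)
  have h2 : (t • ·) '' C ⊆ C := by
    rintro _ ⟨y, hy, rfl⟩; exact hcone y hy t ht
  exact closure_mono h2 (h1 ⟨x, hx, rfl⟩)

lemma add_closure_mem {C : Set E} (hopen : IsOpen C) (hconv : Convex ℝ C)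
    (hcone : ∀ v ∈ C, ∀ r : ℝ, 0 < r → r • v ∈ C)
    {M y : E} (hM : M ∈ C) (hy : y ∈ closure C) : M + y ∈ C := by
  have h := hconv.combo_interior_closure_mem_interior
    (x := M) (y := y) (by rwa [hopen.interior_eq]) hy (a := 1/2) (b := 1/2)
    (by norm_num) (by norm_num) (by norm_num)
  rw [hopen.interior_eq] at h
  have := hcone _ h 2 (by norm_num)
  rwa [smul_add, smul_smul, smul_smul, show (2:ℝ) * (1/2) = 1 by norm_num,
    one_smul, one_smul] at this

lemma pointed {C : Set E} (hopen : IsOpen C) (hconv : Convex ℝ C)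
    (hcone : ∀ v ∈ C, ∀ r : ℝ, 0 < r → r • v ∈ C)
    (hline : ¬ ∃ a b : E, b ≠ 0 ∧ ∀ t : ℝ, a + t • b ∈ C)
    {M : E} (hM : M ∈ C) {x : E} (hx : x ∈ closure C) (hx' : -x ∈ closure C) :
    x = 0 := by
  by_contra hx0
  refine hline ⟨M, x, hx0, fun t => ?_⟩
  rcases lt_trichotomy t 0 with ht | rfl | ht
  · have : (-t) • (-x) ∈ closure C := smul_closure_mem hx' hcone (by linarith)
    rw [smul_neg, neg_smul, neg_neg] at this
    exact add_closure_mem hopen hconv hcone hM this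
  · simpa using hM
  · exact add_closure_mem hopen hconv hcone hM (smul_closure_mem hx hcone ht)

end CFHaux

namespace CFHaux
variable {n : ℕ}
local notation "E" => EuclideanSpace ℝ (Fin (n + 1))

lemma dual_isOpen {C : Set E} (hcone : ∀ v ∈ C, ∀ r : ℝ, 0 < r → r • v ∈ C) :
    IsOpen {f : E | ∀ w ∈ closure C, w ≠ 0 → 0 < ⟪f, w⟫} := by
  set S : Set E := closure C ∩ Metric.sphere (0 : E) 1 with hS
  have hScomp : IsCompact S := (isCompact_sphere (0:E) 1).inter_left isClosed_closure
  have hDeq : {f : E | ∀ w ∈ closure C, w ≠ 0 → 0 < ⟪f, w⟫} = {f : E | ∀ w ∈ S, 0 < ⟪f, w⟫} := by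
    ext f
    constructor
    · intro hf w hw
      exact hf w hw.1 (by
        intro h0
        have := hw.2
        rw [h0] at this
        simp at this)
    · intro hf w hw hw0
      have hwn : (0:ℝ) < ‖w‖ := norm_pos_iff.2 hw0
      have hmem : ‖w‖⁻¹ • w ∈ S := by
        refine ⟨smul_closure_mem hw hcone (by positivity), ?_⟩
        simp [norm_smul, abs_of_pos (inv_pos.2 hwn), inv_mul_cancel₀ hwn.ne']
      have h5 := hf _ hmem
      rw [real_inner_smul_right] at h5
      by_contra hcon
      push_neg at hcon
      have := mul_nonpos_of_nonneg_of_nonpos (inv_pos.2 hwn).le hcon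
      linarith
  rw [hDeq]
  rw [Metric.isOpen_iff]
  intro f hf
  rcases S.eq_empty_or_nonempty with hSe | hSne
  · exact ⟨1, one_pos, fun g _ => by simp [hSe]⟩
  · obtain ⟨w₀, hw₀S, hmin⟩ := hScomp.exists_isMinOn (f := fun w => ⟪f, w⟫) hSne
      ((continuous_const.inner continuous_id).continuousOn)
    refine ⟨⟪f, w₀⟫, hf _ hw₀S, fun g hg => ?_⟩
    intro w hw
    have hwnorm : ‖w‖ = 1 := by simpa using hw.2
    have h1 : |⟪g - f, w⟫| ≤ ‖g - f‖ := by
      simpa [hwnorm] using abs_real_inner_le_norm (g - f) w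
    have h2 : ‖g - f‖ < ⟪f, w₀⟫ := by rw [Metric.mem_ball, dist_eq_norm] at hg; exact hg
    have h3 : ⟪f, w₀⟫ ≤ ⟪f, w⟫ := hmin hw
    have : ⟪g, w⟫ = ⟪f, w⟫ + ⟪g - f, w⟫ := by
      rw [← inner_add_left]
      congr 1
      abel
    rw [this]
    have := abs_le.1 h1
    linarith

end CFHaux

namespace CFHaux
variable {n : ℕ}
local notation "E" => EuclideanSpace ℝ (Fin (n + 1))

lemma closure_add_mem {C : Set E} (hconv : Convex ℝ C)
    (hcone : ∀ v ∈ C, ∀ r : ℝ, 0 < r → r • v ∈ C)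
    {x y : E} (hx : x ∈ closure C) (hy : y ∈ closure C) : x + y ∈ closure C := by
  have hmid : (1/2 : ℝ) • x + (1/2 : ℝ) • y ∈ closure C :=
    hconv.closure hx hy (by norm_num) (by norm_num) (by norm_num)
  have := smul_closure_mem hmid hcone (t := 2) (by norm_num)
  rwa [smul_add, smul_smul, smul_smul, show (2:ℝ) * (1/2) = 1 by norm_num,
    one_smul, one_smul] at this

lemma interior_dual0_nonempty {C : Set E} (hopen : IsOpen C) (hconv : Convex ℝ C)
    (hcone : ∀ v ∈ C, ∀ r : ℝ, 0 < r → r • v ∈ C)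
    (hline : ¬ ∃ a b : E, b ≠ 0 ∧ ∀ t : ℝ, a + t • b ∈ C)
    {M : E} (hM : M ∈ C) :
    (interior (ProperCone.innerDual (closure C) : Set E)).Nonempty := by
  have h0C : (0:E) ∈ closure C := by
    have ht : Filter.Tendsto (fun t : ℝ => t • M) (nhdsWithin 0 (Set.Ioi 0)) (nhds 0) := by
      have hc : Continuous fun t : ℝ => t • M := continuous_id.smul continuous_const
      exact (hc.tendsto' 0 0 (by simp)).mono_left nhdsWithin_le_nhds
    exact mem_closure_of_tendsto ht (eventually_nhdsWithin_of_forall fun t ht => hcone M hM t ht)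
  set K : ProperCone ℝ E :=
    { toSubmodule :=
        { carrier := closure C
          zero_mem' := h0C
          smul_mem' := fun c x hx => by
            rcases eq_or_lt_of_le c.2 with hc | hc
            · show (c : ℝ) • x ∈ closure C
              rw [← hc, zero_smul]; exact h0C
            · exact smul_closure_mem hx hcone hc
          add_mem' := fun hx hy => closure_add_mem hconv hcone hx hy }
      isClosed' := isClosed_closure } with hK
  have hKcoe : (K : Set E) = closure C := rfl
  have hbipolar : (ProperCone.innerDual (ProperCone.innerDual (closure C) : Set E) : Set E) = closure C := by
    have := ProperCone.innerDual_innerDual K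
    rw [hKcoe] at this
    rw [this]
    exact hKcoe
  set D0 : Set E := (ProperCone.innerDual (closure C) : Set E) with hD0
  by_contra hem
  rw [Set.not_nonempty_iff_eq_empty] at hem
  have hD0conv : Convex ℝ D0 := (ProperCone.innerDual (closure C)).convex
  have h0D0 : (0:E) ∈ D0 := (ProperCone.innerDual (closure C)).zero_mem
  have haff : affineSpan ℝ D0 ≠ ⊤ := by
    intro htop
    have := hD0conv.interior_nonempty_iff_affineSpan_eq_top.2 htop
    rw [hem] at this
    exact Set.not_nonempty_empty this
  have hspan : Submodule.span ℝ D0 ≠ ⊤ := by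
    intro htop
    apply haff
    rw [← AffineSubspace.coe_eq_univ_iff]
    rw [← Set.insert_eq_of_mem h0D0, affineSpan_insert_zero, htop]
    simp
  have horth : (Submodule.span ℝ D0)ᗮ ≠ ⊥ :=
    fun h => hspan (Submodule.orthogonal_eq_bot_iff.1 h)
  obtain ⟨b, hb, hb0⟩ := (Submodule.ne_bot_iff _).1 horth
  have hbperp : ∀ f ∈ D0, ⟪f, b⟫ = 0 := fun f hf =>
    (Submodule.mem_orthogonal _ b).1 hb f (Submodule.subset_span hf)
  have hbmem : ∀ s : ℝ, s • b ∈ closure C := by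
    intro s
    rw [← hbipolar]
    rw [SetLike.mem_coe, ProperCone.mem_innerDual]
    intro f hf
    rw [real_inner_smul_right, hbperp f hf, mul_zero]
  have := pointed hopen hconv hcone hline hM (hbmem 1) (by simpa using hbmem (-1))
  simp at this
  exact hb0 this

lemma interior_dual0_subset {C : Set E} :
    interior (ProperCone.innerDual (closure C) : Set E) ⊆
      {f : E | ∀ w ∈ closure C, w ≠ 0 → 0 < ⟪f, w⟫} := by
  intro f hf w hw hw0
  obtain ⟨δ, hδ, hball⟩ := Metric.isOpen_iff.1 isOpen_interior f hf
  have hwn : (0:ℝ) < ‖w‖ := norm_pos_iff.2 hw0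
  set g : E := f - (δ/2 * ‖w‖⁻¹) • w with hg
  have hgball : g ∈ Metric.ball f δ := by
    rw [Metric.mem_ball, dist_eq_norm, hg]
    simp only [sub_sub_cancel_left, norm_neg]
    rw [norm_smul]
    rw [Real.norm_eq_abs, abs_of_pos (by positivity)]
    rw [mul_assoc, inv_mul_cancel₀ hwn.ne', mul_one]
    linarith
  have hgD0 : g ∈ (ProperCone.innerDual (closure C) : Set E) := interior_subset (hball hgball)
  rw [SetLike.mem_coe, ProperCone.mem_innerDual] at hgD0
  have := hgD0 hw
  rw [hg, inner_sub_right, real_inner_smul_right, real_inner_self_eq_norm_sq] at this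
  have hq : (0:ℝ) < δ/2 * ‖w‖⁻¹ * (‖w‖*‖w‖) := by positivity
  rw [real_inner_comm]
  nlinarith [this]

end CFHaux

namespace CFHaux
variable {n : ℕ}
local notation "E" => EuclideanSpace ℝ (Fin (n + 1))

lemma pow_mul_exp_bound {c t : ℝ} (hc : 0 < c) (ht : 0 ≤ t) (m : ℕ) :
    (1+t)^m * Real.exp (-(c*t)) ≤ (Nat.factorial m : ℝ) * Real.exp c / c^m := by
  have h1 : (c*(1+t))^m / (Nat.factorial m : ℝ) ≤ Real.exp (c*(1+t)) :=
    Real.pow_div_factorial_le_exp (c*(1+t)) (by positivity) m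
  have h4 : (0:ℝ) < (Nat.factorial m : ℝ) := by
    exact_mod_cast Nat.factorial_pos m
  have h5 : c^m * (1+t)^m ≤ (Nat.factorial m : ℝ) * (Real.exp c * Real.exp (c*t)) := by
    have := (div_le_iff₀ h4).1 h1
    rw [mul_pow] at this
    rw [← Real.exp_add] at *
    calc c^m * (1+t)^m ≤ Real.exp (c*(1+t)) * (Nat.factorial m : ℝ) := this
      _ = (Nat.factorial m : ℝ) * Real.exp (c + c*t) := by rw [mul_comm]; ring_nf
  have hex : (0:ℝ) < Real.exp (c*t) := Real.exp_pos _
  have hcm : (0:ℝ) < c^m := by positivity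
  rw [Real.exp_neg, ← div_eq_mul_inv, div_le_div_iff₀ hex hcm]
  nlinarith [h5]

lemma integrable_norm_sq_exp {c : ℝ} (hc : 0 < c) :
    Integrable (fun x : E => ‖x‖^2 * Real.exp (-(c * ‖x‖))) volume := by
  have hfin : (Module.finrank ℝ E : ℝ) < ((n:ℝ)+2) := by
    rw [finrank_euclideanSpace, Fintype.card_fin]
    push_cast
    linarith
  have hint := (integrable_one_add_norm (μ := (volume : Measure (EuclideanSpace ℝ (Fin (n+1))))) (r := (n:ℝ)+2) hfin).const_mul
      ((Nat.factorial (n+4) : ℝ) * Real.exp c / c^(n+4))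
  refine hint.mono' ?_ ?_
  · exact (((continuous_norm.pow 2)).mul
      (Real.continuous_exp.comp (continuous_const.mul continuous_norm).neg)).aestronglyMeasurable
  · refine Filter.Eventually.of_forall fun x => ?_
    set t := ‖x‖ with htdef
    have ht : 0 ≤ t := norm_nonneg x
    have hb : (0:ℝ) < 1 + t := by linarith
    have hbn : (0:ℝ) < (1+t)^(n+2) := by positivity
    rw [Real.norm_eq_abs, abs_of_nonneg (by positivity)]
    have hrpow : (1+t) ^ (-((n:ℝ)+2)) = ((1+t)^(n+2 : ℕ))⁻¹ := by
      rw [show -((n:ℝ)+2) = -((n+2 : ℕ) : ℝ) by push_cast; ring]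
      rw [Real.rpow_neg hb.le, Real.rpow_natCast]
    rw [hrpow]
    have key : t^2 * Real.exp (-(c*t)) * (1+t)^(n+2) ≤
        (Nat.factorial (n+4) : ℝ) * Real.exp c / c^(n+4) := by
      have ht2 : t^2 ≤ (1+t)^2 := by nlinarith
      have hexp : (0:ℝ) < Real.exp (-(c*t)) := Real.exp_pos _
      calc t^2 * Real.exp (-(c*t)) * (1+t)^(n+2)
          ≤ (1+t)^2 * Real.exp (-(c*t)) * (1+t)^(n+2) := by
            have := mul_le_mul_of_nonneg_right
              (mul_le_mul_of_nonneg_right ht2 hexp.le) hbn.le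
            exact this
        _ = (1+t)^(n+4) * Real.exp (-(c*t)) := by
            rw [show (1+t)^2 * Real.exp (-(c*t)) * (1+t)^(n+2)
              = ((1+t)^2 * (1+t)^(n+2)) * Real.exp (-(c*t)) by ring, ← pow_add]
            congr 2
            omega
        _ ≤ _ := pow_mul_exp_bound hc ht (n+4)
    rw [← div_eq_mul_inv, le_div_iff₀ hbn]
    exact key

lemma inner_lower_bound {C : Set E} (hopen : IsOpen C) {M : E} (hM : M ∈ C) :
    ∃ c : ℝ, 0 < c ∧ ∀ f : E, (∀ w ∈ closure C, w ≠ 0 → 0 < ⟪f, w⟫) → c * ‖f‖ ≤ ⟪f, M⟫ := by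
  obtain ⟨ε, hε, hball⟩ := Metric.isOpen_iff.1 hopen M hM
  refine ⟨ε/2, by positivity, fun f hf => ?_⟩
  rcases eq_or_ne f 0 with rfl | hf0
  · simp
  · have hfn : (0:ℝ) < ‖f‖ := norm_pos_iff.2 hf0
    set w : E := M - (ε/2 * ‖f‖⁻¹) • f with hw
    have hwC : w ∈ C := by
      apply hball
      rw [Metric.mem_ball, dist_eq_norm, hw]
      simp only [sub_sub_cancel_left, norm_neg]
      rw [norm_smul, Real.norm_eq_abs, abs_of_pos (by positivity), mul_assoc,
        inv_mul_cancel₀ hfn.ne', mul_one]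
      linarith
    have hinner : ⟪f, w⟫ = ⟪f, M⟫ - ε/2 * ‖f‖ := by
      rw [hw, inner_sub_right, real_inner_smul_right, real_inner_self_eq_norm_sq]
      have : ε/2 * ‖f‖⁻¹ * (‖f‖^2) = ε/2 * ‖f‖ := by
        field_simp
      rw [this]
    rcases eq_or_ne w 0 with hw0 | hw0
    · rw [hw0] at hinner
      simp only [inner_zero_right] at hinner
      linarith [hinner]
    · have := hf w (subset_closure hwC) hw0
      rw [hinner] at this
      linarith

end CFHaux

/-- For a proper open convex cone `C ⊆ ℝ^{n+1}`, the Hessian of the characteristic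
function `φ_C(M) = ∫_{C*} e^{-f(M)} df` at any point `M ∈ C`, namely the bilinear form
`(u,v) ↦ ∫_{C*} f(u) f(v) e^{-f(M)} df`, is a positive definite symmetric bilinear
form. -/
theorem characteristic_function_hessian_posDef {n : ℕ}
    (C : Set (EuclideanSpace ℝ (Fin (n + 1))))
    (hopen : IsOpen C) (hconv : Convex ℝ C)
    (hcone : ∀ v ∈ C, ∀ r : ℝ, 0 < r → r • v ∈ C)
    (hline : ¬ ∃ a b : EuclideanSpace ℝ (Fin (n + 1)), b ≠ 0 ∧ ∀ t : ℝ, a + t • b ∈ C) :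
    ∀ M ∈ C,
      -- symmetry
      (∀ u v : EuclideanSpace ℝ (Fin (n + 1)),
        (∫ f in {f : EuclideanSpace ℝ (Fin (n + 1)) | ∀ w ∈ closure C, w ≠ 0 → 0 < ⟪f, w⟫},
          (⟪f, u⟫ * ⟪f, v⟫) * Real.exp (-⟪f, M⟫) ∂volume) =
        ∫ f in {f : EuclideanSpace ℝ (Fin (n + 1)) | ∀ w ∈ closure C, w ≠ 0 → 0 < ⟪f, w⟫},
          (⟪f, v⟫ * ⟪f, u⟫) * Real.exp (-⟪f, M⟫) ∂volume) ∧
      -- positive definiteness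
      (∀ u : EuclideanSpace ℝ (Fin (n + 1)), u ≠ 0 →
        0 < ∫ f in {f : EuclideanSpace ℝ (Fin (n + 1)) | ∀ w ∈ closure C, w ≠ 0 → 0 < ⟪f, w⟫},
          (⟪f, u⟫ * ⟪f, u⟫) * Real.exp (-⟪f, M⟫) ∂volume) := by
  intro M hM
  set D : Set (EuclideanSpace ℝ (Fin (n + 1))) :=
    {f : EuclideanSpace ℝ (Fin (n + 1)) | ∀ w ∈ closure C, w ≠ 0 → 0 < ⟪f, w⟫} with hD
  refine ⟨fun u v => integral_congr_ae (Filter.Eventually.of_forall fun f => by ring), ?_⟩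
  intro u hu
  have hDopen := CFHaux.dual_isOpen hcone
  have hDmeas : MeasurableSet D := hDopen.measurableSet
  obtain ⟨c, hc0, hcb⟩ := CFHaux.inner_lower_bound hopen hM
  set φ : EuclideanSpace ℝ (Fin (n + 1)) → ℝ :=
    fun f => (⟪f, u⟫ * ⟪f, u⟫) * Real.exp (-⟪f, M⟫) with hφ
  have hφcont : Continuous φ := by
    exact ((continuous_id.inner continuous_const).mul
      (continuous_id.inner continuous_const)).mul
      (Real.continuous_exp.comp (continuous_id.inner continuous_const).neg)
  have hbase := (CFHaux.integrable_norm_sq_exp (n := n) hc0).const_mul (‖u‖^2)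
  have hInt : IntegrableOn φ D volume := by
    refine (hbase.restrict (s := D)).mono' (hφcont.aestronglyMeasurable.restrict) ?_
    filter_upwards [ae_restrict_mem hDmeas] with f hf
    have h1 : |⟪f, u⟫| ≤ ‖f‖ * ‖u‖ := abs_real_inner_le_norm f u
    have h2 : ⟪f, u⟫ * ⟪f, u⟫ ≤ (‖f‖ * ‖u‖)^2 := by
      calc ⟪f, u⟫ * ⟪f, u⟫ = |⟪f, u⟫| * |⟪f, u⟫| := (abs_mul_abs_self _).symm
        _ ≤ (‖f‖ * ‖u‖) * (‖f‖ * ‖u‖) :=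
            mul_le_mul h1 h1 (abs_nonneg _) (by positivity)
        _ = (‖f‖ * ‖u‖)^2 := by ring
    have h3 : Real.exp (-⟪f, M⟫) ≤ Real.exp (-(c * ‖f‖)) :=
      Real.exp_le_exp.2 (neg_le_neg (hcb f hf))
    have hexp : (0:ℝ) < Real.exp (-⟪f, M⟫) := Real.exp_pos _
    rw [Real.norm_eq_abs, hφ]
    rw [abs_of_nonneg (mul_nonneg (mul_self_nonneg _) hexp.le)]
    calc (⟪f, u⟫ * ⟪f, u⟫) * Real.exp (-⟪f, M⟫)
        ≤ (‖f‖ * ‖u‖)^2 * Real.exp (-(c * ‖f‖)) :=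
          mul_le_mul h2 h3 hexp.le (by positivity)
      _ = ‖u‖^2 * (‖f‖^2 * Real.exp (-(c * ‖f‖))) := by ring
  have hnonneg : 0 ≤ᵐ[volume.restrict D] φ :=
    Filter.Eventually.of_forall fun f => mul_nonneg (mul_self_nonneg _) (Real.exp_pos _).le
  rw [setIntegral_pos_iff_support_of_nonneg_ae hnonneg hInt]
  have hDpos : 0 < volume D := by
    obtain ⟨g, hg⟩ := CFHaux.interior_dual0_nonempty hopen hconv hcone hline hM
    calc (0:ENNReal)
        < volume (interior (ProperCone.innerDual (closure C) : Set (EuclideanSpace ℝ (Fin (n + 1))))) :=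
          isOpen_interior.measure_pos volume ⟨g, hg⟩
      _ ≤ volume D := measure_mono (CFHaux.interior_dual0_subset (C := C))
  have hHnull : volume {f : EuclideanSpace ℝ (Fin (n + 1)) | ⟪f, u⟫ = 0} = 0 := by
    have hker : {f : EuclideanSpace ℝ (Fin (n + 1)) | ⟪f, u⟫ = 0} =
        ((LinearMap.ker ((innerSL ℝ u : EuclideanSpace ℝ (Fin (n + 1)) →L[ℝ] ℝ) :
            EuclideanSpace ℝ (Fin (n + 1)) →ₗ[ℝ] ℝ) :
          Submodule ℝ (EuclideanSpace ℝ (Fin (n + 1)))) : Set (EuclideanSpace ℝ (Fin (n + 1)))) := by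
      ext f
      simp only [Set.mem_setOf_eq, SetLike.mem_coe, LinearMap.mem_ker,
        ContinuousLinearMap.coe_coe, innerSL_apply_apply]
      rw [real_inner_comm]
    rw [hker]
    apply MeasureTheory.Measure.addHaar_submodule
    intro htop
    have : u ∈ LinearMap.ker ((innerSL ℝ u : EuclideanSpace ℝ (Fin (n + 1)) →L[ℝ] ℝ) :
            EuclideanSpace ℝ (Fin (n + 1)) →ₗ[ℝ] ℝ) := by
      rw [htop]; exact Submodule.mem_top
    rw [LinearMap.mem_ker] at this
    simp only [ContinuousLinearMap.coe_coe, innerSL_apply_apply] at this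
    exact hu (inner_self_eq_zero.1 this)
  have hsub : D \ {f : EuclideanSpace ℝ (Fin (n + 1)) | ⟪f, u⟫ = 0} ⊆ Function.support φ ∩ D := by
    rintro f ⟨hfD, hfH⟩
    refine ⟨?_, hfD⟩
    have h0 : ⟪f, u⟫ ≠ 0 := hfH
    exact ne_of_gt (mul_pos (mul_self_pos.2 h0) (Real.exp_pos _))
  calc (0:ENNReal) < volume D := hDpos
    _ = volume (D \ {f : EuclideanSpace ℝ (Fin (n + 1)) | ⟪f, u⟫ = 0}) :=
        (measure_diff_null hHnull).symm
    _ ≤ volume (Function.support φ ∩ D) := measure_mono hsub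
end

section
/- A unipotent element γ ∈ SL₃(ℝ) with (γ − I)² = 0 and γ ≠ I (i.e. a matrix conjugate to a single Jordan block of size 2 plus a 1×1 block with eigenvalue 1) cannot preserve any properly convex open subset of ℙ²(ℝ). The same holds for an element whose square has this form. -/
/-- `C` is the cone over a (nonempty) properly convex open subset `Ω` of `ℙ²(ℝ)`:
an open convex cone in `ℝ³` containing no affine line. -/
def IsProperConeR3 (C : Set (Fin 3 → ℝ)) : Prop :=
  IsOpen C ∧ Convex ℝ C ∧ C.Nonempty ∧
    (∀ v ∈ C, ∀ r : ℝ, 0 < r → r • v ∈ C) ∧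
    ¬ ∃ a b : Fin 3 → ℝ, b ≠ 0 ∧ ∀ t : ℝ, a + t • b ∈ C

/-- `A` preserves the properly convex open set `Ω = P(C) ⊆ ℙ²(ℝ)`: its linear action
maps the cone `C` onto `C` or onto `-C`. -/
def PreservesConeR3 (A : Matrix (Fin 3) (Fin 3) ℝ) (C : Set (Fin 3 → ℝ)) : Prop :=
  A.mulVecLin '' C = C ∨ A.mulVecLin '' C = (fun v => -v) '' C

lemma key_no_line (B : Matrix (Fin 3) (Fin 3) ℝ)
    (h1 : (B - 1) ^ 2 = 0) (h2 : B ≠ 1)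
    (C : Set (Fin 3 → ℝ)) (hC : IsProperConeR3 C)
    (hB : B.mulVecLin '' C = C) : False := by
  obtain ⟨hopen, hconv, hne, -, hline⟩ := hC
  set N := B - 1 with hNdef
  have hB1 : B = 1 + N := by rw [hNdef]; abel
  have hN2 : N * N = 0 := by rw [← sq]; exact h1
  have hNne : N ≠ 0 := fun h0 => h2 (by rw [hB1, h0, add_zero])
  have hinv : (1 - N) * B = 1 := by
    have e : (1 - N) * B = 1 - N * N := by rw [hB1]; noncomm_ring
    rw [e, hN2, sub_zero]
  -- find v in C with N.mulVec v ≠ 0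
  obtain ⟨v0, hv0⟩ := hne
  have hex : ∃ v ∈ C, N.mulVec v ≠ 0 := by
    by_contra hall
    push_neg at hall
    apply hNne
    obtain ⟨ε, hε, hball⟩ := Metric.isOpen_iff.mp hopen v0 hv0
    have hzero : ∀ x : Fin 3 → ℝ, N.mulVec x = 0 := by
      intro x
      rcases eq_or_ne x 0 with rfl | hx
      · simp [Matrix.mulVec_zero]
      · set δ : ℝ := ε / (2 * ‖x‖) with hδdef
        have hxnorm : 0 < ‖x‖ := norm_pos_iff.mpr hx
        have hδpos : 0 < δ := by positivity
        have hmem : v0 + δ • x ∈ C := by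
          apply hball
          rw [Metric.mem_ball, dist_eq_norm]
          have : v0 + δ • x - v0 = δ • x := by abel
          rw [this, norm_smul, Real.norm_eq_abs, abs_of_pos hδpos, hδdef]
          rw [div_mul_eq_mul_div, mul_comm]
          rw [div_lt_iff₀ (by positivity)]
          nlinarith
        have h1' := hall _ hmem
        have h0' := hall _ hv0
        rw [Matrix.mulVec_add, h0', zero_add, Matrix.mulVec_smul] at h1'
        have := smul_eq_zero.mp h1'
        rcases this with h | h
        · exact absurd h (ne_of_gt hδpos)
        · exact h
    ext i j
    have := congrFun (hzero (Pi.single j 1)) i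
    rw [Matrix.mulVec_single] at this
    simpa using this
  obtain ⟨v, hvC, hw⟩ := hex
  set w := N.mulVec v with hwdef
  have hNw : N.mulVec w = 0 := by
    rw [hwdef, Matrix.mulVec_mulVec, hN2, Matrix.zero_mulVec]
  have hmemC : ∀ x ∈ C, B.mulVec x ∈ C := by
    intro x hx
    rw [← hB]
    exact ⟨x, hx, by rw [Matrix.mulVecLin_apply]⟩
  have hmemC' : ∀ x ∈ C, (1 - N).mulVec x ∈ C := by
    intro x hx
    rw [← hB] at hx
    obtain ⟨y, hy, hxy⟩ := hx
    rw [Matrix.mulVecLin_apply] at hxy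
    have : (1 - N).mulVec x = y := by
      rw [← hxy, Matrix.mulVec_mulVec, hinv, Matrix.one_mulVec]
    rw [this]; exact hy
  have hBmul : ∀ x : Fin 3 → ℝ, B.mulVec x = x + N.mulVec x := by
    intro x
    rw [hB1, Matrix.add_mulVec, Matrix.one_mulVec]
  have hB'mul : ∀ x : Fin 3 → ℝ, (1 - N).mulVec x = x - N.mulVec x := by
    intro x
    rw [Matrix.sub_mulVec, Matrix.one_mulVec]
  have hfwd : ∀ n : ℕ, v + (n : ℝ) • w ∈ C := by
    intro n
    induction n with
    | zero => simpa using hvC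
    | succ n ih =>
      have := hmemC _ ih
      rw [hBmul] at this
      have heq : v + (n : ℝ) • w + N.mulVec (v + (n : ℝ) • w)
          = v + ((n + 1 : ℕ) : ℝ) • w := by
        rw [Matrix.mulVec_add, Matrix.mulVec_smul, ← hwdef, hNw, smul_zero, add_zero]
        push_cast
        rw [add_smul, one_smul]
        abel
      rwa [heq] at this
  have hbwd : ∀ n : ℕ, v - (n : ℝ) • w ∈ C := by
    intro n
    induction n with
    | zero => simpa using hvC
    | succ n ih =>
      have := hmemC' _ ih
      rw [hB'mul] at this
      have heq : v - (n : ℝ) • w - N.mulVec (v - (n : ℝ) • w)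
          = v - ((n + 1 : ℕ) : ℝ) • w := by
        rw [Matrix.mulVec_sub, Matrix.mulVec_smul, ← hwdef, hNw, smul_zero, sub_zero]
        push_cast
        rw [add_smul, one_smul]
        abel
      rwa [heq] at this
  apply hline
  refine ⟨v, w, hw, fun t => ?_⟩
  obtain ⟨n, hn⟩ := exists_nat_gt |t|
  have hn0 : (0 : ℝ) < n := lt_of_le_of_lt (abs_nonneg t) hn
  have hn0' : (n : ℝ) ≠ 0 := ne_of_gt hn0
  set a : ℝ := ((n : ℝ) - t) / (2 * n) with ha_def
  set b : ℝ := ((n : ℝ) + t) / (2 * n) with hb_def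
  have hta : t ≤ n := le_of_lt (lt_of_le_of_lt (le_abs_self t) hn)
  have htb : -(n : ℝ) ≤ t := by
    have := neg_abs_le t
    linarith [lt_of_le_of_lt (le_abs_self t) hn, hn]
  have ha : 0 ≤ a := by
    rw [ha_def]
    apply div_nonneg <;> linarith
  have hb : 0 ≤ b := by
    rw [hb_def]
    apply div_nonneg <;> linarith
  have hab : a + b = 1 := by
    rw [ha_def, hb_def]
    field_simp
    ring
  have hmem := hconv (hbwd n) (hfwd n) ha hb hab
  have heq : a • (v - (n : ℝ) • w) + b • (v + (n : ℝ) • w) = v + t • w := by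
    rw [smul_sub, smul_add, smul_smul, smul_smul]
    have h1 : a • v + b • v = v := by rw [← add_smul, hab, one_smul]
    have h2 : b * n - a * n = t := by
      rw [ha_def, hb_def]
      field_simp
      ring
    calc a • v - (a * n) • w + (b • v + (b * n) • w)
        = (a • v + b • v) + (b * n - a * n) • w := by
          rw [sub_smul]; abel
      _ = v + t • w := by rw [h1, h2]
  rwa [heq] at hmem

/-- A unipotent element `γ ∈ SL₃(ℝ)` with `(γ - I)² = 0` and `γ ≠ I` (a single Jordan
block of size `2` plus a `1×1` block with eigenvalue `1`, up to conjugacy, with `u = 1`;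
the case `u = -1` being that of an element whose square has this form) cannot preserve
any properly convex open subset of `ℙ²(ℝ)`. -/
theorem no_invariant_convex_of_quasi_unipotent (A : Matrix (Fin 3) (Fin 3) ℝ)
    (hdet : A.det = 1)
    (h : ((A - 1) ^ 2 = 0 ∧ A ≠ 1) ∨ ((A ^ 2 - 1) ^ 2 = 0 ∧ A ^ 2 ≠ 1)) :
    ¬ ∃ C : Set (Fin 3 → ℝ), IsProperConeR3 C ∧ PreservesConeR3 A C := by
  rintro ⟨C, hC, hpres⟩
  have hsq : (A ^ 2).mulVecLin '' C = C := by
    have hmul : (A ^ 2).mulVecLin '' C = A.mulVecLin '' (A.mulVecLin '' C) := by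
      rw [sq, Matrix.mulVecLin_mul, LinearMap.coe_comp, Set.image_comp]
    rcases hpres with h' | h'
    · rw [hmul, h', h']
    · rw [hmul, h']
      have hcomm : A.mulVecLin '' ((fun v => -v) '' C)
          = (fun v => -v) '' (A.mulVecLin '' C) := by
        rw [Set.image_image, Set.image_image]
        apply Set.image_congr
        intro x _
        simp [map_neg]
      rw [hcomm, h', Set.image_image]
      simp
  have hBsq : (A ^ 2 - 1) ^ 2 = 0 ∧ A ^ 2 ≠ 1 := by
    rcases h with ⟨h1, h2⟩ | h'
    · constructor
      · have e : (A ^ 2 - 1) ^ 2 = (A - 1) ^ 2 * (A + 1) ^ 2 := by noncomm_ring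
        rw [e, h1, zero_mul]
      · intro hsq1
        apply h2
        have e : (0 : Matrix (Fin 3) (Fin 3) ℝ) = (1 - A) + (1 - A) := by
          calc (0 : Matrix (Fin 3) (Fin 3) ℝ) = (A - 1) ^ 2 := h1.symm
            _ = A ^ 2 - A - A + 1 := by noncomm_ring
            _ = 1 - A - A + 1 := by rw [hsq1]
            _ = (1 - A) + (1 - A) := by abel
        have e2 : (2 : ℝ) • ((1 : Matrix (Fin 3) (Fin 3) ℝ) - A) = 0 := by
          rw [two_smul]; exact e.symm
        rcases smul_eq_zero.mp e2 with h0 | h0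
        · norm_num at h0
        · exact (sub_eq_zero.mp h0).symm
    · exact h'
  exact key_no_line (A ^ 2) hBsq.1 hBsq.2 C hC hsq
end

section
/- If γ ∈ SL₃(ℝ) preserves a properly convex open subset of ℙ²(ℝ) and has a non-real eigenvalue, then the unique real eigenvalue of γ equals 1. -/
open Polynomial Matrix Complex Filter

lemma re_pow_nonpos (ζ : ℂ) (habs : ‖ζ‖ = 1) (hne : ζ ≠ 1) (N : ℕ) :
    ∃ n, N ≤ n ∧ (ζ ^ n).re ≤ 0 := by
  by_contra h
  push_neg at h
  set f : ℕ → ℝ := fun i => (ζ ^ (N + i)).re with hf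
  have hfpos : ∀ i, 0 ≤ f i := fun i => (h (N + i) (Nat.le_add_right _ _)).le
  have habsd : 0 < ‖ζ - 1‖ := by
    simpa [sub_eq_zero] using hne
  have hsum : ∀ n, ∑ i ∈ Finset.range n, f i ≤ 2 / ‖ζ - 1‖ := by
    intro n
    have heq : ∑ i ∈ Finset.range n, f i = (ζ ^ N * ((ζ ^ n - 1) / (ζ - 1))).re := by
      rw [← geom_sum_eq hne n, Finset.mul_sum, Complex.re_sum]
      exact Finset.sum_congr rfl fun i _ => by rw [hf, ← pow_add]
    have habs2 : ‖ζ ^ n - 1‖ ≤ 2 := by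
      calc ‖ζ ^ n - 1‖ ≤ ‖ζ ^ n‖ + ‖(1:ℂ)‖ := norm_sub_le _ _
        _ = 2 := by rw [norm_pow, habs, one_pow, norm_one]; norm_num
    rw [heq]
    calc (ζ ^ N * ((ζ ^ n - 1) / (ζ - 1))).re ≤ ‖ζ ^ N * ((ζ ^ n - 1) / (ζ - 1))‖ :=
          Complex.re_le_norm _
      _ = ‖ζ‖ ^ N * (‖ζ ^ n - 1‖ / ‖ζ - 1‖) := by
          rw [norm_mul, norm_div, norm_pow]
      _ ≤ 1 * (2 / ‖ζ - 1‖) := by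
          rw [habs, one_pow, one_mul, one_mul]
          exact div_le_div_of_nonneg_right habs2 habsd.le |>.trans_eq rfl
      _ = 2 / ‖ζ - 1‖ := one_mul _
  have hsummable : Summable f := summable_of_sum_range_le hfpos hsum
  have htend : Tendsto f atTop (nhds 0) := hsummable.tendsto_atTop_zero
  have hev : ∀ᶠ i in atTop, f i < 1/2 :=
    htend.eventually (eventually_lt_nhds (by norm_num : (0:ℝ) < 1/2))
  obtain ⟨i, hi⟩ := hev.exists
  set m := N + i with hm
  have h1 : (ζ ^ m).re < 1/2 := hi
  have h2 : 0 < (ζ ^ m).re := h (N + i) (Nat.le_add_right _ _)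
  have h3 : 0 < (ζ ^ (2 * m)).re := h (2 * m) (by omega)
  have habsm : ‖ζ ^ m‖ = 1 := by rw [norm_pow, habs, one_pow]
  have hsq : (ζ ^ (2 * m)).re = 2 * (ζ ^ m).re ^ 2 - 1 := by
    have : ζ ^ (2 * m) = (ζ ^ m) * (ζ ^ m) := by ring
    rw [this, Complex.mul_re]
    have hnsq : (ζ ^ m).re ^ 2 + (ζ ^ m).im ^ 2 = 1 := by
      have := Complex.sq_norm (ζ ^ m)
      rw [habsm] at this
      simpa [Complex.normSq_apply, sq] using this.symm
    nlinarith [hnsq]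
  nlinarith

lemma neg_image_comm (M : Matrix (Fin 3) (Fin 3) ℝ) (S : Set (Fin 3 → ℝ)) :
    M.mulVecLin '' ((fun v : Fin 3 → ℝ => -v) '' S) = (fun v : Fin 3 → ℝ => -v) '' (M.mulVecLin '' S) := by
  rw [← Set.image_comp, ← Set.image_comp]
  have : (⇑M.mulVecLin ∘ fun v : Fin 3 → ℝ => -v) = ((fun v : Fin 3 → ℝ => -v) ∘ ⇑M.mulVecLin) := by
    funext x; simp [Matrix.mulVec_neg]
  rw [this]

lemma sq_pres (A : Matrix (Fin 3) (Fin 3) ℝ) (C : Set (Fin 3 → ℝ))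
    (hpres : PreservesConeR3 A C) : (A * A).mulVecLin '' C = C := by
  have hcomp : (A * A).mulVecLin '' C = A.mulVecLin '' (A.mulVecLin '' C) := by
    rw [Matrix.mulVecLin_mul, LinearMap.coe_comp, Set.image_comp]
  rcases hpres with h | h
  · rw [hcomp, h, h]
  · rw [hcomp, h, neg_image_comm, h, ← Set.image_comp]
    simp

lemma inv_pres (A : Matrix (Fin 3) (Fin 3) ℝ) (hdet : A.det = 1) (C : Set (Fin 3 → ℝ))
    (hpres : PreservesConeR3 A C) : PreservesConeR3 A⁻¹ C := by
  have hinv : A⁻¹ * A = 1 := Matrix.nonsing_inv_mul A (by rw [hdet]; exact isUnit_one)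
  have hid : ∀ S : Set (Fin 3 → ℝ), A⁻¹.mulVecLin '' (A.mulVecLin '' S) = S := by
    intro S
    rw [← Set.image_comp, ← LinearMap.coe_comp, ← Matrix.mulVecLin_mul, hinv,
      Matrix.mulVecLin_one]
    simp
  rcases hpres with h | h
  · left; conv_lhs => rw [← h]
    exact hid C
  · right
    have h1 : A⁻¹.mulVecLin '' ((fun v : Fin 3 → ℝ => -v) '' C) = C := by rw [← h]; exact hid C
    rw [neg_image_comm] at h1
    have := congrArg (Set.image (fun v : Fin 3 → ℝ => -v)) h1
    have hnn : ((fun v : Fin 3 → ℝ => -v) ∘ (fun v : Fin 3 → ℝ => -v)) = id := by funext x; simp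
    rw [← Set.image_comp, hnn, Set.image_id] at this
    exact this

lemma smul_image (C : Set (Fin 3 → ℝ)) (hscale : ∀ v ∈ C, ∀ r : ℝ, 0 < r → r • v ∈ C)
    {r : ℝ} (hr : 0 < r) : (fun x : Fin 3 → ℝ => r • x) '' C = C := by
  ext x
  constructor
  · rintro ⟨y, hy, rfl⟩
    exact hscale y hy r hr
  · intro hx
    exact ⟨r⁻¹ • x, hscale x hx r⁻¹ (by positivity), by
      simp [smul_smul, mul_inv_cancel₀ hr.ne']⟩

lemma smul_lin_image (A : Matrix (Fin 3) (Fin 3) ℝ) (C : Set (Fin 3 → ℝ))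
    (hscale : ∀ v ∈ C, ∀ r : ℝ, 0 < r → r • v ∈ C)
    (hA : A.mulVecLin '' C = C) {r : ℝ} (hr : 0 < r) :
    ⇑(r • A.mulVecLin) '' C = C := by
  have hco : ⇑(r • A.mulVecLin) = (fun x : Fin 3 → ℝ => r • x) ∘ ⇑A.mulVecLin := by
    funext x; simp
  rw [hco, Set.image_comp, hA, smul_image C hscale hr]

lemma core_lemma (C : Set (Fin 3 → ℝ)) (hC : IsProperConeR3 C)
    (T : (Fin 3 → ℝ) →ₗ[ℝ] (Fin 3 → ℝ)) (hT : T '' C = C)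
    (ε : ℝ) (hε0 : 0 ≤ ε) (hε1 : ε < 1)
    (ζ : ℂ) (hζ : ‖ζ‖ = 1) (hζ1 : ζ ≠ 1)
    (v w w' : Fin 3 → ℝ) (hw : w ≠ 0)
    (hTv : T v = ε • v)
    (hTw : T w = ζ.re • w + ζ.im • w')
    (hTw' : T w' = (-ζ.im) • w + ζ.re • w')
    (hc : v + w ∈ C) : False := by
  obtain ⟨hopen, hconv, -, hscale, hline⟩ := hC
  -- closure helpers
  have h0D : (0 : Fin 3 → ℝ) ∈ closure C := by
    have htend : Tendsto (fun n : ℕ => (1 / ((n:ℝ)+1)) • (v + w)) atTop (nhds 0) := by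
      have h1 : Tendsto (fun n : ℕ => 1 / ((n:ℝ)+1)) atTop (nhds 0) :=
        tendsto_one_div_add_atTop_nhds_zero_nat
      simpa using h1.smul_const (v + w)
    exact mem_closure_of_tendsto htend (Filter.Eventually.of_forall fun n =>
      hscale _ hc _ (by positivity))
  have hsmulD : ∀ (r : ℝ), 0 ≤ r → ∀ x ∈ closure C, r • x ∈ closure C := by
    intro r hr x hx
    rcases hr.eq_or_lt with rfl | hr
    · simpa using h0D
    · exact map_mem_closure (continuous_const_smul r) hx (fun y hy => hscale y hy r hr)
  have haddD : ∀ x ∈ closure C, ∀ y ∈ closure C, x + y ∈ closure C := by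
    intro x hx y hy
    have hmid : (1/2 : ℝ) • x + (1/2 : ℝ) • y ∈ closure C :=
      hconv.closure hx hy (by norm_num) (by norm_num) (by norm_num)
    have := hsmulD 2 (by norm_num) _ hmid
    convert this using 1
    module
  -- convex cone combination inside C
  have hcombo : ∀ p ∈ C, ∀ q ∈ C, ∀ a : ℝ, 0 ≤ a → a • p + q ∈ C := by
    intro p hp q hq a ha
    rcases ha.eq_or_lt with rfl | ha
    · simpa using hq
    · have hmem : (a/(a+1)) • p + (1/(a+1)) • q ∈ C :=
        hconv hp hq (by positivity) (by positivity) (by field_simp)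
      have := hscale _ hmem (a+1) (by positivity)
      rw [smul_add, smul_smul, smul_smul] at this
      rw [show (a+1)*(a/(a+1)) = a by field_simp, show (a+1)*(1/(a+1)) = 1 by field_simp,
        one_smul] at this
      exact this
  -- the "rotating plane" vectors
  set W : ℂ → (Fin 3 → ℝ) := fun ξ => ξ.re • w + ξ.im • w' with hW
  have hTW : ∀ ξ, T (W ξ) = W (ζ * ξ) := by
    intro ξ
    simp only [hW, map_add, _root_.map_smul, hTw, hTw', Complex.mul_re, Complex.mul_im]
    module
  have hWadd : ∀ ξ η, W (ξ + η) = W ξ + W η := by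
    intro ξ η
    simp only [hW, Complex.add_re, Complex.add_im]
    module
  have hWsmul : ∀ (r : ℝ) ξ, W ((r:ℂ) * ξ) = r • W ξ := by
    intro r ξ
    simp only [hW, Complex.mul_re, Complex.mul_im, Complex.ofReal_re, Complex.ofReal_im]
    module
  have hTn : ∀ (n : ℕ) (s : ℝ) (ξ : ℂ), (T ^ n) (s • v + W ξ) = (ε ^ n * s) • v + W (ζ ^ n * ξ) := by
    intro n
    induction n with
    | zero => intro s ξ; simp
    | succ n ih =>
      intro s ξ
      have hstep : T (s • v + W ξ) = (ε * s) • v + W (ζ * ξ) := by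
        rw [map_add, T.map_smul, hTv, hTW, smul_smul, mul_comm s ε]
      rw [pow_succ, Module.End.mul_apply, hstep, ih (ε * s) (ζ * ξ)]
      rw [show ζ ^ (n+1) * ξ = ζ ^ n * (ζ * ξ) by ring, show ε ^ (n+1) * s = ε ^ n * (ε * s) by ring]
  have hTnC : ∀ n : ℕ, (T ^ n) '' C = C := by
    intro n
    induction n with
    | zero => simp
    | succ n ih =>
      have hco : ⇑(T ^ (n+1)) = ⇑(T ^ n) ∘ ⇑T := by rw [pow_succ]; rfl
      rw [hco, Set.image_comp, hT, ih]
  -- key claim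
  have hkey : ∀ (s : ℝ) (ξ : ℂ), s • v + W ξ ∈ C →
      W (-ξ) ∈ closure C ∧ ∃ s' : ℝ, s' • v + W (-ξ) ∈ C := by
    intro s ξ hcm
    have main : ∀ N : ℕ, ∃ E : ℝ, |E| ≤ 3 * ε ^ N * |s| ∧ E • v + W (-ξ) ∈ C := by
      intro N
      obtain ⟨n, hnN, hre⟩ := re_pow_nonpos ζ hζ hζ1 N
      have habsn : ‖ζ ^ n‖ = 1 := by rw [norm_pow, hζ, one_pow]
      obtain ⟨a, ha0, ha2, hacast⟩ :
          ∃ a : ℝ, 0 ≤ a ∧ a ≤ 2 ∧ ((a:ℂ)) = -(ζ ^ n + (starRingEnd ℂ) (ζ ^ n)) := by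
        refine ⟨-2 * (ζ ^ n).re, by linarith, ?_, ?_⟩
        · have h1 := Complex.abs_re_le_norm (ζ ^ n)
          rw [habsn] at h1
          have := (abs_le.mp h1).1
          linarith
        · rw [show (((-2 * (ζ ^ n).re : ℝ)):ℂ) = -(((2 * (ζ ^ n).re : ℝ)):ℂ) by push_cast; ring,
            ← Complex.add_conj]
      have hp : (T ^ n) (s • v + W ξ) ∈ C := (hTnC n) ▸ Set.mem_image_of_mem _ hcm
      have hq : (T ^ (2*n)) (s • v + W ξ) ∈ C := (hTnC (2*n)) ▸ Set.mem_image_of_mem _ hcm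
      have hx : a • ((T ^ n) (s • v + W ξ)) + (T ^ (2*n)) (s • v + W ξ) ∈ C :=
        hcombo _ hp _ hq a ha0
      have hident : ((a:ℝ):ℂ) * (ζ ^ n * ξ) + ζ ^ (2*n) * ξ = -ξ := by
        have h1 : (starRingEnd ℂ) (ζ ^ n) * (ζ ^ n) = 1 := by
          rw [mul_comm, Complex.mul_conj, ← Complex.sq_norm, habsn]; norm_num
        rw [hacast, show ζ ^ (2*n) = ζ ^ n * ζ ^ n by rw [two_mul, pow_add]]
        linear_combination (-ξ) * h1
      have hcompute : a • ((T ^ n) (s • v + W ξ)) + (T ^ (2*n)) (s • v + W ξ)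
          = (a * (ε ^ n * s) + ε ^ (2*n) * s) • v + W (-ξ) := by
        rw [hTn n s ξ, hTn (2*n) s ξ,
          show a • ((ε ^ n * s) • v + W (ζ ^ n * ξ)) + ((ε ^ (2*n) * s) • v + W (ζ ^ (2*n) * ξ))
            = (a * (ε ^ n * s) + ε ^ (2*n) * s) • v + (a • W (ζ ^ n * ξ) + W (ζ ^ (2*n) * ξ))
            from by module,
          ← hWsmul a (ζ ^ n * ξ), ← hWadd, hident]
      refine ⟨a * (ε ^ n * s) + ε ^ (2*n) * s, ?_, by rw [← hcompute]; exact hx⟩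
      have he1 : ε ^ n ≤ ε ^ N := pow_le_pow_of_le_one hε0 hε1.le hnN
      have he2 : ε ^ (2*n) ≤ ε ^ N := pow_le_pow_of_le_one hε0 hε1.le (by omega)
      have he1' : 0 ≤ ε ^ n := pow_nonneg hε0 n
      have he2' : 0 ≤ ε ^ (2*n) := pow_nonneg hε0 (2*n)
      calc |a * (ε ^ n * s) + ε ^ (2*n) * s| ≤ |a * (ε ^ n * s)| + |ε ^ (2*n) * s| := abs_add_le _ _
        _ = a * ε ^ n * |s| + ε ^ (2*n) * |s| := by
            rw [abs_mul, abs_mul, abs_mul, _root_.abs_of_nonneg ha0, _root_.abs_of_nonneg he1',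
              _root_.abs_of_nonneg he2']; ring
        _ ≤ 2 * ε ^ N * |s| + ε ^ N * |s| := by
            have habs : 0 ≤ |s| := abs_nonneg s
            have : a * ε ^ n ≤ 2 * ε ^ N := by nlinarith
            nlinarith
        _ = 3 * ε ^ N * |s| := by ring
    constructor
    · rw [Metric.mem_closure_iff]
      intro δ hδ
      have htend : Tendsto (fun N : ℕ => 3 * ε ^ N * |s| * ‖v‖) atTop (nhds 0) := by
        have h1 := tendsto_pow_atTop_nhds_zero_of_lt_one hε0 hε1
        have := ((h1.const_mul 3).mul_const |s|).mul_const ‖v‖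
        simpa using this
      obtain ⟨N, hN⟩ := (htend.eventually (eventually_lt_nhds hδ)).exists
      obtain ⟨E, hE, hmem⟩ := main N
      refine ⟨E • v + W (-ξ), hmem, ?_⟩
      rw [dist_eq_norm, show W (-ξ) - (E • v + W (-ξ)) = (-E) • v by module, norm_smul]
      calc ‖(-E : ℝ)‖ * ‖v‖ = |E| * ‖v‖ := by rw [norm_neg, Real.norm_eq_abs]
        _ ≤ 3 * ε ^ N * |s| * ‖v‖ := by
            have := norm_nonneg v
            nlinarith
        _ < δ := hN
    · obtain ⟨E, _, hmem⟩ := main 0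
      exact ⟨E, hmem⟩
  -- apply twice
  have hc1 : (1:ℝ) • v + W 1 ∈ C := by
    simpa [hW] using hc
  obtain ⟨hnegw, s', hs'⟩ := hkey 1 1 hc1
  obtain ⟨hposw, -⟩ := hkey s' (-1) hs'
  have hW1 : W 1 = w := by simp [hW]
  have hWm1 : W (-1) = -w := by
    simp only [hW]
    rw [show (-1 : ℂ).re = -1 by simp, show (-1 : ℂ).im = 0 by simp]
    module
  rw [neg_neg, hW1] at hposw
  rw [hWm1] at hnegw
  -- construct forbidden line
  refine hline ⟨v + w, w, hw, fun t => ?_⟩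
  have h2t : (2*t) • w ∈ closure C := by
    rcases le_or_gt 0 t with ht | ht
    · exact hsmulD (2*t) (by linarith) w hposw
    · have := hsmulD (-(2*t)) (by linarith) (-w) hnegw
      convert this using 1
      module
  have hsum : (v + w) + (2*t) • w ∈ closure C := haddD _ (subset_closure hc) _ h2t
  have hint : v + w ∈ interior C := by rw [hopen.interior_eq]; exact hc
  have hmem := hconv.combo_interior_closure_mem_interior hint hsum
    (by norm_num : (0:ℝ) < 1/2) (by norm_num : (0:ℝ) ≤ 1/2) (by norm_num)
  rw [show (1/2 : ℝ) • (v + w) + (1/2 : ℝ) • ((v + w) + (2*t) • w) = (v + w) + t • w by module]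
    at hmem
  exact interior_subset hmem

set_option maxHeartbeats 3200000 in
/-- If `γ ∈ SL₃(ℝ)` preserves a properly convex open subset of `ℙ²(ℝ)` and has a non-real
eigenvalue, then the unique real eigenvalue of `γ` equals `1`. -/
theorem real_eigenvalue_eq_one_of_nonreal (A : Matrix (Fin 3) (Fin 3) ℝ) (hdet : A.det = 1)
    (C : Set (Fin 3 → ℝ)) (hC : IsProperConeR3 C) (hpres : PreservesConeR3 A C)
    (hnonreal : ∃ z ∈ ((A.charpoly).map (algebraMap ℝ ℂ)).roots, z.im ≠ 0) :
    ∀ z ∈ ((A.charpoly).map (algebraMap ℝ ℂ)).roots, z.im = 0 → z = 1 := by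
  intro z hz hzim
  obtain ⟨z₀, hz₀, hz₀im⟩ := hnonreal
  set p := (A.charpoly).map (algebraMap ℝ ℂ) with hp
  have hmonic : p.Monic := (Matrix.charpoly_monic A).map _
  have hpne : p ≠ 0 := hmonic.ne_zero
  have hdeg : p.natDegree = 3 := by
    rw [hp, (Matrix.charpoly_monic A).natDegree_map, Matrix.charpoly_natDegree_eq_dim,
      Fintype.card_fin]
  have hsplits : p.Splits := IsAlgClosed.splits _
  have hcard : Multiset.card p.roots = 3 := by
    rw [(Polynomial.splits_iff_card_roots).mp hsplits, hdeg]
  have haeval : ∀ ξ : ℂ, Polynomial.eval ξ p = Polynomial.aeval ξ A.charpoly := by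
    intro ξ
    rw [hp, Polynomial.eval_map, Polynomial.aeval_def]
  have hconjmem : (starRingEnd ℂ) z₀ ∈ p.roots := by
    rw [Polynomial.mem_roots'] at hz₀ ⊢
    refine ⟨hpne, ?_⟩
    show Polynomial.eval _ p = 0
    rw [haeval, Polynomial.aeval_conj, show (Polynomial.aeval z₀) A.charpoly
      = Polynomial.eval z₀ p from (haeval z₀).symm, hz₀.2]
    simp
  have hne0 : z₀ ≠ (starRingEnd ℂ) z₀ := by
    intro h
    exact hz₀im (Complex.conj_eq_iff_im.mp h.symm)
  obtain ⟨R₁, hR1⟩ := Multiset.exists_cons_of_mem hz₀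
  have hmem1 : (starRingEnd ℂ) z₀ ∈ R₁ := by
    rw [hR1, Multiset.mem_cons] at hconjmem
    exact hconjmem.resolve_left (Ne.symm hne0)
  obtain ⟨R₂, hR2⟩ := Multiset.exists_cons_of_mem hmem1
  have hcard2 : Multiset.card R₂ = 1 := by
    rw [hR1, hR2] at hcard
    simpa using hcard
  obtain ⟨r, hr⟩ := Multiset.card_eq_one.mp hcard2
  have hroots : p.roots = z₀ ::ₘ (starRingEnd ℂ) z₀ ::ₘ {r} := by rw [hR1, hR2, hr]
  have hfact : p = (X - Polynomial.C z₀) * ((X - Polynomial.C ((starRingEnd ℂ) z₀)) * (X - Polynomial.C r)) := by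
    have h := hsplits.eq_prod_roots_of_monic hmonic
    rw [hroots] at h
    simpa [Multiset.map_cons, Multiset.prod_cons] using h
  have hc0 : p.coeff 0 = -1 := by
    rw [hp, Polynomial.coeff_map]
    have hd := Matrix.det_eq_sign_charpoly_coeff A
    rw [hdet, Fintype.card_fin] at hd
    have : A.charpoly.coeff 0 = -1 := by
      have : ((-1:ℝ)) ^ 3 = -1 := by norm_num
      rw [this] at hd
      linarith
    rw [this]
    simp
  have hprod : z₀ * ((starRingEnd ℂ) z₀ * r) = 1 := by
    have h := congrArg (Polynomial.eval 0) hfact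
    rw [← Polynomial.coeff_zero_eq_eval_zero, hc0] at h
    simp only [Polynomial.eval_mul, Polynomial.eval_sub, Polynomial.eval_X, Polynomial.eval_C,
      zero_sub] at h
    linear_combination h
  have hzr : z = r := by
    rw [hroots, Multiset.mem_cons, Multiset.mem_cons, Multiset.mem_singleton] at hz
    rcases hz with h | h | h
    · exact absurd (h ▸ hzim) hz₀im
    · exfalso
      apply hz₀im
      have : z.im = -z₀.im := by rw [h]; simp
      rw [hzim] at this
      linarith
    · exact h

  rw [hzr]
  -- It suffices to show |z₀|² = 1
  suffices hns : Complex.normSq z₀ = 1 by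
    have hzz : z₀ * (starRingEnd ℂ) z₀ = 1 := by rw [Complex.mul_conj, hns]; simp
    have : r = 1 := by linear_combination hprod - r * hzz
    rw [this]
  by_contra hns
  set ρ2 := Complex.normSq z₀ with hρ2
  have hρ2pos : 0 < ρ2 := by
    apply Complex.normSq_pos.mpr
    intro h0
    rw [h0] at hz₀im
    simp at hz₀im
  set aa := z₀.re with haa
  set bb := z₀.im with hbb
  have hbb0 : bb ≠ 0 := hz₀im
  have hρr : ((ρ2 : ℝ) : ℂ) * r = 1 := by
    rw [hρ2, ← Complex.mul_conj]
    linear_combination hprod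
  have hρ2C : ((ρ2 : ℝ) : ℂ) ≠ 0 := by exact_mod_cast hρ2pos.ne'
  set lam := ρ2⁻¹ with hlam
  have hlampos : 0 < lam := by rw [hlam]; positivity
  have hrval : r = ((lam : ℝ) : ℂ) := by
    rw [hlam]
    push_cast
    field_simp
    linear_combination hρr
  -- real factorization of the characteristic polynomial
  have h2a : ((2 * aa : ℝ) : ℂ) = z₀ + (starRingEnd ℂ) z₀ := by
    rw [haa]; exact (Complex.add_conj z₀).symm
  have hρC : ((ρ2 : ℝ) : ℂ) = z₀ * (starRingEnd ℂ) z₀ := by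
    rw [hρ2]; exact (Complex.mul_conj z₀).symm
  have hcharfact : A.charpoly = (X - Polynomial.C lam) * (X ^ 2 - Polynomial.C (2 * aa) * X + Polynomial.C ρ2) := by
    apply Polynomial.map_injective (algebraMap ℝ ℂ) Complex.ofReal_injective
    have hmapr : Polynomial.map (algebraMap ℝ ℂ) ((X - Polynomial.C lam) * (X ^ 2 - Polynomial.C (2 * aa) * X + Polynomial.C ρ2))
        = (X - Polynomial.C ((lam : ℝ) : ℂ)) * (X ^ 2 - Polynomial.C ((2 * aa : ℝ) : ℂ) * X + Polynomial.C ((ρ2 : ℝ) : ℂ)) := by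
      simp [Polynomial.map_mul, Polynomial.map_sub, Polynomial.map_add, Polynomial.map_pow,
        Polynomial.map_X, Polynomial.map_C]
    rw [hmapr, ← hp, hfact, h2a, hρC, ← hrval, Polynomial.C_add, Polynomial.C_mul]
    ring
  -- Cayley–Hamilton
  have hCH : (A - lam • 1) * (A * A - (2 * aa) • A + ρ2 • 1) = 0 := by
    have hCH0 := Matrix.aeval_self_charpoly A
    rw [hcharfact] at hCH0
    have he : (Polynomial.aeval A) ((X - Polynomial.C lam) * (X ^ 2 - Polynomial.C (2 * aa) * X + Polynomial.C ρ2))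
        = (A - lam • 1) * (A * A - (2 * aa) • A + ρ2 • 1) := by
      simp only [_root_.map_mul, _root_.map_sub, _root_.map_add, Polynomial.aeval_X,
        Polynomial.aeval_C, map_pow, Algebra.algebraMap_eq_smul_one, pow_two, smul_mul_assoc,
        one_mul, smul_smul]
    rw [← he, hCH0]
  set Qc := A * A - (2 * aa) • A + ρ2 • (1 : Matrix (Fin 3) (Fin 3) ℝ) with hQc
  have hAQ : A * Qc = lam • Qc := by
    have h1 : (A - lam • 1) * Qc = 0 := hCH
    rw [sub_mul, smul_mul_assoc, one_mul, sub_eq_zero] at h1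
    exact h1
  set qlam := lam ^ 2 - 2 * aa * lam + ρ2 with hqlam
  have hρ2ab : ρ2 = aa ^ 2 + bb ^ 2 := by
    rw [hρ2, Complex.normSq_apply, haa, hbb]; ring
  have hqlam_pos : 0 < qlam := by
    have h1 : qlam = (lam - aa) ^ 2 + bb ^ 2 := by rw [hqlam, hρ2ab]; ring
    have h2 : 0 < bb ^ 2 := by positivity
    nlinarith [sq_nonneg (lam - aa)]
  have hQcApp : ∀ x : Fin 3 → ℝ,
      Qc.mulVec x = A.mulVec (A.mulVec x) - (2 * aa) • A.mulVec x + ρ2 • x := by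
    intro x
    rw [hQc, Matrix.add_mulVec, Matrix.sub_mulVec, Matrix.smul_mulVec,
      Matrix.smul_mulVec, Matrix.one_mulVec, Matrix.mulVec_mulVec]
  -- there is a vector not sent to qlam • itself by Qc
  have hxne : ∃ x₀ : Fin 3 → ℝ, Qc.mulVec x₀ ≠ qlam • x₀ := by
    by_contra hall
    push_neg at hall
    have hAeq : ∀ x, A.mulVec x = lam • x := by
      intro x
      have h1 : A.mulVec (Qc.mulVec x) = lam • Qc.mulVec x := by
        rw [Matrix.mulVec_mulVec, hAQ, Matrix.smul_mulVec]
      rw [hall x, Matrix.mulVec_smul, smul_comm lam qlam] at h1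
      exact smul_right_injective _ hqlam_pos.ne' h1
    have hAmat : A = lam • 1 := by
      ext i j
      have h2 := congrFun (hAeq (Pi.single j 1)) i
      simp only [Matrix.mulVec_single, Pi.smul_apply, MulOpposite.op_one, one_smul, Matrix.col_apply, mul_one, smul_eq_mul] at h2
      rw [Matrix.smul_apply, Matrix.one_apply, h2, Pi.single_apply, smul_eq_mul]
    have htrace1 : Matrix.trace A = 3 * lam := by
      rw [hAmat, Matrix.trace_smul, Matrix.trace_one]
      simp [smul_eq_mul, mul_comm]
    have htrace2 : Matrix.trace A = 2 * aa + lam := by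
      rw [Matrix.trace_eq_neg_charpoly_coeff, hcharfact, Fintype.card_fin]
      have hexp : (X - Polynomial.C lam) * (X ^ 2 - Polynomial.C (2 * aa) * X + Polynomial.C ρ2)
          = X ^ 3 - Polynomial.C (2 * aa + lam) * X ^ 2 + Polynomial.C (ρ2 + 2 * aa * lam) * X - Polynomial.C (ρ2 * lam) := by
        simp only [C_add, C_mul]
        ring
      rw [hexp]
      rw [Polynomial.coeff_sub, Polynomial.coeff_add, Polynomial.coeff_sub,
        Polynomial.coeff_C_mul, Polynomial.coeff_C_mul, Polynomial.coeff_X_pow,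
        Polynomial.coeff_X_pow, Polynomial.coeff_C, Polynomial.coeff_X]
      norm_num
    have hdet3 : lam ^ 3 = 1 := by
      rw [hAmat, Matrix.det_smul, Matrix.det_one, Fintype.card_fin] at hdet
      simpa using hdet
    have haalam : aa = lam := by linarith [htrace1.symm.trans htrace2]
    have hlamρ : lam * ρ2 = 1 := by rw [hlam]; field_simp
    have hbbsq : 0 < bb ^ 2 := by positivity
    nlinarith [mul_pos hlampos hbbsq]
  obtain ⟨x₀, hx₀⟩ := hxne
  obtain ⟨c₀, hc₀⟩ := hC.2.2.1
  obtain ⟨δ, hδpos, hball⟩ := Metric.isOpen_iff.mp hC.1 c₀ hc₀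
  obtain ⟨c, hcC, hLc⟩ : ∃ c, c ∈ C ∧ Qc.mulVec c ≠ qlam • c := by
    by_cases h : Qc.mulVec c₀ = qlam • c₀
    · set t := δ / (2 * (‖x₀‖ + 1)) with ht
      have hxnn : (0:ℝ) ≤ ‖x₀‖ := norm_nonneg x₀
      have htpos : 0 < t := by rw [ht]; positivity
      refine ⟨c₀ + t • x₀, ?_, ?_⟩
      · apply hball
        rw [Metric.mem_ball, dist_eq_norm, add_sub_cancel_left, norm_smul, Real.norm_eq_abs,
          abs_of_pos htpos]
        have hne1 : ‖x₀‖ + (1:ℝ) ≠ 0 := by positivity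
        have h5 : t * (‖x₀‖ + 1) = δ / 2 := by rw [ht]; field_simp
        calc t * ‖x₀‖ ≤ t * (‖x₀‖ + 1) := by nlinarith
          _ = δ / 2 := h5
          _ < δ := by linarith
      · intro hbad
        apply hx₀
        rw [Matrix.mulVec_add, Matrix.mulVec_smul, h, smul_add] at hbad
        have h2 := add_left_cancel hbad
        rw [smul_comm qlam t] at h2
        exact smul_right_injective _ htpos.ne' h2
    · exact ⟨c₀, hc₀, h⟩
  set u := qlam⁻¹ • Qc.mulVec c with hu
  set w := c - u with hwdef
  have hw : w ≠ 0 := by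
    rw [hwdef, sub_ne_zero]
    intro h
    apply hLc
    conv_rhs => rw [h]
    rw [hu, smul_inv_smul₀ hqlam_pos.ne']
  have hcw : u + w = c := by rw [hwdef]; abel
  have hAu : A.mulVec u = lam • u := by
    rw [hu, Matrix.mulVec_smul, Matrix.mulVec_mulVec, hAQ, Matrix.smul_mulVec,
      smul_comm]
  have hQu : Qc.mulVec u = qlam • u := by
    rw [hQcApp, hAu, Matrix.mulVec_smul, hAu, hqlam]
    module
  have hQw : Qc.mulVec w = 0 := by
    rw [hwdef, Matrix.mulVec_sub, hQu, hu, smul_inv_smul₀ hqlam_pos.ne', sub_self]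
  have hA2w : A.mulVec (A.mulVec w) = (2 * aa) • A.mulVec w - ρ2 • w := by
    have h0 := hQw
    rw [hQcApp, sub_add, sub_eq_zero] at h0
    exact h0
  set w' := bb⁻¹ • (A.mulVec w - aa • w) with hw'
  have hAw : A.mulVec w = aa • w + bb • w' := by
    rw [hw', smul_inv_smul₀ hbb0]
    abel
  have hab0 : aa ^ 2 + bb ^ 2 ≠ 0 := by positivity
  clear_value ρ2 aa bb lam qlam Qc u w w'
  have hAw' : A.mulVec w' = (-bb) • w + aa • w' := by
    rw [hw', Matrix.mulVec_smul, Matrix.mulVec_sub, Matrix.mulVec_smul, hA2w, hAw, hρ2ab]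
    match_scalars <;> field_simp [hab0] <;> ring
  have hz₀ne0 : z₀ ≠ 0 := by
    intro h0
    rw [hbb, h0] at hbb0
    simp at hbb0
  have hsq : ‖z₀‖ * ‖z₀‖ = ρ2 := by
    rw [hρ2, ← Complex.sq_norm]; ring
  have h3c : ((ρ2⁻¹ : ℝ) : ℂ) = ((ρ2 : ℝ) : ℂ)⁻¹ := by push_cast; ring
  have hzsq_ne : z₀ * z₀ ≠ ((ρ2 : ℝ) : ℂ) := by
    intro h
    rw [hρC] at h
    have h4 := mul_left_cancel₀ hz₀ne0 h
    exact hbb0 (by rw [hbb]; exact Complex.conj_eq_iff_im.mp h4.symm)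
  have hcmem : u + w ∈ C := by rw [hcw]; exact hcC
  rcases lt_or_gt_of_ne hns with hlt | hgt
  · -- case ρ2 < 1 : use A⁻¹
    have hdetu : IsUnit A.det := by rw [hdet]; exact isUnit_one
    have hAinv : A⁻¹ * A = 1 := Matrix.nonsing_inv_mul A hdetu
    have hIA : ∀ x : Fin 3 → ℝ, A⁻¹.mulVec (A.mulVec x) = x := by
      intro x; rw [Matrix.mulVec_mulVec, hAinv, Matrix.one_mulVec]
    have hAiu : A⁻¹.mulVec u = lam⁻¹ • u := by
      have h1 := hIA u
      rw [hAu, Matrix.mulVec_smul] at h1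
      calc A⁻¹.mulVec u = lam⁻¹ • (lam • A⁻¹.mulVec u) := by
            rw [inv_smul_smul₀ hlampos.ne']
        _ = lam⁻¹ • u := by rw [h1]
    have hAiw : A⁻¹.mulVec w = ρ2⁻¹ • (aa • w + (-bb) • w') := by
      have h2 : A.mulVec (ρ2⁻¹ • (aa • w + (-bb) • w')) = w := by
        rw [Matrix.mulVec_smul, Matrix.mulVec_add, Matrix.mulVec_smul, Matrix.mulVec_smul,
          hAw, hAw', hρ2ab]
        match_scalars <;> field_simp [hab0] <;> ring
      conv_lhs => rw [← h2, hIA]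
    have hAiw' : A⁻¹.mulVec w' = ρ2⁻¹ • (bb • w + aa • w') := by
      have h2 : A.mulVec (ρ2⁻¹ • (bb • w + aa • w')) = w' := by
        rw [Matrix.mulVec_smul, Matrix.mulVec_add, Matrix.mulVec_smul, Matrix.mulVec_smul,
          hAw, hAw', hρ2ab]
        match_scalars <;> field_simp [hab0] <;> ring
      conv_lhs => rw [← h2, hIA]
    set T : (Fin 3 → ℝ) →ₗ[ℝ] (Fin 3 → ℝ) := ρ2 • (A⁻¹ * A⁻¹).mulVecLin with hT
    have hTC : ⇑T '' C = C :=
      smul_lin_image _ C hC.2.2.2.1 (sq_pres A⁻¹ C (inv_pres A hdet C hpres)) hρ2pos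
    have hTapp : ∀ x, T x = ρ2 • (A⁻¹.mulVec (A⁻¹.mulVec x)) := by
      intro x
      rw [hT, LinearMap.smul_apply, Matrix.mulVecLin_apply, ← Matrix.mulVec_mulVec]
    set ζ : ℂ := ((starRingEnd ℂ) z₀ * (starRingEnd ℂ) z₀) * ((ρ2⁻¹ : ℝ) : ℂ) with hζdef
    have hre : ζ.re = (aa * aa - bb * bb) * ρ2⁻¹ := by
      rw [hζdef]
      simp only [Complex.mul_re, Complex.mul_im, Complex.ofReal_re, Complex.ofReal_im,
        Complex.conj_re, Complex.conj_im, ← haa, ← hbb]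
      ring
    have him : ζ.im = -(2 * aa * bb) * ρ2⁻¹ := by
      rw [hζdef]
      simp only [Complex.mul_re, Complex.mul_im, Complex.ofReal_re, Complex.ofReal_im,
        Complex.conj_re, Complex.conj_im, ← haa, ← hbb]
      ring
    have habs : ‖ζ‖ = 1 := by
      rw [hζdef, norm_mul, norm_mul, Complex.norm_conj, hsq,
        Complex.norm_real, Real.norm_eq_abs, _root_.abs_of_pos (inv_pos.mpr hρ2pos),
        mul_inv_cancel₀ hρ2pos.ne']
    have hζ1 : ζ ≠ 1 := by
      rw [hζdef]
      intro h
      apply hzsq_ne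
      have h2 := congrArg (starRingEnd ℂ) h
      simp only [_root_.map_mul, Complex.conj_conj, _root_.map_one, Complex.conj_ofReal] at h2
      rw [h3c] at h2
      field_simp [hρ2C] at h2
      rw [← pow_two]; exact h2
    have hε1 : ρ2 ^ 3 < 1 := pow_lt_one₀ hρ2pos.le hlt (by norm_num)
    have hTv : T u = (ρ2 ^ 3) • u := by
      rw [hTapp, hAiu, Matrix.mulVec_smul, hAiu, hlam]
      match_scalars
      field_simp
      try ring
    have hTw : T w = ζ.re • w + ζ.im • w' := by
      rw [hTapp, hAiw, Matrix.mulVec_smul, Matrix.mulVec_add, Matrix.mulVec_smul,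
        Matrix.mulVec_smul, hAiw, hAiw', hre, him, hρ2ab]
      match_scalars <;> field_simp [hab0] <;> ring
    have hTw' : T w' = (-ζ.im) • w + ζ.re • w' := by
      rw [hTapp, hAiw', Matrix.mulVec_smul, Matrix.mulVec_add, Matrix.mulVec_smul,
        Matrix.mulVec_smul, hAiw, hAiw', hre, him, hρ2ab]
      match_scalars <;> field_simp [hab0] <;> ring
    exact core_lemma C hC T hTC (ρ2 ^ 3) (by positivity) hε1 ζ habs hζ1 u w w' hw
      hTv hTw hTw' hcmem
  · -- case ρ2 > 1 : use A
    set T : (Fin 3 → ℝ) →ₗ[ℝ] (Fin 3 → ℝ) := ρ2⁻¹ • (A * A).mulVecLin with hT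
    have hTC : ⇑T '' C = C :=
      smul_lin_image _ C hC.2.2.2.1 (sq_pres A C hpres) (inv_pos.mpr hρ2pos)
    have hTapp : ∀ x, T x = ρ2⁻¹ • (A.mulVec (A.mulVec x)) := by
      intro x
      rw [hT, LinearMap.smul_apply, Matrix.mulVecLin_apply, ← Matrix.mulVec_mulVec]
    set ζ : ℂ := (z₀ * z₀) * ((ρ2⁻¹ : ℝ) : ℂ) with hζdef
    have hre : ζ.re = (aa * aa - bb * bb) * ρ2⁻¹ := by
      rw [hζdef]
      simp only [Complex.mul_re, Complex.mul_im, Complex.ofReal_re, Complex.ofReal_im,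
        Complex.conj_re, Complex.conj_im, ← haa, ← hbb]
      ring
    have him : ζ.im = (2 * aa * bb) * ρ2⁻¹ := by
      rw [hζdef]
      simp only [Complex.mul_re, Complex.mul_im, Complex.ofReal_re, Complex.ofReal_im,
        Complex.conj_re, Complex.conj_im, ← haa, ← hbb]
      ring
    have habs : ‖ζ‖ = 1 := by
      rw [hζdef, norm_mul, norm_mul, hsq, Complex.norm_real, Real.norm_eq_abs,
        _root_.abs_of_pos (inv_pos.mpr hρ2pos), mul_inv_cancel₀ hρ2pos.ne']
    have hζ1 : ζ ≠ 1 := by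
      rw [hζdef]
      intro h
      apply hzsq_ne
      rw [h3c] at h
      field_simp [hρ2C] at h
      rw [← pow_two]; exact h
    have hε1 : (ρ2⁻¹) ^ 3 < 1 :=
      pow_lt_one₀ (inv_pos.mpr hρ2pos).le (inv_lt_one_of_one_lt₀ hgt) (by norm_num)
    have hTv : T u = (ρ2⁻¹ ^ 3) • u := by
      rw [hTapp, hAu, Matrix.mulVec_smul, hAu, hlam]
      match_scalars
      ring
    have hTw : T w = ζ.re • w + ζ.im • w' := by
      rw [hTapp, hA2w, hAw, hre, him, hρ2ab]
      match_scalars <;> field_simp [hab0] <;> ring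
    have hTw' : T w' = (-ζ.im) • w + ζ.re • w' := by
      rw [hTapp, hAw', Matrix.mulVec_add, Matrix.mulVec_smul, Matrix.mulVec_smul, hAw, hAw',
        hre, him, hρ2ab]
      match_scalars <;> field_simp [hab0] <;> ring
    exact core_lemma C hC T hTC (ρ2⁻¹ ^ 3) (by positivity) hε1 ζ habs hζ1 u w w' hw
      hTv hTw hTw' hcmem
end

section
/- Let γ ∈ SL₃(ℝ) be a planar element, i.e. conjugate to diag(α, α, β) with α, β > 0, α²β = 1, α ≠ 1, preserving a properly convex open set Ω ⊆ ℙ²(ℝ). Then Ω is a triangle: one of its vertices is the fixed point p_γ corresponding to eigenvalue β, and the side opposite to p_γ lies in the line of fixed points corresponding to eigenvalue α. -/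
open Set

section Basics
variable {C : Set (Fin 3 → ℝ)}

lemma cone_add (hconv : Convex ℝ C) (hcone : ∀ v ∈ C, ∀ r : ℝ, 0 < r → r • v ∈ C)
    {x y : Fin 3 → ℝ} (hx : x ∈ C) (hy : y ∈ C) : x + y ∈ C := by
  have h := hconv hx hy (by norm_num : (0:ℝ) ≤ 1/2) (by norm_num : (0:ℝ) ≤ 1/2) (by norm_num)
  have h2 := hcone _ h 2 (by norm_num)
  convert h2 using 1
  module

lemma cl_smul (hcone : ∀ v ∈ C, ∀ r : ℝ, 0 < r → r • v ∈ C)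
    {r : ℝ} (hr : 0 < r) {x : Fin 3 → ℝ} (hx : x ∈ closure C) : r • x ∈ closure C := by
  have hcont : Continuous (fun v : Fin 3 → ℝ => r • v) := by continuity
  have h1 : (fun v : Fin 3 → ℝ => r • v) '' closure C ⊆ closure ((fun v : Fin 3 → ℝ => r • v) '' C) :=
    image_closure_subset_closure_image hcont
  have h2 : (fun v : Fin 3 → ℝ => r • v) '' C ⊆ C := by
    rintro _ ⟨v, hv, rfl⟩; exact hcone v hv r hr
  exact closure_mono h2 (h1 ⟨x, hx, rfl⟩)

lemma zero_mem_cl (hne : C.Nonempty) (hcone : ∀ v ∈ C, ∀ r : ℝ, 0 < r → r • v ∈ C) :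
    (0 : Fin 3 → ℝ) ∈ closure C := by
  obtain ⟨x₀, hx₀⟩ := hne
  have ht : Filter.Tendsto (fun n : ℕ => (1 / (n + 1) : ℝ) • x₀) Filter.atTop (nhds 0) := by
    have := tendsto_one_div_add_atTop_nhds_zero_nat (𝕜 := ℝ)
    have h := this.smul_const x₀
    simpa using h
  refine mem_closure_of_tendsto ht (Filter.Eventually.of_forall fun n => ?_)
  exact hcone _ hx₀ _ (by positivity)

lemma cl_add (hconv : Convex ℝ C) (hcone : ∀ v ∈ C, ∀ r : ℝ, 0 < r → r • v ∈ C)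
    {x y : Fin 3 → ℝ} (hx : x ∈ closure C) (hy : y ∈ closure C) : x + y ∈ closure C := by
  have h := hconv.closure hx hy (by norm_num : (0:ℝ) ≤ 1/2) (by norm_num : (0:ℝ) ≤ 1/2) (by norm_num)
  have h2 := cl_smul hcone (by norm_num : (0:ℝ) < 2) h
  convert h2 using 1
  module

lemma open_add_closure (hC : IsOpen C) (hconv : Convex ℝ C)
    (hcone : ∀ v ∈ C, ∀ r : ℝ, 0 < r → r • v ∈ C)
    {x y : Fin 3 → ℝ} (hx : x ∈ C) (hy : y ∈ closure C) : x + y ∈ C := by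
  obtain ⟨ε, hε, hball⟩ := Metric.isOpen_iff.1 hC x hx
  obtain ⟨y', hy', hd⟩ := Metric.mem_closure_iff.1 hy ε hε
  have h1 : x + (y - y') ∈ C := by
    apply hball
    simp only [Metric.mem_ball]
    have : dist (x + (y - y')) x = dist y y' := by
      rw [dist_eq_norm, dist_eq_norm]; ring_nf
    rw [this]; exact hd
  have := cone_add hconv hcone h1 hy'
  convert this using 1
  abel

lemma pointed_cl (hC : IsProperConeR3 C) {v : Fin 3 → ℝ}
    (hv : v ∈ closure C) (hv' : -v ∈ closure C) : v = 0 := by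
  obtain ⟨hopen, hconv, hne, hcone, hline⟩ := hC
  by_contra hv0
  obtain ⟨x₀, hx₀⟩ := hne
  apply hline
  refine ⟨x₀, v, hv0, fun t => ?_⟩
  rcases lt_trichotomy t 0 with ht | rfl | ht
  · have : t • v = (-t) • (-v) := by module
    rw [this]
    exact open_add_closure hopen hconv hcone hx₀ (cl_smul hcone (by linarith) hv')
  · simpa using hx₀
  · exact open_add_closure hopen hconv hcone hx₀ (cl_smul hcone ht hv)

end Basics

section Limits
variable {C : Set (Fin 3 → ℝ)} {a c : ℝ}

lemma inv_image (ha : 0 < a) (hc : 0 < c)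
    (hinv : (fun v : Fin 3 → ℝ => ![a * v 0, a * v 1, c * v 2]) '' C = C) :
    (fun v : Fin 3 → ℝ => ![a⁻¹ * v 0, a⁻¹ * v 1, c⁻¹ * v 2]) '' C = C := by
  conv_lhs => rw [← hinv]
  rw [← Set.image_comp]
  have : ((fun v : Fin 3 → ℝ => ![a⁻¹ * v 0, a⁻¹ * v 1, c⁻¹ * v 2]) ∘
      (fun v : Fin 3 → ℝ => ![a * v 0, a * v 1, c * v 2])) = id := by
    funext v
    funext i
    fin_cases i <;> simp <;> field_simp
  rw [this, Set.image_id]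

lemma limit_axis (ha : 0 < a) (hc : 0 < c) (hac : a < c)
    (hcone : ∀ v ∈ C, ∀ r : ℝ, 0 < r → r • v ∈ C)
    (hinv : (fun v : Fin 3 → ℝ => ![a * v 0, a * v 1, c * v 2]) '' C = C)
    {x : Fin 3 → ℝ} (hx : x ∈ C) : ![0, 0, x 2] ∈ closure C := by
  set q : ℝ := a / c with hq
  have hq0 : 0 < q := div_pos ha hc
  have hq1 : q < 1 := (div_lt_one hc).2 hac
  have hmem : ∀ n : ℕ, ![q ^ n * x 0, q ^ n * x 1, x 2] ∈ C := by
    intro n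
    induction n with
    | zero => convert hx using 1; funext i; fin_cases i <;> simp
    | succ n ih =>
      have h1 : ![a * (q ^ n * x 0), a * (q ^ n * x 1), c * x 2] ∈ C := by
        rw [← hinv]
        exact ⟨_, ih, by simp⟩
      have h2 := hcone _ h1 c⁻¹ (by positivity)
      convert h2 using 1
      have ha' : a ≠ 0 := ne_of_gt ha
      have hc' : c ≠ 0 := ne_of_gt hc
      funext i
      fin_cases i <;>
        simp [Pi.smul_apply, smul_eq_mul, hq] <;> field_simp <;> ring_nf <;> field_simp
  have htend : Filter.Tendsto (fun n : ℕ => ![q ^ n * x 0, q ^ n * x 1, x 2])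
      Filter.atTop (nhds ![0, 0, x 2]) := by
    rw [tendsto_pi_nhds]
    intro i
    fin_cases i
    · simpa using (tendsto_pow_atTop_nhds_zero_of_lt_one hq0.le hq1).mul_const (x 0)
    · simpa using (tendsto_pow_atTop_nhds_zero_of_lt_one hq0.le hq1).mul_const (x 1)
    · simpa using tendsto_const_nhds
  exact mem_closure_of_tendsto htend (Filter.Eventually.of_forall hmem)

lemma limit_plane (ha : 0 < a) (hc : 0 < c) (hac : a < c)
    (hcone : ∀ v ∈ C, ∀ r : ℝ, 0 < r → r • v ∈ C)
    (hinv : (fun v : Fin 3 → ℝ => ![a * v 0, a * v 1, c * v 2]) '' C = C)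
    {x : Fin 3 → ℝ} (hx : x ∈ C) : ![x 0, x 1, 0] ∈ closure C := by
  have hSinv := inv_image ha hc hinv
  set q : ℝ := a / c with hq
  have hq0 : 0 < q := div_pos ha hc
  have hq1 : q < 1 := (div_lt_one hc).2 hac
  have hmem : ∀ n : ℕ, ![x 0, x 1, q ^ n * x 2] ∈ C := by
    intro n
    induction n with
    | zero => convert hx using 1; funext i; fin_cases i <;> simp
    | succ n ih =>
      have h1 : ![a⁻¹ * x 0, a⁻¹ * x 1, c⁻¹ * (q ^ n * x 2)] ∈ C := by
        rw [← hSinv]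
        exact ⟨_, ih, by simp⟩
      have h2 := hcone _ h1 a ha
      convert h2 using 1
      have ha' : a ≠ 0 := ne_of_gt ha
      have hc' : c ≠ 0 := ne_of_gt hc
      funext i
      fin_cases i <;>
        simp [Pi.smul_apply, smul_eq_mul, hq] <;> field_simp <;> ring_nf <;> field_simp
  have htend : Filter.Tendsto (fun n : ℕ => ![x 0, x 1, q ^ n * x 2])
      Filter.atTop (nhds ![x 0, x 1, 0]) := by
    rw [tendsto_pi_nhds]
    intro i
    fin_cases i
    · simpa using tendsto_const_nhds
    · simpa using tendsto_const_nhds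
    · simpa using (tendsto_pow_atTop_nhds_zero_of_lt_one hq0.le hq1).mul_const (x 2)
  exact mem_closure_of_tendsto htend (Filter.Eventually.of_forall hmem)

end Limits

section Sign
variable {C : Set (Fin 3 → ℝ)} {a c : ℝ}

lemma axis_smul (hcone : ∀ v ∈ C, ∀ r : ℝ, 0 < r → r • v ∈ C) {s t : ℝ}
    (hs : ![0, 0, s] ∈ closure C) (ht : 0 < t) : ![0, 0, t * s] ∈ closure C := by
  have h := cl_smul hcone ht hs
  convert h using 1
  funext i; fin_cases i <;> simp

lemma norm_e3_le : ‖(![0, 0, 1] : Fin 3 → ℝ)‖ ≤ 1 := by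
  rw [pi_norm_le_iff_of_nonneg zero_le_one]
  intro i; fin_cases i <;> simp

lemma perturb_mem (hC : IsOpen C) {x : Fin 3 → ℝ} (hx : x ∈ C) {v : Fin 3 → ℝ}
    (hv : ‖v‖ ≤ 1) : ∃ ε : ℝ, 0 < ε ∧ ∀ r : ℝ, |r| < ε → x + r • v ∈ C := by
  obtain ⟨ε, hε, hball⟩ := Metric.isOpen_iff.1 hC x hx
  refine ⟨ε, hε, fun r hr => hball ?_⟩
  simp only [Metric.mem_ball]
  have : dist (x + r • v) x = ‖r • v‖ := by
    rw [dist_eq_norm]; ring_nf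
  rw [this, norm_smul]
  calc ‖r‖ * ‖v‖ ≤ ‖r‖ * 1 := by
        apply mul_le_mul_of_nonneg_left hv (norm_nonneg _)
    _ = |r| := by simp
    _ < ε := hr

lemma coord2_ne_zero (hC : IsProperConeR3 C) (ha : 0 < a) (hc : 0 < c) (hac : a < c)
    (hinv : (fun v : Fin 3 → ℝ => ![a * v 0, a * v 1, c * v 2]) '' C = C)
    {x : Fin 3 → ℝ} (hx : x ∈ C) : x 2 ≠ 0 := by
  obtain ⟨hopen, hconv, hne, hcone, hline⟩ := hC
  intro h0
  obtain ⟨ε, hε, hp⟩ := perturb_mem hopen hx norm_e3_le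
  have hp1 : x + (ε/2) • ![0,0,1] ∈ C := hp _ (by rw [abs_of_pos (by linarith)]; linarith)
  have hp2 : x + (-(ε/2)) • ![0,0,1] ∈ C := hp _ (by rw [abs_neg, abs_of_pos (by linarith)]; linarith)
  have h1 := limit_axis ha hc hac hcone hinv hp1
  have h2 := limit_axis ha hc hac hcone hinv hp2
  have e1 : (x + (ε/2) • (![0,0,1] : Fin 3 → ℝ)) 2 = ε/2 := by simp [h0]
  have e2 : (x + (-(ε/2)) • (![0,0,1] : Fin 3 → ℝ)) 2 = -(ε/2) := by simp [h0]
  rw [e1] at h1; rw [e2] at h2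
  have hneg : (![0, 0, -(ε/2)] : Fin 3 → ℝ) = -![0, 0, ε/2] := by
    funext i; fin_cases i <;> simp
  rw [hneg] at h2
  have := pointed_cl ⟨hopen, hconv, hne, hcone, hline⟩ h1 h2
  have := congrFun this 2
  simp at this
  linarith

lemma exists_sigma (hC : IsProperConeR3 C) (ha : 0 < a) (hc : 0 < c) (hac : a < c)
    (hinv : (fun v : Fin 3 → ℝ => ![a * v 0, a * v 1, c * v 2]) '' C = C) :
    ∃ σ : ℝ, (σ = 1 ∨ σ = -1) ∧ (∀ x ∈ C, 0 < σ * x 2) ∧ ![0, 0, σ] ∈ closure C := by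
  obtain ⟨hopen, hconv, hne, hcone, hline⟩ := hC
  obtain ⟨x₀, hx₀⟩ := hne
  have hC' : IsProperConeR3 C := ⟨hopen, hconv, ⟨x₀, hx₀⟩, hcone, hline⟩
  have key : ∀ x ∈ C, ∀ y ∈ C, 0 < x 2 → 0 < y 2 ∨ False → True := fun _ _ _ _ _ _ => trivial
  -- main: no two elements with opposite signs
  have opp : ∀ x ∈ C, ∀ y ∈ C, 0 < x 2 → y 2 < 0 → False := by
    intro x hx y hy hx2 hy2
    have h1 : ![0,0, x 2] ∈ closure C := limit_axis ha hc hac hcone hinv hx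
    have h2 : ![0,0, y 2] ∈ closure C := limit_axis ha hc hac hcone hinv hy
    have u1 : ![0,0,(1:ℝ)] ∈ closure C := by
      have := axis_smul hcone h1 (t := (x 2)⁻¹) (by positivity)
      rwa [inv_mul_cancel₀ (ne_of_gt hx2)] at this
    have u2 : ![0,0,(-1:ℝ)] ∈ closure C := by
      have := axis_smul hcone h2 (t := -(y 2)⁻¹) (neg_pos.mpr (inv_neg''.mpr hy2))
      have he : -(y 2)⁻¹ * y 2 = -1 := by
        rw [neg_mul, inv_mul_cancel₀ (ne_of_lt hy2)]
      rwa [he] at this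
    have hneg : (![0, 0, (-1:ℝ)] : Fin 3 → ℝ) = -![0, 0, 1] := by
      funext i; fin_cases i <;> simp
    rw [hneg] at u2
    have := pointed_cl hC' u1 u2
    have := congrFun this 2
    simp at this
  rcases lt_or_gt_of_ne (coord2_ne_zero hC' ha hc hac hinv hx₀) with hneg | hpos
  · refine ⟨-1, Or.inr rfl, fun x hx => ?_, ?_⟩
    · rcases lt_or_gt_of_ne (coord2_ne_zero hC' ha hc hac hinv hx) with h | h
      · nlinarith
      · exact absurd (opp x hx x₀ hx₀ h hneg) (fun h => h)
    · have h1 : ![0,0, x₀ 2] ∈ closure C := limit_axis ha hc hac hcone hinv hx₀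
      have := axis_smul hcone h1 (t := -(x₀ 2)⁻¹) (neg_pos.mpr (inv_neg''.mpr hneg))
      have he : -(x₀ 2)⁻¹ * x₀ 2 = -1 := by
        rw [neg_mul, inv_mul_cancel₀ (ne_of_lt hneg)]
      rwa [he] at this
  · refine ⟨1, Or.inl rfl, fun x hx => ?_, ?_⟩
    · rcases lt_or_gt_of_ne (coord2_ne_zero hC' ha hc hac hinv hx) with h | h
      · exact absurd (opp x₀ hx₀ x hx hpos h) (fun h => h)
      · nlinarith
    · have h1 : ![0,0, x₀ 2] ∈ closure C := limit_axis ha hc hac hcone hinv hx₀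
      have := axis_smul hcone h1 (t := (x₀ 2)⁻¹) (by positivity)
      rwa [inv_mul_cancel₀ (ne_of_gt hpos)] at this

end Sign

section Plane

lemma plane_decomp (x : Fin 3 → ℝ) (hx2 : x 2 = 0) :
    x = x 0 • ![1,0,0] + x 1 • ![0,1,0] := by
  funext i; fin_cases i <;> simp [hx2]

lemma plane_ker_rep (s t : ℝ) (hst : s^2 + t^2 ≠ 0) (y : Fin 3 → ℝ) (hy2 : y 2 = 0)
    (hker : s * y 0 + t * y 1 = 0) :
    y = ((t * y 0 - s * y 1)/(s^2+t^2)) • ![t, -s, 0] := by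
  funext i
  fin_cases i
  · show y 0 = ((t * y 0 - s * y 1)/(s^2+t^2)) * t
    field_simp
    linear_combination s * hker
  · show y 1 = ((t * y 0 - s * y 1)/(s^2+t^2)) * (-s)
    field_simp
    linear_combination t * hker
  · simpa using hy2

variable {K : Set (Fin 3 → ℝ)}

lemma sep_functional (hKcl : IsClosed K) (hKconv : Convex ℝ K)
    (hKcone : ∀ x ∈ K, ∀ r : ℝ, 0 ≤ r → r • x ∈ K) (hKne : K.Nonempty)
    {w : Fin 3 → ℝ} (hw : w ∉ K) :
    ∃ f : (Fin 3 → ℝ) →L[ℝ] ℝ, (∀ x ∈ K, 0 ≤ f x) ∧ f w < 0 := by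
  obtain ⟨f, u, hfw, hfK⟩ := geometric_hahn_banach_point_closed hKconv hKcl hw
  have h0 : (0 : Fin 3 → ℝ) ∈ K := by
    obtain ⟨x, hx⟩ := hKne
    simpa using hKcone x hx 0 le_rfl
  have hu : u < 0 := by simpa using hfK 0 h0
  refine ⟨f, fun x hx => ?_, hfw.trans hu⟩
  by_contra h
  push_neg at h
  have ht : 0 < (u - 1) / f x := by
    apply div_pos_of_neg_of_neg (by linarith) h
  have := hfK _ (hKcone x hx _ ht.le)
  rw [map_smul] at this
  simp only [smul_eq_mul] at this
  rw [div_mul_cancel₀ _ (ne_of_lt h)] at this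
  linarith

set_option maxHeartbeats 1000000 in
theorem plane_cone_struct (hKcl : IsClosed K) (hKconv : Convex ℝ K)
    (hKcone : ∀ x ∈ K, ∀ r : ℝ, 0 ≤ r → r • x ∈ K)
    (hKplane : ∀ x ∈ K, x 2 = 0)
    (hKpointed : ∀ x ∈ K, -x ∈ K → x = 0)
    {k₀ : Fin 3 → ℝ} {δ : ℝ} (hk₀ : k₀ ∈ K) (hδ : 0 < δ)
    (hball : ∀ r : ℝ, |r| ≤ δ → ∀ v : Fin 3 → ℝ, v 2 = 0 → ‖v‖ ≤ 1 → k₀ + r • v ∈ K) :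
    ∃ b₁ b₂ : Fin 3 → ℝ, b₁ 2 = 0 ∧ b₂ 2 = 0 ∧
      (∀ g₁ g₂ : ℝ, g₁ • b₁ + g₂ • b₂ = 0 → g₁ = 0 ∧ g₂ = 0) ∧
      K = {x | ∃ c₁ c₂ : ℝ, 0 ≤ c₁ ∧ 0 ≤ c₂ ∧ x = c₁ • b₁ + c₂ • b₂} := by
  have hKne : K.Nonempty := ⟨k₀, hk₀⟩
  -- k₀ ≠ 0
  have hk₀ne : k₀ ≠ 0 := by
    intro h
    have h1 : k₀ + δ • ![1,0,0] ∈ K := hball δ (by rw [abs_of_pos hδ]) _ (by simp)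
      (by rw [pi_norm_le_iff_of_nonneg zero_le_one]; intro i; fin_cases i <;> simp)
    have h2 : k₀ + (-δ) • ![1,0,0] ∈ K := hball (-δ) (by rw [abs_neg, abs_of_pos hδ]) _ (by simp)
      (by rw [pi_norm_le_iff_of_nonneg zero_le_one]; intro i; fin_cases i <;> simp)
    rw [h] at h1 h2
    have hneg : ((0 : Fin 3 → ℝ) + (-δ) • ![1,0,0]) = -((0 : Fin 3 → ℝ) + δ • ![1,0,0]) := by
      funext i; fin_cases i <;> simp
    rw [hneg] at h2
    have := hKpointed _ h1 h2
    have := congrFun this 0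
    simp at this
    linarith
  -- first functional
  have hnk₀ : -k₀ ∉ K := fun h => hk₀ne (hKpointed _ hk₀ h)
  obtain ⟨f₁, hf₁K, hf₁w⟩ := sep_functional hKcl hKconv hKcone hKne hnk₀
  have hf₁k₀ : 0 < f₁ k₀ := by
    rw [map_neg] at hf₁w; linarith
  -- f on plane
  have fplane : ∀ (f : (Fin 3 → ℝ) →L[ℝ] ℝ), ∀ x : Fin 3 → ℝ, x 2 = 0 →
      f x = x 0 * f ![1,0,0] + x 1 * f ![0,1,0] := by
    intro f x hx2
    conv_lhs => rw [plane_decomp x hx2]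
    rw [map_add, map_smul, map_smul]
    simp [smul_eq_mul]
  -- second functional
  set s₁ : ℝ := f₁ ![1,0,0] with hs₁
  set t₁' : ℝ := f₁ ![0,1,0] with ht₁'
  have hst₁ : s₁^2 + t₁'^2 ≠ 0 := by
    intro h
    have hs : s₁ = 0 := by nlinarith [sq_nonneg s₁, sq_nonneg t₁']
    have ht : t₁' = 0 := by nlinarith [sq_nonneg s₁, sq_nonneg t₁']
    have := fplane f₁ k₀ (hKplane _ hk₀)
    rw [← hs₁, ← ht₁', hs, ht] at this
    simp at this
    linarith
  set w₀ : Fin 3 → ℝ := ![t₁', -s₁, 0] with hw₀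
  have hw₀ne : w₀ ≠ 0 := by
    intro h
    have h0 := congrFun h 0
    have h1 := congrFun h 1
    simp [hw₀] at h0 h1
    apply hst₁
    rw [h0, h1]; ring
  have hf₂ : ∃ f₂ : (Fin 3 → ℝ) →L[ℝ] ℝ, (∀ x ∈ K, 0 ≤ f₂ x) ∧ f₂ w₀ ≠ 0 := by
    by_cases hw : w₀ ∈ K
    · have hnw : -w₀ ∉ K := fun h => hw₀ne (hKpointed _ hw h)
      obtain ⟨f₂, h1, h2⟩ := sep_functional hKcl hKconv hKcone hKne hnw
      rw [map_neg] at h2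
      exact ⟨f₂, h1, by linarith⟩
    · obtain ⟨f₂, h1, h2⟩ := sep_functional hKcl hKconv hKcone hKne hw
      exact ⟨f₂, h1, ne_of_lt h2⟩
  obtain ⟨f₂, hf₂K, hf₂w⟩ := hf₂
  set f : (Fin 3 → ℝ) →L[ℝ] ℝ := f₁ + f₂ with hf
  have hfK : ∀ x ∈ K, 0 ≤ f x := fun x hx => by
    simp only [hf, ContinuousLinearMap.add_apply]
    exact add_nonneg (hf₁K x hx) (hf₂K x hx)
  -- strict positivity
  have hfpos : ∀ x ∈ K, x ≠ 0 → 0 < f x := by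
    intro x hx hxne
    rcases (hfK x hx).lt_or_eq with h | h
    · exact h
    exfalso
    have h1 : f₁ x = 0 ∧ f₂ x = 0 := by
      have e : f₁ x + f₂ x = 0 := by
        have := h.symm
        simpa [hf, ContinuousLinearMap.add_apply] using this
      constructor <;> [skip; skip] <;>
        · have := hf₁K x hx; have := hf₂K x hx; linarith
    have hker : s₁ * x 0 + t₁' * x 1 = 0 := by
      have := fplane f₁ x (hKplane _ hx)
      rw [← hs₁, ← ht₁'] at this
      rw [h1.1] at this
      linarith [this]
    have hrep := plane_ker_rep s₁ t₁' hst₁ x (hKplane _ hx) hker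
    rw [← hw₀] at hrep
    have hf₂x : f₂ x = ((t₁' * x 0 - s₁ * x 1)/(s₁^2+t₁'^2)) * f₂ w₀ := by
      conv_lhs => rw [hrep]
      rw [map_smul]; simp [smul_eq_mul]
    rw [h1.2] at hf₂x
    have hcoef : (t₁' * x 0 - s₁ * x 1)/(s₁^2+t₁'^2) = 0 := by
      rcases mul_eq_zero.1 hf₂x.symm with h | h
      · exact h
      · exact absurd h hf₂w
    rw [hcoef, zero_smul] at hrep
    exact hxne hrep
  -- addition in K
  have hKadd : ∀ x ∈ K, ∀ y ∈ K, x + y ∈ K := by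
    intro x hx y hy
    have h := hKconv hx hy (by norm_num : (0:ℝ) ≤ 1/2) (by norm_num : (0:ℝ) ≤ 1/2) (by norm_num)
    have h2 := hKcone _ h 2 (by norm_num)
    convert h2 using 1
    module
  -- minimum of f on the unit sphere of K
  set S : Set (Fin 3 → ℝ) := K ∩ {x | ‖x‖ = 1} with hSdef
  have hScl : IsClosed S := hKcl.inter (isClosed_eq continuous_norm continuous_const)
  have hScomp : IsCompact S := by
    refine (isCompact_closedBall (0 : Fin 3 → ℝ) 1).of_isClosed_subset hScl ?_
    intro x hx
    rw [Metric.mem_closedBall, dist_zero_right]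
    exact le_of_eq hx.2
  have hSne : S.Nonempty := by
    refine ⟨‖k₀‖⁻¹ • k₀, hKcone _ hk₀ _ (by positivity), ?_⟩
    have hn : ‖k₀‖ ≠ 0 := norm_ne_zero_iff.2 hk₀ne
    show ‖‖k₀‖⁻¹ • k₀‖ = 1
    rw [norm_smul, norm_inv, norm_norm, inv_mul_cancel₀ hn]
  obtain ⟨xm, hxmS, hxmin⟩ := hScomp.exists_isMinOn hSne (f.continuous.continuousOn)
  set m : ℝ := f xm with hm
  have hmpos : 0 < m := by
    apply hfpos _ hxmS.1
    intro h
    rw [h] at hxmS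
    simpa using hxmS.2
  have hlow : ∀ x ∈ K, m * ‖x‖ ≤ f x := by
    intro x hx
    by_cases hx0 : x = 0
    · simp [hx0]
    · have hn : (0:ℝ) < ‖x‖ := norm_pos_iff.2 hx0
      have hu : ‖x‖⁻¹ • x ∈ S := by
        refine ⟨hKcone _ hx _ (by positivity), ?_⟩
        show ‖‖x‖⁻¹ • x‖ = 1
        rw [norm_smul, norm_inv, norm_norm, inv_mul_cancel₀ (ne_of_gt hn)]
      have := hxmin hu
      simp only [Set.mem_setOf_eq, map_smul, smul_eq_mul] at this
      have h2 : m * ‖x‖ ≤ (‖x‖⁻¹ * f x) * ‖x‖ := by nlinarith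
      rw [inv_mul_eq_div, div_mul_eq_mul_div, mul_comm, mul_div_assoc,
        div_self (ne_of_gt hn), mul_one] at h2
      linarith
  -- the slice B
  set B : Set (Fin 3 → ℝ) := K ∩ {x | f x = 1} with hBdef
  have hBcl : IsClosed B := hKcl.inter (isClosed_eq f.continuous continuous_const)
  have hBcomp : IsCompact B := by
    refine (isCompact_closedBall (0 : Fin 3 → ℝ) m⁻¹).of_isClosed_subset hBcl ?_
    intro x hx
    rw [Metric.mem_closedBall, dist_zero_right]
    have h1 : m * ‖x‖ ≤ 1 := by
      have := hlow x hx.1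
      rw [hx.2] at this
      exact this
    have : ‖x‖ ≤ 1 / m := by rw [le_div_iff₀ hmpos]; linarith
    simpa [one_div] using this
  have hBconv : Convex ℝ B := by
    intro x hx y hy p q hp hq hpq
    refine ⟨hKconv hx.1 hy.1 hp hq hpq, ?_⟩
    show f (p • x + q • y) = 1
    rw [map_add, map_smul, map_smul, hx.2, hy.2]
    simp only [smul_eq_mul, mul_one]
    exact hpq
  have hfk₀ : 0 < f k₀ := hfpos k₀ hk₀ hk₀ne
  set k₁ : Fin 3 → ℝ := (f k₀)⁻¹ • k₀ with hk₁def
  have hk₁B : k₁ ∈ B := by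
    refine ⟨hKcone _ hk₀ _ (by positivity), ?_⟩
    show f ((f k₀)⁻¹ • k₀) = 1
    rw [map_smul]
    simp only [smul_eq_mul]
    exact inv_mul_cancel₀ (ne_of_gt hfk₀)
  -- the direction d and coordinate τ
  set s₂ : ℝ := f ![1,0,0] with hs₂
  set t₂ : ℝ := f ![0,1,0] with ht₂
  have hfx_plane : ∀ x : Fin 3 → ℝ, x 2 = 0 → f x = x 0 * s₂ + x 1 * t₂ := by
    intro x hx2
    rw [hs₂, ht₂]
    exact fplane f x hx2
  have hst₂ : s₂^2 + t₂^2 ≠ 0 := by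
    intro h
    have hq1 := sq_nonneg s₂
    have hq2 := sq_nonneg t₂
    have hs : s₂ = 0 := by
      have hz : s₂^2 = 0 := by linarith
      exact (pow_eq_zero_iff (by norm_num)).1 hz
    have ht : t₂ = 0 := by
      have hz : t₂^2 = 0 := by linarith
      exact (pow_eq_zero_iff (by norm_num)).1 hz
    have := hfx_plane k₀ (hKplane _ hk₀)
    rw [hs, ht] at this
    simp at this
    linarith
  set d : Fin 3 → ℝ := ![t₂, -s₂, 0] with hd
  set τ : (Fin 3 → ℝ) → ℝ := fun x => (t₂ * x 0 - s₂ * x 1)/(s₂^2+t₂^2) with hτ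
  have hτcont : Continuous τ := by
    apply Continuous.div_const
    exact (continuous_const.mul (continuous_apply 0)).sub
      (continuous_const.mul (continuous_apply 1))
  have hτadd : ∀ x y : Fin 3 → ℝ, τ (x + y) = τ x + τ y := by
    intro x y
    simp only [hτ, Pi.add_apply]
    ring
  have hτsmul : ∀ (r : ℝ) (x : Fin 3 → ℝ), τ (r • x) = r * τ x := by
    intro r x
    simp only [hτ, Pi.smul_apply, smul_eq_mul]
    ring
  have hτd : τ d = 1 := by
    simp only [hτ, hd]
    show (t₂ * t₂ - s₂ * (-s₂)) / (s₂ ^ 2 + t₂ ^ 2) = 1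
    field_simp
    ring
  have hdne : d ≠ 0 := by
    intro h
    rw [h] at hτd
    simp only [hτ, Pi.zero_apply, mul_zero, sub_zero, zero_div] at hτd
    norm_num at hτd
  have hd2 : d 2 = 0 := by simp [hd]
  have hfd : f d = 0 := by
    rw [hfx_plane d hd2]
    simp [hd]
    ring
  -- every element of B lies on the line k₁ + ℝ d
  have hBrep : ∀ x ∈ B, x = k₁ + (τ x - τ k₁) • d := by
    intro x hx
    have hy2 : (x - k₁) 2 = 0 := by
      simp [Pi.sub_apply, hKplane _ hx.1, hKplane _ hk₁B.1]
    have hfy : f (x - k₁) = 0 := by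
      rw [map_sub, hx.2, hk₁B.2]
      norm_num
    have hker : s₂ * (x - k₁) 0 + t₂ * (x - k₁) 1 = 0 := by
      have := hfx_plane (x - k₁) hy2
      rw [hfy] at this
      linarith
    have hrep := plane_ker_rep s₂ t₂ hst₂ (x - k₁) hy2 hker
    have hτxy : (t₂ * (x - k₁) 0 - s₂ * (x - k₁) 1)/(s₂^2+t₂^2) = τ x - τ k₁ := by
      simp only [hτ, Pi.sub_apply]
      ring
    rw [hτxy] at hrep
    rw [← hd] at hrep
    have : x - k₁ = (τ x - τ k₁) • d := hrep
    linear_combination (norm := module) this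
  -- the interval of τ values on B
  set TB : Set ℝ := (fun x => τ x - τ k₁) '' B with hTB
  have hTBcomp : IsCompact TB := hBcomp.image (hτcont.sub continuous_const)
  have hTBne : TB.Nonempty := ⟨0, k₁, hk₁B, by simp⟩
  set t1 : ℝ := sInf TB with ht1def
  set t2v : ℝ := sSup TB with ht2def
  obtain ⟨x1, hx1B, hx1τ⟩ := hTBcomp.sInf_mem hTBne
  obtain ⟨x2, hx2B, hx2τ⟩ := hTBcomp.sSup_mem hTBne
  set b₁ : Fin 3 → ℝ := k₁ + t1 • d with hb₁def
  set b₂ : Fin 3 → ℝ := k₁ + t2v • d with hb₂def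
  have hb₁B : b₁ ∈ B := by
    have h := hBrep x1 hx1B
    have h' : τ x1 - τ k₁ = t1 := by rw [ht1def]; exact hx1τ
    rw [h'] at h
    rw [hb₁def, ← h]
    exact hx1B
  have hb₂B : b₂ ∈ B := by
    have h := hBrep x2 hx2B
    have h' : τ x2 - τ k₁ = t2v := by rw [ht2def]; exact hx2τ
    rw [h'] at h
    rw [hb₂def, ← h]
    exact hx2B
  -- strict inequality t1 < t2v
  have hρpos : (0:ℝ) < δ / (‖d‖ + 1) := by positivity
  set ρ : ℝ := δ / (‖d‖ + 1) with hρ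
  have hdK : ∀ e : ℝ, e = 1 ∨ e = -1 → k₀ + (e * ρ) • d ∈ K := by
    intro e he
    have hv2 : ((‖d‖ + 1)⁻¹ • d) 2 = 0 := by simp [hd2]
    have hvn : ‖(‖d‖ + 1)⁻¹ • d‖ ≤ 1 := by
      rw [norm_smul, norm_inv, Real.norm_of_nonneg (by positivity : (0:ℝ) ≤ ‖d‖ + 1)]
      rw [inv_mul_le_iff₀ (by positivity)]
      linarith [norm_nonneg d]
    have habs : |e * δ| ≤ δ := by
      rcases he with rfl | rfl <;> simp [abs_of_pos hδ, abs_of_neg, hδ.le]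
    have h := hball (e * δ) habs _ hv2 hvn
    convert h using 2
    rw [smul_smul]
    congr 1
    rw [hρ]
    field_simp
  have hxp : (f k₀)⁻¹ • (k₀ + ρ • d) ∈ B := by
    have hk : k₀ + (1 * ρ) • d ∈ K := hdK 1 (Or.inl rfl)
    rw [one_mul] at hk
    refine ⟨hKcone _ hk _ (by positivity), ?_⟩
    show f _ = 1
    rw [map_smul, map_add, map_smul, hfd]
    simp only [smul_eq_mul, mul_zero, add_zero]
    exact inv_mul_cancel₀ (ne_of_gt hfk₀)
  have hxm : (f k₀)⁻¹ • (k₀ + (-ρ) • d) ∈ B := by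
    have hk : k₀ + ((-1) * ρ) • d ∈ K := hdK (-1) (Or.inr rfl)
    rw [neg_one_mul] at hk
    refine ⟨hKcone _ hk _ (by positivity), ?_⟩
    show f _ = 1
    rw [map_smul, map_add, map_smul, hfd]
    simp only [smul_eq_mul, mul_zero, add_zero]
    exact inv_mul_cancel₀ (ne_of_gt hfk₀)
  have hτval : ∀ e : ℝ, τ ((f k₀)⁻¹ • (k₀ + e • d)) - τ k₁ = e * (f k₀)⁻¹ := by
    intro e
    rw [hτsmul, hτadd, hτsmul, hτd, hk₁def, hτsmul]
    ring
  have ht1le : t1 ≤ -(ρ * (f k₀)⁻¹) := by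
    have hmem : -(ρ * (f k₀)⁻¹) ∈ TB := by
      refine ⟨_, hxm, ?_⟩
      show τ ((f k₀)⁻¹ • (k₀ + (-ρ) • d)) - τ k₁ = -(ρ * (f k₀)⁻¹)
      rw [hτval (-ρ)]
      ring
    exact csInf_le hTBcomp.bddBelow hmem
  have ht2ge : ρ * (f k₀)⁻¹ ≤ t2v := by
    have hmem : ρ * (f k₀)⁻¹ ∈ TB := ⟨_, hxp, hτval ρ⟩
    exact le_csSup hTBcomp.bddAbove hmem
  have ht12 : t1 < t2v := by
    have h : (0:ℝ) < ρ * (f k₀)⁻¹ := by positivity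
    linarith
  -- linear independence of b₁, b₂
  have hb12 : ∀ g₁ g₂ : ℝ, g₁ • b₁ + g₂ • b₂ = 0 → g₁ = 0 ∧ g₂ = 0 := by
    intro g₁ g₂ hg
    have hfg : g₁ + g₂ = 0 := by
      have := congrArg f hg
      rw [map_add, map_smul, map_smul, hb₁B.2, hb₂B.2, map_zero] at this
      simpa using this
    have hcombo : g₁ • b₁ + g₂ • b₂ = (g₁ + g₂) • k₁ + (g₁ * t1 + g₂ * t2v) • d := by
      rw [hb₁def, hb₂def]
      module
    rw [hfg, zero_smul, zero_add] at hcombo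
    rw [hcombo] at hg
    have hcoef : g₁ * t1 + g₂ * t2v = 0 := by
      rcases smul_eq_zero.1 hg with h | h
      · exact h
      · exact absurd h hdne
    have hg2 : g₂ = -g₁ := by linarith
    rw [hg2] at hcoef
    have : g₁ * (t1 - t2v) = 0 := by linarith
    rcases mul_eq_zero.1 this with h | h
    · exact ⟨h, by rw [hg2, h, neg_zero]⟩
    · exfalso; have : t1 = t2v := by linarith
      linarith
  -- characterization of K
  refine ⟨b₁, b₂, hKplane _ hb₁B.1, hKplane _ hb₂B.1, hb12, ?_⟩
  ext x
  constructor
  · intro hx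
    by_cases hx0 : x = 0
    · exact ⟨0, 0, le_rfl, le_rfl, by simp [hx0]⟩
    have hfx : 0 < f x := hfpos x hx hx0
    set x' : Fin 3 → ℝ := (f x)⁻¹ • x with hx'def
    have hx'B : x' ∈ B := by
      refine ⟨hKcone _ hx _ (by positivity), ?_⟩
      show f ((f x)⁻¹ • x) = 1
      rw [map_smul]
      simp only [smul_eq_mul]
      exact inv_mul_cancel₀ (ne_of_gt hfx)
    set θ : ℝ := τ x' - τ k₁ with hθdef
    have hθTB : θ ∈ TB := ⟨x', hx'B, rfl⟩
    have hθ1 : t1 ≤ θ := csInf_le hTBcomp.bddBelow hθTB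
    have hθ2 : θ ≤ t2v := le_csSup hTBcomp.bddAbove hθTB
    have hx'rep : x' = k₁ + θ • d := hBrep x' hx'B
    set μ : ℝ := t2v - t1 with hμdef
    have hμpos : 0 < μ := by rw [hμdef]; linarith
    have hμne : μ ≠ 0 := ne_of_gt hμpos
    have h1 : (t2v - θ)/μ + (θ - t1)/μ = 1 := by
      rw [← add_div]
      have he : (t2v - θ) + (θ - t1) = μ := by rw [hμdef]; ring
      rw [he, div_self hμne]
    have h2 : ((t2v - θ)/μ) * t1 + ((θ - t1)/μ) * t2v = θ := by
      rw [div_mul_eq_mul_div, div_mul_eq_mul_div, ← add_div]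
      have he : (t2v - θ) * t1 + (θ - t1) * t2v = θ * μ := by rw [hμdef]; ring
      rw [he, mul_div_assoc, div_self hμne, mul_one]
    have hcombo : ((t2v - θ)/μ) • b₁ + ((θ - t1)/μ) • b₂ =
        ((t2v - θ)/μ + (θ - t1)/μ) • k₁ + (((t2v - θ)/μ) * t1 + ((θ - t1)/μ) * t2v) • d := by
      rw [hb₁def, hb₂def]
      module
    rw [h1, h2, one_smul] at hcombo
    refine ⟨f x * ((t2v - θ)/μ), f x * ((θ - t1)/μ),
      mul_nonneg hfx.le (div_nonneg (by linarith) hμpos.le),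
      mul_nonneg hfx.le (div_nonneg (by linarith) hμpos.le), ?_⟩
    have hxx' : x = (f x) • x' := by
      rw [hx'def, smul_smul, mul_inv_cancel₀ (ne_of_gt hfx), one_smul]
    conv_lhs => rw [hxx']
    rw [hx'rep, ← hcombo]
    module
  · rintro ⟨c₁, c₂, hc₁, hc₂, rfl⟩
    exact hKadd _ (hKcone _ hb₁B.1 _ hc₁) _ (hKcone _ hb₂B.1 _ hc₂)

end Plane

section Core

lemma open_convex_eq_interior_closure {C : Set (Fin 3 → ℝ)} (hopen : IsOpen C)
    (hconv : Convex ℝ C) (hne : C.Nonempty) : C = interior (closure C) := by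
  apply Set.Subset.antisymm
  · exact interior_maximal subset_closure hopen
  · intro x hx
    obtain ⟨y, hy⟩ := hne
    set U := interior (closure C) with hU
    have hUopen : IsOpen U := isOpen_interior
    have hg : Continuous (fun δ : ℝ => x + δ • (x - y)) :=
      continuous_const.add (continuous_id.smul continuous_const)
    have hev : ∀ᶠ δ : ℝ in nhds 0, x + δ • (x - y) ∈ U := by
      have h0 : x + (0:ℝ) • (x - y) = x := by simp
      have := hg.continuousAt (x := (0:ℝ))
      rw [ContinuousAt, h0] at this
      exact this (hUopen.mem_nhds hx)
    obtain ⟨ε, hε, hball⟩ := Metric.eventually_nhds_iff.1 hev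
    set δ : ℝ := ε / 2 with hδ
    have hδpos : 0 < δ := by positivity
    have hgδ : x + δ • (x - y) ∈ closure C := by
      have : dist δ (0:ℝ) < ε := by
        rw [Real.dist_eq, sub_zero, abs_of_pos hδpos]
        rw [hδ]; linarith
      exact interior_subset (hball this)
    have h1δ : (0:ℝ) < 1 + δ := by linarith
    have hcombo := hconv.combo_interior_closure_mem_interior
      (x := y) (y := x + δ • (x - y)) (a := δ / (1 + δ)) (b := 1 / (1 + δ))
      (by rwa [hopen.interior_eq]) hgδ (by positivity) (by positivity)
      (by field_simp <;> ring)
    rw [hopen.interior_eq] at hcombo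
    have heq : (δ / (1 + δ)) • y + (1 / (1 + δ)) • (x + δ • (x - y)) = x := by
      match_scalars <;> field_simp <;> ring
    rwa [heq] at hcombo

theorem core' {C : Set (Fin 3 → ℝ)} {a c : ℝ} (ha : 0 < a) (hc : 0 < c) (hac : a < c)
    (hC : IsProperConeR3 C)
    (hinv : (fun v : Fin 3 → ℝ => ![a * v 0, a * v 1, c * v 2]) '' C = C) :
    ∃ b₁ b₂ b₃ : Fin 3 → ℝ, b₁ 2 = 0 ∧ b₂ 2 = 0 ∧ b₃ 0 = 0 ∧ b₃ 1 = 0 ∧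
      LinearIndependent ℝ ![b₁, b₂, b₃] ∧
      C = {v | ∃ c₁ c₂ c₃ : ℝ, 0 < c₁ ∧ 0 < c₂ ∧ 0 < c₃ ∧
        v = c₁ • b₁ + c₂ • b₂ + c₃ • b₃} := by
  obtain ⟨hopen, hconv, hne, hcone, hline⟩ := hC
  have hC' : IsProperConeR3 C := ⟨hopen, hconv, hne, hcone, hline⟩
  obtain ⟨σ, hσpm, hσ, hσcl⟩ := exists_sigma hC' ha hc hac hinv
  have hσne : σ ≠ 0 := by rcases hσpm with rfl | rfl <;> norm_num
  have hσ2 : σ * σ = 1 := by rcases hσpm with rfl | rfl <;> norm_num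
  -- the planar cone K
  set K : Set (Fin 3 → ℝ) := closure C ∩ {x | x 2 = 0} with hK
  have hKcl : IsClosed K := isClosed_closure.inter (isClosed_eq (continuous_apply 2) continuous_const)
  have hKconv : Convex ℝ K := by
    apply Convex.inter hconv.closure
    intro x hx y hy p q hp hq hpq
    show (p • x + q • y) 2 = 0
    simp only [Pi.add_apply, Pi.smul_apply, smul_eq_mul]
    rw [Set.mem_setOf_eq.mp hx, Set.mem_setOf_eq.mp hy]
    ring
  have hKcone : ∀ x ∈ K, ∀ r : ℝ, 0 ≤ r → r • x ∈ K := by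
    intro x hx r hr
    rcases hr.lt_or_eq with h | h
    · refine ⟨cl_smul hcone h hx.1, ?_⟩
      show (r • x) 2 = 0
      simp only [Pi.smul_apply, smul_eq_mul, show x 2 = 0 from hx.2, mul_zero]
    · rw [← h, zero_smul]
      exact ⟨zero_mem_cl hne hcone, rfl⟩
  have hKplane : ∀ x ∈ K, x 2 = 0 := fun x hx => hx.2
  have hKpointed : ∀ x ∈ K, -x ∈ K → x = 0 := fun x hx hnx =>
    pointed_cl hC' hx.1 hnx.1
  -- the projection of points of C lands in K
  have hπC : ∀ x ∈ C, ![x 0, x 1, 0] ∈ K :=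
    fun x hx => ⟨limit_plane ha hc hac hcone hinv hx, by simp⟩
  obtain ⟨x₀, hx₀⟩ := hne
  obtain ⟨ε, hεpos, hball⟩ := Metric.isOpen_iff.1 hopen x₀ hx₀
  set k₀ : Fin 3 → ℝ := ![x₀ 0, x₀ 1, 0] with hk₀def
  have hk₀ : k₀ ∈ K := hπC x₀ hx₀
  have hballK : ∀ r : ℝ, |r| ≤ ε/2 → ∀ v : Fin 3 → ℝ, v 2 = 0 → ‖v‖ ≤ 1 →
      k₀ + r • v ∈ K := by
    intro r hr v hv2 hvn
    have hmem : x₀ + r • v ∈ C := by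
      apply hball
      simp only [Metric.mem_ball]
      have : dist (x₀ + r • v) x₀ = ‖r • v‖ := by rw [dist_eq_norm]; ring_nf
      rw [this, norm_smul]
      calc ‖r‖ * ‖v‖ ≤ ‖r‖ * 1 := mul_le_mul_of_nonneg_left hvn (norm_nonneg _)
        _ = |r| := by simp
        _ ≤ ε/2 := hr
        _ < ε := by linarith
    have h := hπC _ hmem
    have heq : (![(x₀ + r • v) 0, (x₀ + r • v) 1, 0] : Fin 3 → ℝ) = k₀ + r • v := by
      funext i
      fin_cases i <;> simp [hk₀def, hv2]
    rwa [heq] at h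
  obtain ⟨b₁, b₂, hb₁2, hb₂2, hb12, hKchar⟩ :=
    plane_cone_struct hKcl hKconv hKcone hKplane hKpointed hk₀ (by positivity) hballK
  set b₃ : Fin 3 → ℝ := ![0, 0, σ] with hb₃def
  have hb₃0 : b₃ 0 = 0 := by simp [hb₃def]
  have hb₃1 : b₃ 1 = 0 := by simp [hb₃def]
  have hb₃2 : b₃ 2 = σ := by simp [hb₃def]
  have hb₁K : b₁ ∈ K := by
    rw [hKchar]
    exact ⟨1, 0, zero_le_one, le_rfl, by simp⟩
  have hb₂K : b₂ ∈ K := by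
    rw [hKchar]
    exact ⟨0, 1, le_rfl, zero_le_one, by simp⟩
  -- linear independence
  have hli : LinearIndependent ℝ ![b₁, b₂, b₃] := by
    rw [Fintype.linearIndependent_iff]
    intro g hg
    rw [Fin.sum_univ_three] at hg
    simp only [Matrix.cons_val_zero, Matrix.cons_val_one, Matrix.head_cons,
      Matrix.cons_val_two, Matrix.tail_cons] at hg
    have h2 := congrFun hg 2
    simp only [Pi.add_apply, Pi.smul_apply, smul_eq_mul, Pi.zero_apply, hb₁2, hb₂2, hb₃2] at h2
    have hg2 : g 2 = 0 := by
      have : g 2 * σ = 0 := by linarith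
      rcases mul_eq_zero.1 this with h | h
      · exact h
      · exact absurd h hσne
    rw [hg2, zero_smul, add_zero] at hg
    obtain ⟨h0, h1⟩ := hb12 _ _ hg
    intro i
    fin_cases i <;> assumption
  -- closure characterization
  have hπcl : ∀ x ∈ closure C, ![x 0, x 1, 0] ∈ K := by
    intro x hx
    constructor
    · have hcont : Continuous (fun x : Fin 3 → ℝ => (![x 0, x 1, 0] : Fin 3 → ℝ)) := by
        apply continuous_pi
        intro i
        fin_cases i
        · simpa using continuous_apply (0 : Fin 3)
        · simpa using continuous_apply (1 : Fin 3)
        · simpa using continuous_const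
      have h1 : (fun x : Fin 3 → ℝ => (![x 0, x 1, 0] : Fin 3 → ℝ)) '' closure C ⊆
          closure ((fun x : Fin 3 → ℝ => (![x 0, x 1, 0] : Fin 3 → ℝ)) '' C) :=
        image_closure_subset_closure_image hcont
      have h2 : (fun x : Fin 3 → ℝ => (![x 0, x 1, 0] : Fin 3 → ℝ)) '' C ⊆ closure C := by
        rintro _ ⟨v, hv, rfl⟩
        exact (hπC v hv).1
      have h3 := h1 ⟨x, hx, rfl⟩
      rw [← closure_closure (s := C)]
      exact closure_mono h2 h3
    · show (![x 0, x 1, 0] : Fin 3 → ℝ) 2 = 0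
      simp
  have hsigncl : ∀ x ∈ closure C, 0 ≤ σ * x 2 := by
    intro x hx
    have hsub : C ⊆ (fun x : Fin 3 → ℝ => σ * x 2) ⁻¹' (Set.Ici 0) :=
      fun y hy => le_of_lt (hσ y hy)
    have hcl : IsClosed ((fun x : Fin 3 → ℝ => σ * x 2) ⁻¹' (Set.Ici 0)) :=
      IsClosed.preimage (continuous_const.mul (continuous_apply 2)) isClosed_Ici
    exact closure_minimal hsub hcl hx
  have hterm : ∀ (r : ℝ), 0 ≤ r → ∀ w ∈ closure C, r • w ∈ closure C := by
    intro r hr w hw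
    rcases hr.lt_or_eq with h | h
    · exact cl_smul hcone h hw
    · rw [← h, zero_smul]; exact zero_mem_cl ⟨x₀, hx₀⟩ hcone
  have hQ : closure C = {v | ∃ c₁ c₂ c₃ : ℝ, 0 ≤ c₁ ∧ 0 ≤ c₂ ∧ 0 ≤ c₃ ∧
      v = c₁ • b₁ + c₂ • b₂ + c₃ • b₃} := by
    ext x
    constructor
    · intro hx
      have hπ := hπcl x hx
      rw [hKchar] at hπ
      obtain ⟨c₁, c₂, hc₁, hc₂, hπeq⟩ := hπ
      refine ⟨c₁, c₂, σ * x 2, hc₁, hc₂, hsigncl x hx, ?_⟩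
      have heq : x = ![x 0, x 1, 0] + (σ * x 2) • b₃ := by
        funext i
        fin_cases i
        · simp [hb₃def]
        · simp [hb₃def]
        · show x 2 = 0 + (σ * x 2) * σ
          rw [zero_add]
          calc x 2 = (σ * σ) * x 2 := by rw [hσ2, one_mul]
            _ = σ * x 2 * σ := by ring
      conv_lhs => rw [heq]
      rw [hπeq, add_assoc]
    · rintro ⟨c₁, c₂, c₃, hc₁, hc₂, hc₃, rfl⟩
      apply cl_add hconv hcone
      · apply cl_add hconv hcone
        · exact hterm _ hc₁ _ hb₁K.1
        · exact hterm _ hc₂ _ hb₂K.1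
      · exact hterm _ hc₃ _ hσcl
  -- pass to interiors via the basis
  have hcard : Fintype.card (Fin 3) = Module.finrank ℝ (Fin 3 → ℝ) := by
    simp [Module.finrank_pi]
  let bas : Module.Basis (Fin 3) ℝ (Fin 3 → ℝ) := basisOfLinearIndependentOfCardEqFinrank hli hcard
  have hbas : ∀ i, bas i = ![b₁, b₂, b₃] i := fun i => by
    rw [coe_basisOfLinearIndependentOfCardEqFinrank]
  let L := bas.equivFun.symm
  have hLapply : ∀ w : Fin 3 → ℝ, L w = w 0 • b₁ + w 1 • b₂ + w 2 • b₃ := by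
    intro w
    show bas.equivFun.symm w = _
    rw [Module.Basis.equivFun_symm_apply, Fin.sum_univ_three, hbas 0, hbas 1, hbas 2]
    simp
  let Lh := L.toContinuousLinearEquiv.toHomeomorph
  have hLh : ∀ w, Lh w = L w := fun w => rfl
  have himgcl : closure C = Lh '' (Set.pi Set.univ (fun _ => Set.Ici (0:ℝ))) := by
    rw [hQ]
    ext x
    constructor
    · rintro ⟨c₁, c₂, c₃, hc₁, hc₂, hc₃, rfl⟩
      refine ⟨![c₁, c₂, c₃], fun i _ => ?_, ?_⟩
      · fin_cases i <;> simpa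
      · rw [hLh, hLapply]
        simp
    · rintro ⟨w, hw, rfl⟩
      exact ⟨w 0, w 1, w 2, hw 0 (Set.mem_univ _), hw 1 (Set.mem_univ _),
        hw 2 (Set.mem_univ _), by rw [hLh, hLapply]⟩
  have hCint : C = interior (closure C) := open_convex_eq_interior_closure hopen hconv ⟨x₀, hx₀⟩
  refine ⟨b₁, b₂, b₃, hb₁2, hb₂2, hb₃0, hb₃1, hli, ?_⟩
  rw [hCint, himgcl, ← Homeomorph.image_interior]
  rw [interior_pi_set Set.finite_univ]
  simp only [interior_Ici]
  ext x
  constructor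
  · rintro ⟨w, hw, rfl⟩
    exact ⟨w 0, w 1, w 2, hw 0 (Set.mem_univ _), hw 1 (Set.mem_univ _),
      hw 2 (Set.mem_univ _), by rw [hLh, hLapply]⟩
  · rintro ⟨c₁, c₂, c₃, hc₁, hc₂, hc₃, rfl⟩
    refine ⟨![c₁, c₂, c₃], fun i _ => ?_, ?_⟩
    · fin_cases i <;> simpa
    · rw [hLh, hLapply]
      simp

end Core

theorem core_main {C : Set (Fin 3 → ℝ)} {a c : ℝ} (ha : 0 < a) (hc : 0 < c) (hac : a ≠ c)
    (hC : IsProperConeR3 C)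
    (hinv : (fun v : Fin 3 → ℝ => ![a * v 0, a * v 1, c * v 2]) '' C = C) :
    ∃ b₁ b₂ b₃ : Fin 3 → ℝ, b₁ 2 = 0 ∧ b₂ 2 = 0 ∧ b₃ 0 = 0 ∧ b₃ 1 = 0 ∧
      LinearIndependent ℝ ![b₁, b₂, b₃] ∧
      C = {v | ∃ c₁ c₂ c₃ : ℝ, 0 < c₁ ∧ 0 < c₂ ∧ 0 < c₃ ∧
        v = c₁ • b₁ + c₂ • b₂ + c₃ • b₃} := by
  rcases lt_or_gt_of_ne hac with h | h
  · exact core' ha hc h hC hinv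
  · exact core' (inv_pos.2 ha) (inv_pos.2 hc) (inv_strictAnti₀ hc h) hC (inv_image ha hc hinv)

/-- Let `γ ∈ SL₃(ℝ)` be a planar element (conjugate to `diag(α, α, β)` with `α, β > 0`,
`α²β = 1`, `α ≠ 1`) preserving a properly convex open set `Ω = P(C) ⊆ ℙ²(ℝ)`.  Then `Ω`
is a triangle (the cone `C` is a simplicial cone over a basis `b₁, b₂, b₃`), one of whose
vertices is the fixed point `p_γ` corresponding to the eigenvalue `β` (the generator `b₃`
is a `β`-eigenvector), and whose side opposite to `p_γ` lies in the line `D_γ` of fixed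
points corresponding to `α` (the generators `b₁, b₂` are `α`-eigenvectors). -/
theorem planar_implies_triangle (A : Matrix (Fin 3) (Fin 3) ℝ) (hdet : A.det = 1)
    (α β : ℝ) (hα : 0 < α) (hβ : 0 < β) (hαβ : α ^ 2 * β = 1) (hα1 : α ≠ 1)
    (hconj : ∃ P : Matrix (Fin 3) (Fin 3) ℝ, IsUnit P.det ∧
      A = P * Matrix.diagonal ![α, α, β] * P⁻¹)
    (C : Set (Fin 3 → ℝ)) (hC : IsProperConeR3 C) (hpres : PreservesConeR3 A C) :
    ∃ b₁ b₂ b₃ : Fin 3 → ℝ,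
      LinearIndependent ℝ ![b₁, b₂, b₃] ∧
      C = {v | ∃ c₁ c₂ c₃ : ℝ, 0 < c₁ ∧ 0 < c₂ ∧ 0 < c₃ ∧
        v = c₁ • b₁ + c₂ • b₂ + c₃ • b₃} ∧
      A.mulVec b₃ = β • b₃ ∧ A.mulVec b₁ = α • b₁ ∧ A.mulVec b₂ = α • b₂ := by
  obtain ⟨P, hPdet, hA⟩ := hconj
  set D : Matrix (Fin 3) (Fin 3) ℝ := Matrix.diagonal ![α, α, β] with hD
  have hPP : P * P⁻¹ = 1 := Matrix.mul_nonsing_inv P hPdet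
  have hQP : P⁻¹ * P = 1 := Matrix.nonsing_inv_mul P hPdet
  have hQPv : ∀ v : Fin 3 → ℝ, (P⁻¹).mulVec (P.mulVec v) = v := by
    intro v
    rw [Matrix.mulVec_mulVec, hQP, Matrix.one_mulVec]
  have hPQv : ∀ v : Fin 3 → ℝ, P.mulVec ((P⁻¹).mulVec v) = v := by
    intro v
    rw [Matrix.mulVec_mulVec, hPP, Matrix.one_mulVec]
  have hAαβ : α ≠ β := by
    intro h
    apply hα1
    have h3 : α ^ 3 = 1 := by rw [← hαβ, h]; ring
    have hf : (α - 1) * (α^2 + α + 1) = 0 := by linear_combination h3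
    rcases mul_eq_zero.1 hf with h' | h'
    · linarith
    · nlinarith
  have hA2αβ : α^2 ≠ β^2 := by
    intro h
    apply hAαβ
    nlinarith
  -- A² preserves C (in both cases)
  have hA2 : (fun v : Fin 3 → ℝ => A.mulVec (A.mulVec v)) '' C = C := by
    have hcoe : ⇑A.mulVecLin = A.mulVec := Matrix.coe_mulVecLin A
    rcases hpres with hp | hp
    · rw [hcoe] at hp
      have : (fun v : Fin 3 → ℝ => A.mulVec (A.mulVec v)) '' C
          = A.mulVec '' (A.mulVec '' C) := by
        rw [Set.image_image]
      rw [this, hp, hp]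
    · rw [hcoe] at hp
      have h1 : (fun v : Fin 3 → ℝ => A.mulVec (A.mulVec v)) '' C
          = A.mulVec '' (A.mulVec '' C) := by
        rw [Set.image_image]
      rw [h1, hp]
      rw [Set.image_image]
      have h2 : (fun v : Fin 3 → ℝ => A.mulVec (-v)) = fun v => - A.mulVec v := by
        funext v
        rw [Matrix.mulVec_neg]
      rw [h2]
      have h3 : (fun v : Fin 3 → ℝ => - A.mulVec v) '' C
          = (fun v : Fin 3 → ℝ => -v) '' (A.mulVec '' C) := by
        rw [Set.image_image]
      rw [h3, hp, Set.image_image]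
      have h4 : (fun v : Fin 3 → ℝ => -(-v)) = fun v : Fin 3 → ℝ => v := by
        funext v; rw [neg_neg]
      rw [h4, Set.image_id']
  -- conjugated cone
  set C' : Set (Fin 3 → ℝ) := (P⁻¹).mulVec '' C with hC'def
  have hC'pre : C' = P.mulVec ⁻¹' C := by
    ext x
    constructor
    · rintro ⟨y, hy, rfl⟩
      show P.mulVec ((P⁻¹).mulVec y) ∈ C
      rw [hPQv]
      exact hy
    · intro hx
      exact ⟨P.mulVec x, hx, hQPv x⟩
  obtain ⟨hopen, hconv, hne, hcone, hline⟩ := hC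
  have hPcont : Continuous (P.mulVec) := by
    have : Continuous (P.mulVecLin) := P.mulVecLin.continuous_of_finiteDimensional
    rwa [Matrix.coe_mulVecLin] at this
  have hC'proper : IsProperConeR3 C' := by
    refine ⟨?_, ?_, ?_, ?_, ?_⟩
    · rw [hC'pre]
      exact hopen.preimage hPcont
    · rw [hC'pre]
      have := hconv.linear_preimage P.mulVecLin
      rwa [Matrix.coe_mulVecLin] at this
    · obtain ⟨x₀, hx₀⟩ := hne
      exact ⟨(P⁻¹).mulVec x₀, x₀, hx₀, rfl⟩
    · rintro v ⟨y, hy, rfl⟩ r hr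
      refine ⟨r • y, hcone y hy r hr, ?_⟩
      rw [Matrix.mulVec_smul]
    · rintro ⟨u, w, hw, hl⟩
      apply hline
      refine ⟨P.mulVec u, P.mulVec w, ?_, ?_⟩
      · intro h
        apply hw
        have := congrArg (P⁻¹).mulVec h
        rw [hQPv] at this
        rw [this]
        funext i
        simp [Matrix.mulVec_zero]
      · intro t
        have := hl t
        rw [hC'pre] at this
        have h2 : P.mulVec (u + t • w) ∈ C := this
        rwa [Matrix.mulVec_add, Matrix.mulVec_smul] at h2
  -- D² invariance of C'
  have hDP' : D * P⁻¹ = P⁻¹ * A := by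
    rw [hA, ← Matrix.mul_assoc, ← Matrix.mul_assoc, hQP, Matrix.one_mul]
  have hM : (D * D) * P⁻¹ = (P⁻¹ * A) * A := by
    rw [Matrix.mul_assoc, hDP', ← Matrix.mul_assoc, hDP']
  have hDQA : ∀ v : Fin 3 → ℝ, (D * D).mulVec ((P⁻¹).mulVec v)
      = (P⁻¹).mulVec (A.mulVec (A.mulVec v)) := by
    intro v
    calc (D * D).mulVec ((P⁻¹).mulVec v) = ((D * D) * P⁻¹).mulVec v :=
          Matrix.mulVec_mulVec v (D * D) P⁻¹
      _ = ((P⁻¹ * A) * A).mulVec v := by rw [hM]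
      _ = (P⁻¹ * A).mulVec (A.mulVec v) := (Matrix.mulVec_mulVec _ _ _).symm
      _ = (P⁻¹).mulVec (A.mulVec (A.mulVec v)) := (Matrix.mulVec_mulVec _ _ _).symm
  have hDD : D * D = Matrix.diagonal ![α^2, α^2, β^2] := by
    rw [hD, Matrix.diagonal_mul_diagonal]
    have hvec : (fun i => ![α,α,β] i * ![α,α,β] i) = (![α^2, α^2, β^2] : Fin 3 → ℝ) := by
      funext i
      fin_cases i <;> simp [Pi.mul_apply] <;> ring
    rw [hvec]
  have hinvC' : (fun v : Fin 3 → ℝ => ![α^2 * v 0, α^2 * v 1, β^2 * v 2]) '' C' = C' := by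
    have hfun : (fun v : Fin 3 → ℝ => ![α^2 * v 0, α^2 * v 1, β^2 * v 2])
        = (D * D).mulVec := by
      funext v
      funext i
      rw [hDD]
      fin_cases i <;> simp [Matrix.mulVec_diagonal]
    rw [hfun, hC'def, Set.image_image]
    have h1 : (fun x => (D * D).mulVec ((P⁻¹).mulVec x)) '' C
        = (fun x => (P⁻¹).mulVec (A.mulVec (A.mulVec x))) '' C := by
      apply Set.image_congr
      intro x _
      exact hDQA x
    rw [h1]
    have h2 : (fun x => (P⁻¹).mulVec (A.mulVec (A.mulVec x))) '' C
        = (P⁻¹).mulVec '' ((fun v => A.mulVec (A.mulVec v)) '' C) := by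
      rw [Set.image_image]
    rw [h2, hA2]
  -- apply the core theorem
  obtain ⟨b₁', b₂', b₃', hb₁2, hb₂2, hb₃0, hb₃1, hli', hchar⟩ :=
    core_main (by positivity) (by positivity) hA2αβ hC'proper hinvC'
  -- transport back
  have hAP : A * P = P * D := by
    rw [hA, Matrix.mul_assoc, hQP, Matrix.mul_one]
  have heigen : ∀ (b : Fin 3 → ℝ) (lam : ℝ), D.mulVec b = lam • b →
      A.mulVec (P.mulVec b) = lam • P.mulVec b := by
    intro b lam hb
    rw [Matrix.mulVec_mulVec, hAP, ← Matrix.mulVec_mulVec, hb, Matrix.mulVec_smul]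
  have hD1 : D.mulVec b₁' = α • b₁' := by
    funext i
    rw [hD]
    fin_cases i <;> simp [Matrix.mulVec_diagonal, hb₁2]
  have hD2' : D.mulVec b₂' = α • b₂' := by
    funext i
    rw [hD]
    fin_cases i <;> simp [Matrix.mulVec_diagonal, hb₂2]
  have hD3 : D.mulVec b₃' = β • b₃' := by
    funext i
    rw [hD]
    fin_cases i <;> simp [Matrix.mulVec_diagonal, hb₃0, hb₃1]
  refine ⟨P.mulVec b₁', P.mulVec b₂', P.mulVec b₃', ?_, ?_, heigen _ _ hD3,
    heigen _ _ hD1, heigen _ _ hD2'⟩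
  · have hker : LinearMap.ker P.mulVecLin = ⊥ := by
      rw [LinearMap.ker_eq_bot]
      have : Function.LeftInverse (P⁻¹).mulVec P.mulVec := hQPv
      have hinj := this.injective
      rwa [Matrix.coe_mulVecLin]
    have := hli'.map' P.mulVecLin hker
    have hcomp : ⇑P.mulVecLin ∘ ![b₁', b₂', b₃']
        = ![P.mulVec b₁', P.mulVec b₂', P.mulVec b₃'] := by
      funext i
      fin_cases i <;> simp [Matrix.coe_mulVecLin]
    rwa [hcomp] at this
  · have hCP : C = P.mulVec '' C' := by
      rw [hC'def, Set.image_image]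
      have : (fun x => P.mulVec ((P⁻¹).mulVec x)) '' C = (fun x => x) '' C := by
        apply Set.image_congr
        intro x _
        exact hPQv x
      rw [this, Set.image_id']
    rw [hCP, hchar]
    ext w
    constructor
    · rintro ⟨v, ⟨c₁, c₂, c₃, hc₁, hc₂, hc₃, rfl⟩, rfl⟩
      refine ⟨c₁, c₂, c₃, hc₁, hc₂, hc₃, ?_⟩
      rw [Matrix.mulVec_add, Matrix.mulVec_add, Matrix.mulVec_smul,
        Matrix.mulVec_smul, Matrix.mulVec_smul]
    · rintro ⟨c₁, c₂, c₃, hc₁, hc₂, hc₃, rfl⟩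
      refine ⟨c₁ • b₁' + c₂ • b₂' + c₃ • b₃', ⟨c₁, c₂, c₃, hc₁, hc₂, hc₃, rfl⟩, ?_⟩
      rw [Matrix.mulVec_add, Matrix.mulVec_add, Matrix.mulVec_smul,
        Matrix.mulVec_smul, Matrix.mulVec_smul]
end
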